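/- arXiv:2310.13313 — 5 statements merged into one kernel-verified Lean document; each statement's English description precedes it below -/
import Mathlib

section
/- For every bounded interval [a,b] and every continuous function w on [a,b], there exists a unique polynomial p of degree ≤ k such that ∫_a^b p(x) v(x) dx = ∫_a^b w(x) v(x) dx for all polynomials v of degree ≤ k-1 and p(b) = w(b); likewise there exists a unique polynomial p of degree ≤ k satisfying the same integral conditions together with p(a) = w(a). -/
open Polynomial MeasureTheory intervalIntegral Set

namespace GaussRadauAux

lemma le_iff_lt_succ (n : ℕ) (d : WithBot ℕ) :
    d ≤ (n : WithBot ℕ) ↔ d < ((n + 1 : ℕ) : WithBot ℕ) := by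
  cases d with
  | bot =>
    simp only [bot_le, true_iff]
    rw [Nat.cast_withBot]; exact WithBot.bot_lt_coe _
  | coe m =>
    rw [Nat.cast_withBot, Nat.cast_withBot, WithBot.coe_le_coe, WithBot.coe_lt_coe]
    exact Nat.lt_succ_iff.symm

/-- Integration against a fixed polynomial as a linear map. -/
noncomputable def J (a b : ℝ) (v : ℝ[X]) : ℝ[X] →ₗ[ℝ] ℝ where
  toFun p := ∫ t in a..b, p.eval t * v.eval t
  map_add' p q := by
    simp only [eval_add, add_mul]
    exact integral_add ((p.continuous.mul v.continuous).intervalIntegrable _ _)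
      ((q.continuous.mul v.continuous).intervalIntegrable _ _)
  map_smul' r p := by
    simp only [eval_smul, smul_eq_mul, RingHom.id_apply, mul_assoc]
    exact integral_const_mul r _

lemma intA {a b : ℝ} (hab : a ≤ b) {k : ℕ} {g : ℝ → ℝ}
    (hg : ContinuousOn g (Set.Icc a b))
    (h : ∀ i : ℕ, i < k → ∫ t in a..b, g t * t ^ i = 0)
    {v : ℝ[X]} (hv : v.degree < (k : WithBot ℕ)) :
    ∫ t in a..b, g t * v.eval t = 0 := by
  rcases eq_or_ne v 0 with rfl | h0
  · simp
  have hnd : v.natDegree < k := (Polynomial.natDegree_lt_iff_degree_lt h0).2 hv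
  have hgi : ∀ i : ℕ, IntervalIntegrable (fun t => g t * t ^ i) volume a b := by
    intro i
    apply ContinuousOn.intervalIntegrable
    rw [Set.uIcc_of_le hab]
    exact hg.mul (continuous_pow i).continuousOn
  calc ∫ t in a..b, g t * v.eval t
      = ∫ t in a..b, ∑ i ∈ Finset.range k, v.coeff i * (g t * t ^ i) := by
        refine intervalIntegral.integral_congr fun t _ => ?_
        rw [Polynomial.eval_eq_sum_range' hnd, Finset.mul_sum]
        exact Finset.sum_congr rfl fun i _ => by ring
    _ = ∑ i ∈ Finset.range k, ∫ t in a..b, v.coeff i * (g t * t ^ i) :=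
        intervalIntegral.integral_finset_sum fun i _ => (hgi i).const_mul _
    _ = 0 := by
        refine Finset.sum_eq_zero fun i hi => ?_
        rw [intervalIntegral.integral_const_mul, h i (Finset.mem_range.1 hi), mul_zero]

lemma core {k : ℕ} {a b c s : ℝ} (hab : a < b) (hs : s ≠ 0)
    (hsc : ∀ t ∈ Set.Ioc a b, 0 ≤ s * (t - c))
    {p : ℝ[X]} (hdeg : p.degree ≤ (k : WithBot ℕ))
    (hint : ∀ v : ℝ[X], v.degree < (k : WithBot ℕ) →
      ∫ t in a..b, p.eval t * v.eval t = 0)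
    (hc0 : p.IsRoot c) : p = 0 := by
  by_contra hp0
  obtain ⟨q, hq⟩ := Polynomial.dvd_iff_isRoot.2 hc0
  have hq0 : q ≠ 0 := fun h => hp0 (by simp [hq, h])
  have hdq : q.degree < (k : WithBot ℕ) := by
    have h1 : p.degree = 1 + q.degree := by
      rw [hq, Polynomial.degree_mul, Polynomial.degree_X_sub_C]
    rw [h1, Polynomial.degree_eq_natDegree hq0] at hdeg
    have h2 : ((1 + q.natDegree : ℕ) : WithBot ℕ) ≤ (k : WithBot ℕ) := by
      rw [Nat.cast_add, Nat.cast_one]; exact_mod_cast hdeg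
    rw [Nat.cast_withBot, Nat.cast_withBot] at h2
    rw [Polynomial.degree_eq_natDegree hq0, Nat.cast_withBot, Nat.cast_withBot,
      WithBot.coe_lt_coe]
    have := WithBot.coe_le_coe.1 h2
    omega
  set f : ℝ → ℝ := fun t => s * ((t - c) * q.eval t ^ 2) with hf
  have hfint : ∫ t in a..b, f t = 0 := by
    have hz := hint q hdq
    have h3 : ∀ t, f t = s * (p.eval t * q.eval t) := by
      intro t; rw [hq]; simp only [eval_mul, eval_sub, eval_X, eval_C, hf]; ring
    calc ∫ t in a..b, f t
        = ∫ t in a..b, s * (p.eval t * q.eval t) :=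
          intervalIntegral.integral_congr fun t _ => h3 t
      _ = s * ∫ t in a..b, p.eval t * q.eval t := intervalIntegral.integral_const_mul _ _
      _ = 0 := by rw [hz, mul_zero]
  have hcont : Continuous f := by
    apply Continuous.mul continuous_const
    exact ((continuous_id.sub continuous_const).mul (q.continuous.pow 2))
  have hnn : 0 ≤ᵐ[volume.restrict (Set.Ioc a b)] f := by
    refine (MeasureTheory.ae_restrict_iff' measurableSet_Ioc).2
      (Filter.Eventually.of_forall fun t ht => ?_)
    have h4 : f t = (s * (t - c)) * q.eval t ^ 2 := by rw [hf]; ring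
    rw [h4]
    exact mul_nonneg (hsc t ht) (sq_nonneg _)
  have hae := (intervalIntegral.integral_eq_zero_iff_of_le_of_nonneg_ae hab.le hnn
    (hcont.intervalIntegrable a b)).1 hfint
  set g : ℝ[X] := C s * ((X - C c) * q ^ 2) with hg
  have hg0 : g ≠ 0 := by
    refine mul_ne_zero (by simpa using hs) (mul_ne_zero (Polynomial.X_sub_C_ne_zero c) ?_)
    exact pow_ne_zero _ hq0
  have hfg : ∀ t, f t = g.eval t := by
    intro t; simp only [hg, eval_mul, eval_C, eval_sub, eval_X, eval_pow, hf]
  have hroots : Set.Finite {x | g.IsRoot x} := Polynomial.finite_setOf_isRoot hg0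
  have hnull : volume ({t | ¬ f t = 0} ∩ Set.Ioc a b) = 0 := by
    have h5 := MeasureTheory.ae_iff.mp hae
    rwa [MeasureTheory.Measure.restrict_apply' measurableSet_Ioc] at h5
  have hsub : Set.Ioc a b \ {x | g.IsRoot x} ⊆ {t | ¬ f t = 0} ∩ Set.Ioc a b := by
    rintro t ⟨ht, hr⟩
    exact ⟨by simp only [Set.mem_setOf_eq, hfg t]; exact hr, ht⟩
  have h6 : volume (Set.Ioc a b \ {x | g.IsRoot x}) = 0 :=
    measure_mono_null hsub hnull
  rw [MeasureTheory.measure_diff_null (hroots.measure_zero _)] at h6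
  rw [Real.volume_Ioc] at h6
  simp only [ENNReal.ofReal_eq_zero] at h6
  linarith

@[simp] lemma J_apply (a b : ℝ) (v p : ℝ[X]) :
    J a b v p = ∫ t in a..b, p.eval t * v.eval t := rfl

lemma gr {k : ℕ} (hk : 1 ≤ k) {a b c s : ℝ} (hab : a < b) (hs : s ≠ 0)
    (hsc : ∀ t ∈ Set.Ioc a b, 0 ≤ s * (t - c))
    {w : ℝ → ℝ} (hw : ContinuousOn w (Set.Icc a b)) :
    ∃! p : ℝ[X], p.degree ≤ (k : WithBot ℕ) ∧
      (∀ v : ℝ[X], v.degree ≤ ((k - 1 : ℕ) : WithBot ℕ) →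
        ∫ t in a..b, p.eval t * v.eval t = ∫ t in a..b, w t * v.eval t) ∧
      p.eval c = w c := by
  have hk1 : k - 1 + 1 = k := Nat.succ_pred_eq_of_pos hk
  -- the degree condition, reformulated
  have hdegiff : ∀ v : ℝ[X], v.degree ≤ ((k - 1 : ℕ) : WithBot ℕ) ↔
      v.degree < (k : WithBot ℕ) := by
    intro v; rw [le_iff_lt_succ, hk1]
  haveI : FiniteDimensional ℝ (degreeLT ℝ (k + 1)) :=
    (Polynomial.degreeLTEquiv ℝ (k + 1)).symm.finiteDimensional
  -- the linear map
  set L : degreeLT ℝ (k + 1) →ₗ[ℝ] (Fin k → ℝ) × ℝ :=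
    LinearMap.prod
      (LinearMap.pi fun i : Fin k => (J a b (X ^ (i : ℕ))).comp (Submodule.subtype _))
      ((Polynomial.leval c).comp (Submodule.subtype _)) with hL
  -- injectivity
  have hinj : Function.Injective L := by
    rw [← LinearMap.ker_eq_bot, LinearMap.ker_eq_bot']
    rintro ⟨p, hp⟩ h0
    have hdeg : p.degree ≤ (k : WithBot ℕ) :=
      (le_iff_lt_succ k p.degree).2 (Polynomial.mem_degreeLT.1 hp)
    have h1 : ∀ i : ℕ, i < k → ∫ t in a..b, p.eval t * t ^ i = 0 := by
      intro i hi
      have h0' : (L ⟨p, hp⟩).1 ⟨i, hi⟩ = 0 := by rw [h0]; rfl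
      simpa [hL] using h0'
    have h2 : p.eval c = 0 := by
      have h0' : (L ⟨p, hp⟩).2 = 0 := by rw [h0]; rfl
      simpa [hL, Polynomial.leval] using h0'
    have hint : ∀ v : ℝ[X], v.degree < (k : WithBot ℕ) →
        ∫ t in a..b, p.eval t * v.eval t = 0 := fun v hv =>
      intA hab.le p.continuous.continuousOn h1 hv
    exact Subtype.ext (core hab hs hsc hdeg hint h2)
  have hsurj : Function.Surjective L := by
    have hfr : Module.finrank ℝ (degreeLT ℝ (k + 1)) =
        Module.finrank ℝ ((Fin k → ℝ) × ℝ) := by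
      rw [(Polynomial.degreeLTEquiv ℝ (k + 1)).finrank_eq]
      simp [Module.finrank_prod]
    exact (LinearMap.injective_iff_surjective_of_finrank_eq_finrank hfr).1 hinj
  obtain ⟨⟨p, hp⟩, hP⟩ := hsurj ⟨fun i => ∫ t in a..b, w t * t ^ (i : ℕ), w c⟩
  have hdegp : p.degree ≤ (k : WithBot ℕ) :=
    (le_iff_lt_succ k p.degree).2 (Polynomial.mem_degreeLT.1 hp)
  have hPi : ∀ i : ℕ, i < k →
      ∫ t in a..b, p.eval t * t ^ i = ∫ t in a..b, w t * t ^ i := by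
    intro i hi
    have h0' := congrFun (congrArg Prod.fst hP) ⟨i, hi⟩
    simpa [hL] using h0'
  have hPe : p.eval c = w c := by
    have h0' := congrArg Prod.snd hP
    simpa [hL, Polynomial.leval] using h0'
  have hiw : ∀ u : ℝ[X], IntervalIntegrable (fun t => w t * u.eval t) volume a b := by
    intro u
    apply ContinuousOn.intervalIntegrable
    rw [Set.uIcc_of_le hab.le]
    exact hw.mul u.continuous.continuousOn
  have hiw' : ∀ i : ℕ, IntervalIntegrable (fun t => w t * t ^ i) volume a b := by
    intro i
    apply ContinuousOn.intervalIntegrable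
    rw [Set.uIcc_of_le hab.le]
    exact hw.mul (continuous_pow i).continuousOn
  have hip : ∀ q u : ℝ[X], IntervalIntegrable (fun t => q.eval t * u.eval t) volume a b :=
    fun q u => (q.continuous.mul u.continuous).intervalIntegrable _ _
  have hints : ∀ v : ℝ[X], v.degree < (k : WithBot ℕ) →
      ∫ t in a..b, p.eval t * v.eval t = ∫ t in a..b, w t * v.eval t := by
    intro v hv
    have hz : ∫ t in a..b, (p.eval t - w t) * v.eval t = 0 := by
      refine intA hab.le (g := fun t => p.eval t - w t) (p.continuous.continuousOn.sub hw) (fun i hi => ?_) hv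
      have h1 : ∫ t in a..b, (p.eval t - w t) * t ^ i
          = (∫ t in a..b, p.eval t * t ^ i) - ∫ t in a..b, w t * t ^ i := by
        rw [← intervalIntegral.integral_sub (f := fun t => p.eval t * t ^ i)
          ((p.continuous.mul (continuous_pow i)).intervalIntegrable _ _) (hiw' i)]
        exact intervalIntegral.integral_congr fun t _ => by ring
      rw [h1, hPi i hi, sub_self]
    have hz' : (∫ t in a..b, p.eval t * v.eval t) - ∫ t in a..b, w t * v.eval t = 0 := by
      rw [← intervalIntegral.integral_sub (hip p v) (hiw v), ← hz]
      exact intervalIntegral.integral_congr fun t _ => by ring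
    linarith
  refine ⟨p, ⟨hdegp, fun v hv => hints v ((hdegiff v).1 hv), hPe⟩, ?_⟩
  rintro p' ⟨hdeg', hint', hev'⟩
  have hcore : p' - p = 0 := by
    refine core hab hs hsc
      (le_trans (Polynomial.degree_sub_le _ _) (max_le hdeg' hdegp)) (fun v hv => ?_) ?_
    · have e1 := hint' v ((hdegiff v).2 hv)
      have e2 := hints v hv
      calc ∫ t in a..b, (p' - p).eval t * v.eval t
          = ∫ t in a..b, (p'.eval t * v.eval t - p.eval t * v.eval t) :=
            intervalIntegral.integral_congr fun t _ => by simp [sub_mul]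
        _ = (∫ t in a..b, p'.eval t * v.eval t) - ∫ t in a..b, p.eval t * v.eval t :=
            intervalIntegral.integral_sub (hip p' v) (hip p v)
        _ = 0 := by rw [e1, e2, sub_self]
    · show (p' - p).eval c = 0
      rw [Polynomial.eval_sub, hev', hPe, sub_self]
  exact sub_eq_zero.1 hcore


end GaussRadauAux


/-!
STATEMENT 2: For every bounded interval [a,b] and every continuous function w
on [a,b], there exists a unique polynomial p of degree ≤ k such that
∫_a^b p v = ∫_a^b w v for all polynomials v of degree ≤ k-1 and p(b) = w(b);
likewise there exists a unique polynomial p of degree ≤ k satisfying the same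
integral conditions together with p(a) = w(a).
(These are the Gauß–Radau projections π⁻ w and π⁺ w.)
-/

theorem gauss_radau_exists_unique
    (k : ℕ) (hk : 1 ≤ k) (a b : ℝ) (hab : a < b)
    (w : ℝ → ℝ) (hw : ContinuousOn w (Set.Icc a b)) :
    (∃! p : Polynomial ℝ, p.degree ≤ (k : WithBot ℕ) ∧
      (∀ v : Polynomial ℝ, v.degree ≤ ((k - 1 : ℕ) : WithBot ℕ) →
        ∫ t in a..b, p.eval t * v.eval t = ∫ t in a..b, w t * v.eval t) ∧
      p.eval b = w b) ∧
    (∃! p : Polynomial ℝ, p.degree ≤ (k : WithBot ℕ) ∧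
      (∀ v : Polynomial ℝ, v.degree ≤ ((k - 1 : ℕ) : WithBot ℕ) →
        ∫ t in a..b, p.eval t * v.eval t = ∫ t in a..b, w t * v.eval t) ∧
      p.eval a = w a) := by
  constructor
  · exact GaussRadauAux.gr hk hab (s := -1) (by norm_num)
      (fun t ht => by nlinarith [ht.2]) hw
  · exact GaussRadauAux.gr hk hab (s := 1) (by norm_num)
      (fun t ht => by nlinarith [ht.1]) hw
end

section
/- There exists a constant C > 0 depending only on k (in particular independent of the interval and of w) such that for every bounded interval I = (a,b) of length h and every w ∈ H¹(I) (identified with its continuous representative): ‖π⁻ w‖_{L²(I)} ≤ C(‖w‖_{L²(I)} + h^{1/2}|w(b)|) and ‖π⁺ w‖_{L²(I)} ≤ C(‖w‖_{L²(I)} + h^{1/2}|w(a)|). -/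
/-!
STATEMENT 3: There exists a constant C > 0 depending only on k such that for
every bounded interval I = (a,b) of length h and every w ∈ H¹(I) (identified
with its continuous representative, i.e. w(x) = w(a) + ∫_a^x g with g ∈ L²):
  ‖π⁻ w‖_{L²(I)} ≤ C(‖w‖_{L²(I)} + h^{1/2}|w(b)|)  and
  ‖π⁺ w‖_{L²(I)} ≤ C(‖w‖_{L²(I)} + h^{1/2}|w(a)|).
Here π⁻ w (resp. π⁺ w) is any polynomial p of degree ≤ k with
∫_I p v = ∫_I w v for all polynomials v of degree ≤ k-1 and p(b) = w(b)
(resp. p(a) = w(a)).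
-/

open Polynomial MeasureTheory Set intervalIntegral Real

lemma gr_poly_eq_zero (P : Polynomial ℝ)
    (hnn : ∀ t ∈ Set.Icc (0:ℝ) 1, 0 ≤ P.eval t)
    (hz : (∫ t in (0:ℝ)..1, P.eval t) = 0) : P = 0 := by
  by_contra hP
  have hroots := Polynomial.finite_setOf_isRoot hP
  have hsub : ¬ (Set.Ioo (0:ℝ) 1 ⊆ {x | P.IsRoot x}) := fun hs =>
    (Set.Ioo_infinite (by norm_num : (0:ℝ) < 1)) (hroots.subset hs)
  obtain ⟨x₀, hx₀Ioo, hx₀⟩ := Set.not_subset.mp hsub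
  have hx₀pos : 0 < P.eval x₀ :=
    lt_of_le_of_ne (hnn x₀ (Set.Ioo_subset_Icc_self hx₀Ioo)) (Ne.symm hx₀)
  have hpos : 0 < ∫ t in (0:ℝ)..1, P.eval t := by
    rw [intervalIntegral.integral_pos_iff_support_of_nonneg_ae' ?h1 ?h2]
    · refine ⟨by norm_num, ?_⟩
      have hU : IsOpen ({x : ℝ | 0 < P.eval x} ∩ Set.Ioo 0 1) :=
        (isOpen_lt continuous_const (Polynomial.continuous P)).inter isOpen_Ioo
      have hne : ({x : ℝ | 0 < P.eval x} ∩ Set.Ioo 0 1).Nonempty := ⟨x₀, hx₀pos, hx₀Ioo⟩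
      refine lt_of_lt_of_le (hU.measure_pos volume hne) (measure_mono ?_)
      rintro x ⟨hx1, hx2⟩
      exact ⟨hx1.ne', Set.Ioo_subset_Ioc_self hx2⟩
    case h1 =>
      rw [Set.uIoc_of_le (by norm_num : (0:ℝ) ≤ 1)]
      exact (ae_restrict_iff' measurableSet_Ioc).mpr
        (Filter.Eventually.of_forall fun t ht => hnn t (Set.Ioc_subset_Icc_self ht))
    case h2 => exact (Polynomial.continuous P).intervalIntegrable _ _
  linarith

lemma gr_opBound {E : Type*} [NormedAddCommGroup E] [NormedSpace ℝ E]
    [FiniteDimensional ℝ E] (f : E →ₗ[ℝ] ℝ) :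
    ∃ C : ℝ, 0 < C ∧ ∀ x, |f x| ≤ C * ‖x‖ := by
  let g := LinearMap.toContinuousLinearMap f
  refine ⟨‖g‖ + 1, by positivity, fun x => ?_⟩
  have h := g.le_opNorm x
  have hg : |f x| = ‖g x‖ := (Real.norm_eq_abs _).symm
  nlinarith [norm_nonneg x, norm_nonneg g]

lemma gr_antiBound {E : Type*} [NormedAddCommGroup E] [NormedSpace ℝ E]
    [FiniteDimensional ℝ E] (f : E →ₗ[ℝ] ℝ) (hf : Function.Injective f) :
    ∃ C : ℝ, 0 < C ∧ ∀ x, ‖x‖ ≤ C * |f x| := by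
  obtain ⟨K, hK, hA⟩ := f.exists_antilipschitzWith (LinearMap.ker_eq_bot.mpr hf)
  refine ⟨K, by exact_mod_cast hK, fun x => ?_⟩
  have h := hA.le_mul_dist x 0
  simpa [dist_eq_norm, Real.norm_eq_abs] using h

lemma gr_young (f : ℝ → ℝ) (hf : ContinuousOn f (Set.Icc 0 1)) (Q : Polynomial ℝ) :
    (∫ t in (0:ℝ)..1, f t * Q.eval t) ≤
      (∫ t in (0:ℝ)..1, (f t)^2)/2 + (∫ t in (0:ℝ)..1, (Q.eval t)^2)/2 := by
  have h01 : (0:ℝ) ≤ 1 := by norm_num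
  have hu : Set.uIcc (0:ℝ) 1 = Set.Icc 0 1 := Set.uIcc_of_le h01
  have hQc : ContinuousOn (fun t => Q.eval t) (Set.Icc (0:ℝ) 1) :=
    (Polynomial.continuous Q).continuousOn
  have h1 : IntervalIntegrable (fun t => f t * Q.eval t) volume 0 1 :=
    ((hf.mul hQc).mono (by rw [hu])).intervalIntegrable
  have hf2 : IntervalIntegrable (fun t => (f t)^2) volume 0 1 :=
    ((hf.pow 2).mono (by rw [hu])).intervalIntegrable
  have hQ2 : IntervalIntegrable (fun t => (Q.eval t)^2) volume 0 1 :=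
    ((Polynomial.continuous Q).pow 2).intervalIntegrable _ _
  have h2 : IntervalIntegrable (fun t => ((f t)^2 + (Q.eval t)^2)/2) volume 0 1 :=
    (hf2.add hQ2).div_const 2
  have hmono := intervalIntegral.integral_mono_on h01 h1 h2
    (fun t _ => by nlinarith [sq_nonneg (f t - Q.eval t)])
  calc (∫ t in (0:ℝ)..1, f t * Q.eval t)
      ≤ ∫ t in (0:ℝ)..1, ((f t)^2 + (Q.eval t)^2)/2 := hmono
    _ = (∫ t in (0:ℝ)..1, (f t)^2)/2 + (∫ t in (0:ℝ)..1, (Q.eval t)^2)/2 := by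
        rw [intervalIntegral.integral_div, intervalIntegral.integral_add hf2 hQ2, add_div]

noncomputable def grCore (n : ℕ) :
    InnerProductSpace.Core ℝ (Polynomial.degreeLT ℝ n) where
  inner x y := ∫ t in (0:ℝ)..1, ((x : Polynomial ℝ) * (y : Polynomial ℝ)).eval t
  conj_inner_symm x y := by
    simp only [starRingEnd_apply, star_trivial, mul_comm]
  re_inner_nonneg x := by
    have : 0 ≤ ∫ t in (0:ℝ)..1, ((x : Polynomial ℝ) * (x : Polynomial ℝ)).eval t :=
      intervalIntegral.integral_nonneg (by norm_num)
        (fun t _ => by simpa [Polynomial.eval_mul] using mul_self_nonneg _)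
    simpa using this
  add_left x y z := by
    simp only [Submodule.coe_add, add_mul, Polynomial.eval_add]
    exact intervalIntegral.integral_add
      ((Polynomial.continuous _).intervalIntegrable _ _)
      ((Polynomial.continuous _).intervalIntegrable _ _)
  smul_left x y r := by
    simp only [SetLike.val_smul, smul_eq_mul, starRingEnd_apply, star_trivial]
    have : ∀ t : ℝ, ((r • (x : Polynomial ℝ)) * (y : Polynomial ℝ)).eval t
        = r * (((x : Polynomial ℝ) * (y : Polynomial ℝ)).eval t) := by
      intro t; simp [Polynomial.eval_mul, Polynomial.eval_smul]
    simp only [this]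
    exact intervalIntegral.integral_const_mul _ _
  definite x hx := by
    apply Subtype.ext
    have h0 := gr_poly_eq_zero ((x : Polynomial ℝ) * (x : Polynomial ℝ))
      (fun t _ => by simpa [Polynomial.eval_mul] using mul_self_nonneg _) hx
    simpa using mul_self_eq_zero.mp h0

set_option maxHeartbeats 1600000 in
lemma gr_ref (k : ℕ) (hk : 1 ≤ k) :
    ∃ C : ℝ, 0 < C ∧
      ∀ f : ℝ → ℝ, ContinuousOn f (Set.Icc 0 1) →
      ∀ p : Polynomial ℝ, p.degree ≤ (k : WithBot ℕ) →
      (∀ v : Polynomial ℝ, v.degree ≤ ((k - 1 : ℕ) : WithBot ℕ) →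
        ∫ t in (0:ℝ)..1, p.eval t * v.eval t = ∫ t in (0:ℝ)..1, f t * v.eval t) →
      ((p.eval 1 = f 1 → Real.sqrt (∫ t in (0:ℝ)..1, (p.eval t)^2) ≤
          C * (Real.sqrt (∫ t in (0:ℝ)..1, (f t)^2) + |f 1|)) ∧
       (p.eval 0 = f 0 → Real.sqrt (∫ t in (0:ℝ)..1, (p.eval t)^2) ≤
          C * (Real.sqrt (∫ t in (0:ℝ)..1, (f t)^2) + |f 0|))) := by
  classical
  letI core : InnerProductSpace.Core ℝ (Polynomial.degreeLT ℝ (k+1)) := grCore (k+1)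
  letI : NormedAddCommGroup (Polynomial.degreeLT ℝ (k+1)) := core.toNormedAddCommGroup
  letI : InnerProductSpace ℝ (Polynomial.degreeLT ℝ (k+1)) := InnerProductSpace.ofCore core.toCore
  haveI : FiniteDimensional ℝ (Polynomial.degreeLT ℝ (k+1)) :=
    (Polynomial.degreeLTEquiv ℝ (k+1)).symm.finiteDimensional
  set W : Submodule ℝ (Polynomial.degreeLT ℝ (k+1)) :=
    (Polynomial.degreeLT ℝ k).comap (Polynomial.degreeLT ℝ (k+1)).subtype with hWdef
  haveI : CompleteSpace W := FiniteDimensional.complete ℝ W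
  have hinner : ∀ x y : Polynomial.degreeLT ℝ (k+1),
      (inner ℝ x y : ℝ) = ∫ t in (0:ℝ)..1,
        (x : Polynomial ℝ).eval t * (y : Polynomial ℝ).eval t := by
    intro x y
    have h0 : (inner ℝ x y : ℝ)
        = ∫ t in (0:ℝ)..1, ((x : Polynomial ℝ) * (y : Polynomial ℝ)).eval t := rfl
    rw [h0]
    exact intervalIntegral.integral_congr fun t _ => by simp [Polynomial.eval_mul]
  have hnormx : ∀ x : Polynomial.degreeLT ℝ (k+1),
      ‖x‖ = Real.sqrt (∫ t in (0:ℝ)..1, ((x : Polynomial ℝ).eval t)^2) := by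
    intro x
    rw [norm_eq_sqrt_real_inner, hinner]
    congr 1
    exact intervalIntegral.integral_congr fun t _ => by ring
  have hnorm2 : ∀ x : Polynomial.degreeLT ℝ (k+1),
      (∫ t in (0:ℝ)..1, ((x : Polynomial ℝ).eval t)^2) = ‖x‖^2 := by
    intro x
    rw [← real_inner_self_eq_norm_sq, hinner]
    exact intervalIntegral.integral_congr fun t _ => by ring
  have hmemW : ∀ x : Polynomial.degreeLT ℝ (k+1),
      x ∈ W ↔ (x : Polynomial ℝ).degree < (k : WithBot ℕ) := by
    intro x
    rw [hWdef]
    simp [Submodule.mem_comap, Polynomial.mem_degreeLT]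
  have hdegpred : ∀ q : Polynomial ℝ, q.degree < (k : WithBot ℕ) →
      q.degree ≤ ((k-1:ℕ) : WithBot ℕ) := by
    intro q h
    rcases eq_or_ne q 0 with rfl | hq
    · simp
    · have h1 : q.natDegree < k := (Polynomial.natDegree_lt_iff_degree_lt hq).mpr h
      exact Polynomial.natDegree_le_iff_degree_le.mp (Nat.le_pred_of_lt h1)
  -- key injectivity lemma
  have key : ∀ (m : Polynomial ℝ) (c : ℝ),
      (X - Polynomial.C c = m ∨ X - Polynomial.C c = -m) →
      (∀ t ∈ Set.Icc (0:ℝ) 1, 0 ≤ m.eval t) →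
      ∀ x : Polynomial.degreeLT ℝ (k+1), x ∈ Wᗮ →
        (x : Polynomial ℝ).eval c = 0 → x = 0 := by
    intro m c hm hmnn x hx hxc
    set S : Polynomial ℝ := (x : Polynomial ℝ) /ₘ (X - Polynomial.C c) with hSdef
    have hfac : (X - Polynomial.C c) * S = (x : Polynomial ℝ) :=
      (Polynomial.mul_divByMonic_eq_iff_isRoot).mpr hxc
    rcases eq_or_ne S 0 with hS0 | hS0
    · refine Subtype.ext ?_
      rw [← hfac, hS0, mul_zero]
      simp
    · exfalso
      have hXC : (X - Polynomial.C c : Polynomial ℝ) ≠ 0 := by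
        intro h
        have := congrArg (Polynomial.eval (c+1)) h
        simp at this
      have hx0 : (x : Polynomial ℝ) ≠ 0 := by
        rw [← hfac]; exact mul_ne_zero hXC hS0
      have hxk : (x : Polynomial ℝ).natDegree ≤ k := by
        have hmem := Polynomial.mem_degreeLT.mp x.2
        have h2 : (x : Polynomial ℝ).natDegree < k+1 :=
          (Polynomial.natDegree_lt_iff_degree_lt hx0).mpr (by exact_mod_cast hmem)
        omega
      have hSnd : S.natDegree < k := by
        have h3 : S.natDegree = (x : Polynomial ℝ).natDegree - 1 := by
          rw [hSdef, Polynomial.natDegree_divByMonic _ (Polynomial.monic_X_sub_C c),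
            Polynomial.natDegree_X_sub_C]
        omega
      have hSdegk : S.degree < (k : WithBot ℕ) :=
        (Polynomial.natDegree_lt_iff_degree_lt hS0).mp hSnd
      have hSmem1 : S ∈ Polynomial.degreeLT ℝ (k+1) :=
        Polynomial.mem_degreeLT.mpr
          (lt_trans hSdegk (by exact_mod_cast Nat.lt_succ_self k))
      set SE : Polynomial.degreeLT ℝ (k+1) := ⟨S, hSmem1⟩ with hSE
      have hSW : SE ∈ W := (hmemW SE).mpr hSdegk
      have hip : (inner ℝ SE x : ℝ) = 0 := (Submodule.mem_orthogonal W x).mp hx SE hSW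
      have hSx : (∫ t in (0:ℝ)..1, (S * (x : Polynomial ℝ)).eval t) = 0 := by
        rw [hinner] at hip
        refine Eq.trans ?_ hip
        exact intervalIntegral.integral_congr fun t _ => by
          simp [hSE, Polynomial.eval_mul]
      have hz : (∫ t in (0:ℝ)..1, (S*S*m).eval t) = 0 := by
        rcases hm with hm | hm
        · have hrel : S*S*m = S * (x : Polynomial ℝ) := by rw [← hfac, ← hm]; ring
          rw [hrel]; exact hSx
        · have hm' : m = -(X - Polynomial.C c) := by rw [hm]; ring
          have hrel : S*S*m = -(S * (x : Polynomial ℝ)) := by rw [hm', ← hfac]; ring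
          rw [hrel]
          simp only [Polynomial.eval_neg]
          rw [intervalIntegral.integral_neg, hSx, neg_zero]
      have hSm0 := gr_poly_eq_zero (S*S*m)
        (fun t ht => by
          simpa [Polynomial.eval_mul] using
            mul_nonneg (mul_self_nonneg (S.eval t)) (hmnn t ht)) hz
      have hmne : m ≠ 0 := by
        rcases hm with hm | hm
        · rw [← hm]; exact hXC
        · intro h
          rw [h, neg_zero] at hm
          exact hXC hm
      rcases mul_eq_zero.mp hSm0 with h | h
      · exact hS0 (mul_self_eq_zero.mp h)
      · exact hmne h
  -- evaluation functionals
  let ev : ℝ → (Polynomial.degreeLT ℝ (k+1) →ₗ[ℝ] ℝ) := fun c =>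
    (Polynomial.leval c).comp (Polynomial.degreeLT ℝ (k+1)).subtype
  have hev : ∀ (c : ℝ) (x : Polynomial.degreeLT ℝ (k+1)),
      ev c x = (x : Polynomial ℝ).eval c := fun c x => rfl
  obtain ⟨C₁, hC₁, hC₁b⟩ := gr_opBound (ev 1)
  obtain ⟨C₁', hC₁', hC₁b'⟩ := gr_opBound (ev 0)
  have hinj1 : Function.Injective ((ev 1).comp Wᗮ.subtype) := by
    rw [← LinearMap.ker_eq_bot, LinearMap.ker_eq_bot']
    intro z hz
    refine Subtype.ext (key (Polynomial.C 1 - X) 1 (Or.inr (by ring))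
      (fun t ht => by simp; linarith [ht.2]) z.1 z.2 hz)
  have hinj0 : Function.Injective ((ev 0).comp Wᗮ.subtype) := by
    rw [← LinearMap.ker_eq_bot, LinearMap.ker_eq_bot']
    intro z hz
    refine Subtype.ext (key X 0 (Or.inl (by simp))
      (fun t ht => by simpa using ht.1) z.1 z.2 hz)
  obtain ⟨C₂, hC₂, hC₂b⟩ := gr_antiBound ((ev 1).comp Wᗮ.subtype) hinj1
  obtain ⟨C₂', hC₂', hC₂b'⟩ := gr_antiBound ((ev 0).comp Wᗮ.subtype) hinj0
  refine ⟨1 + (C₁ + C₁') * (C₂ + C₂') + (C₂ + C₂'), by positivity, ?_⟩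
  intro f hf p hpdeg horth
  set F := Real.sqrt (∫ t in (0:ℝ)..1, (f t)^2) with hFdef
  have hFnn : 0 ≤ F := Real.sqrt_nonneg _
  have hF2 : F^2 = ∫ t in (0:ℝ)..1, (f t)^2 :=
    Real.sq_sqrt (intervalIntegral.integral_nonneg (by norm_num) fun t _ => sq_nonneg _)
  have hpmem : p ∈ Polynomial.degreeLT ℝ (k+1) :=
    Polynomial.mem_degreeLT.mpr
      (lt_of_le_of_lt hpdeg (by exact_mod_cast Nat.lt_succ_self k))
  set pV : Polynomial.degreeLT ℝ (k+1) := ⟨p, hpmem⟩ with hpVdef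
  set qE : Polynomial.degreeLT ℝ (k+1) :=
    (W.orthogonalProjection pV : Polynomial.degreeLT ℝ (k+1)) with hqEdef
  have hqW : qE ∈ W := SetLike.coe_mem _
  set r : Polynomial.degreeLT ℝ (k+1) := pV - qE with hrdef
  have hrW : r ∈ Wᗮ := Submodule.sub_starProjection_mem_orthogonal (K := W) pV
  have hsum : pV = qE + r := by rw [hrdef]; abel
  have hqdeg : (qE : Polynomial ℝ).degree ≤ ((k-1:ℕ) : WithBot ℕ) :=
    hdegpred _ ((hmemW qE).mp hqW)
  have hinnerq : (inner ℝ qE qE : ℝ) = ∫ t in (0:ℝ)..1, f t * (qE : Polynomial ℝ).eval t := by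
    have h1 : (inner ℝ pV qE : ℝ) = (inner ℝ qE qE : ℝ) + (inner ℝ r qE : ℝ) := by
      rw [hsum, inner_add_left]
    have h2 : (inner ℝ r qE : ℝ) = 0 := by
      rw [real_inner_comm]
      exact (Submodule.mem_orthogonal W r).mp hrW qE hqW
    have h3 : (inner ℝ pV qE : ℝ) = ∫ t in (0:ℝ)..1, f t * (qE : Polynomial ℝ).eval t := by
      rw [hinner]
      exact horth (qE : Polynomial ℝ) hqdeg
    linarith
  have hq2 : ‖qE‖^2 = ∫ t in (0:ℝ)..1, f t * (qE : Polynomial ℝ).eval t := by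
    rw [← real_inner_self_eq_norm_sq]; exact hinnerq
  have hqF : ‖qE‖ ≤ F := by
    have hy := gr_young f hf (qE : Polynomial ℝ)
    have h5 := hnorm2 qE
    have h4 : ‖qE‖^2 ≤ F^2 := by nlinarith [hy, hF2, h5, hq2]
    have h6 := Real.sqrt_le_sqrt h4
    rwa [Real.sqrt_sq (norm_nonneg _), Real.sqrt_sq hFnn] at h6
  have main : ∀ (c : ℝ) (Ca Cb : ℝ), 0 < Ca → 0 < Cb →
      (∀ x : Polynomial.degreeLT ℝ (k+1), |(x : Polynomial ℝ).eval c| ≤ Ca * ‖x‖) →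
      (∀ x : Wᗮ, ‖x‖ ≤ Cb * |((x : Polynomial.degreeLT ℝ (k+1)) : Polynomial ℝ).eval c|) →
      p.eval c = f c →
      Real.sqrt (∫ t in (0:ℝ)..1, (p.eval t)^2) ≤ (1 + Ca*Cb + Cb) * (F + |f c|) := by
    intro c Ca Cb hCa hCb hba hbb hpc
    have h1 : ‖pV‖ ≤ ‖qE‖ + ‖r‖ := by rw [hsum]; exact norm_add_le _ _
    have h2 : ‖(⟨r, hrW⟩ : Wᗮ)‖ = ‖r‖ := (Submodule.norm_coe (⟨r, hrW⟩ : ↥Wᗮ)).symm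
    have h3 : ‖r‖ ≤ Cb * |(r : Polynomial ℝ).eval c| := by
      have := hbb ⟨r, hrW⟩
      rwa [h2] at this
    have h4 : (r : Polynomial ℝ).eval c = f c - (qE : Polynomial ℝ).eval c := by
      have hco : (r : Polynomial ℝ) = p - (qE : Polynomial ℝ) := rfl
      rw [hco, Polynomial.eval_sub, hpc]
    have h5 : |(r : Polynomial ℝ).eval c| ≤ |f c| + Ca * ‖qE‖ := by
      rw [h4]
      calc |f c - (qE : Polynomial ℝ).eval c|
          ≤ |f c| + |(qE : Polynomial ℝ).eval c| := abs_sub _ _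
        _ ≤ |f c| + Ca * ‖qE‖ := add_le_add le_rfl (hba qE)
    have h6 : Real.sqrt (∫ t in (0:ℝ)..1, (p.eval t)^2) = ‖pV‖ := (hnormx pV).symm
    rw [h6]
    nlinarith [h1, hqF, h3.trans (mul_le_mul_of_nonneg_left h5 hCb.le),
      mul_le_mul_of_nonneg_left hqF (mul_nonneg hCb.le hCa.le),
      mul_nonneg hCb.le hFnn,
      mul_nonneg (mul_nonneg hCa.le hCb.le) (abs_nonneg (f c)),
      mul_nonneg hCb.le (abs_nonneg (f c)), hFnn, abs_nonneg (f c)]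
  have hCtot : ∀ c : ℝ, 0 ≤ |f c| → True := fun _ _ => trivial
  constructor
  · intro hp1
    have hb := main 1 C₁ C₂ hC₁ hC₂
      (fun x => by simpa [hev] using hC₁b x)
      (fun x => by simpa [hev] using hC₂b x) hp1
    refine hb.trans ?_
    apply mul_le_mul_of_nonneg_right ?_ (add_nonneg hFnn (abs_nonneg _))
    nlinarith [hC₁.le, hC₁'.le, hC₂.le, hC₂'.le]
  · intro hp0
    have hb := main 0 C₁' C₂' hC₁' hC₂'
      (fun x => by simpa [hev] using hC₁b' x)
      (fun x => by simpa [hev] using hC₂b' x) hp0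
    refine hb.trans ?_
    apply mul_le_mul_of_nonneg_right ?_ (add_nonneg hFnn (abs_nonneg _))
    nlinarith [hC₁.le, hC₁'.le, hC₂.le, hC₂'.le]

set_option maxHeartbeats 1600000 in
theorem gauss_radau_L2_stability
    (k : ℕ) (hk : 1 ≤ k) :
    ∃ C : ℝ, 0 < C ∧
      ∀ a b : ℝ, a < b → ∀ w g : ℝ → ℝ,
        IntervalIntegrable g MeasureTheory.volume a b →
        IntervalIntegrable (fun t => (g t) ^ 2) MeasureTheory.volume a b →
        (∀ t ∈ Set.Icc a b, w t = w a + ∫ s in a..t, g s) →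
        ∀ p : Polynomial ℝ, p.degree ≤ (k : WithBot ℕ) →
          (∀ v : Polynomial ℝ, v.degree ≤ ((k - 1 : ℕ) : WithBot ℕ) →
            ∫ t in a..b, p.eval t * v.eval t = ∫ t in a..b, w t * v.eval t) →
          ((p.eval b = w b →
            Real.sqrt (∫ t in a..b, (p.eval t) ^ 2) ≤
              C * (Real.sqrt (∫ t in a..b, (w t) ^ 2) +
                Real.sqrt (b - a) * |w b|)) ∧
           (p.eval a = w a →
            Real.sqrt (∫ t in a..b, (p.eval t) ^ 2) ≤
              C * (Real.sqrt (∫ t in a..b, (w t) ^ 2) +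
                Real.sqrt (b - a) * |w a|))) := by
  obtain ⟨C, hC, href⟩ := gr_ref k hk
  refine ⟨C, hC, ?_⟩
  intro a b hab w g hg _hg2 hrepr p hpdeg horth
  set h : ℝ := b - a with hhdef
  have hh : 0 < h := by simp only [hhdef]; linarith
  have hne : h ≠ 0 := ne_of_gt hh
  -- continuity of w on [a,b]
  have hwcont : ContinuousOn w (Set.Icc a b) := by
    have hint : IntegrableOn g (Set.uIcc a b) volume := by
      rw [Set.uIcc_of_le hab.le]
      exact (integrableOn_Icc_iff_integrableOn_Ioc).mpr hg.1
    have hprim : ContinuousOn (fun t => w a + ∫ s in a..t, g s) (Set.Icc a b) := by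
      have := intervalIntegral.continuousOn_primitive_interval hint
      rw [Set.uIcc_of_le hab.le] at this
      exact continuousOn_const.add this
    exact ContinuousOn.congr hprim fun t ht => hrepr t ht
  set f : ℝ → ℝ := fun s => w (h * s + a) with hfdef
  have hmaps : Set.MapsTo (fun s : ℝ => h * s + a) (Set.Icc 0 1) (Set.Icc a b) := by
    intro s hs
    have h1 := hs.1
    have h2 := hs.2
    constructor
    · show a ≤ h * s + a
      nlinarith [mul_nonneg hh.le h1]
    · show h * s + a ≤ b
      nlinarith [mul_le_mul_of_nonneg_left h2 hh.le, hh, hhdef.le, hhdef.ge]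
  have hfcont : ContinuousOn f (Set.Icc 0 1) :=
    hwcont.comp ((continuous_const.mul continuous_id').add continuous_const).continuousOn hmaps
  have scale : ∀ Φ : ℝ → ℝ, (∫ t in a..b, Φ t) = h * ∫ s in (0:ℝ)..1, Φ (h * s + a) := by
    intro Φ
    have h1 : (∫ s in (0:ℝ)..1, Φ (h * s + a)) = h⁻¹ • ∫ t in (h*0+a)..(h*1+a), Φ t :=
      intervalIntegral.integral_comp_mul_add Φ hne a
    rw [show h*0+a = a by ring, show h*1+a = b by rw [hhdef]; ring] at h1
    rw [h1, smul_eq_mul, ← mul_assoc, mul_inv_cancel₀ hne, one_mul]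
  set ph : Polynomial ℝ := p.comp (Polynomial.C h * X + Polynomial.C a) with hphdef
  have hpheval : ∀ s : ℝ, ph.eval s = p.eval (h * s + a) := by
    intro s
    rw [hphdef]
    simp [Polynomial.eval_comp]
  have hphdeg : ph.degree ≤ (k : WithBot ℕ) := by
    have h1 : ph.natDegree = p.natDegree := by
      rw [hphdef, Polynomial.natDegree_comp, Polynomial.natDegree_linear hne, mul_one]
    refine Polynomial.natDegree_le_iff_degree_le.mp ?_
    rw [h1]
    exact Polynomial.natDegree_le_iff_degree_le.mpr hpdeg
  have horth' : ∀ v : Polynomial ℝ, v.degree ≤ ((k-1:ℕ) : WithBot ℕ) →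
      (∫ s in (0:ℝ)..1, ph.eval s * v.eval s) = ∫ s in (0:ℝ)..1, f s * v.eval s := by
    intro vh hvdeg
    set v : Polynomial ℝ := vh.comp (Polynomial.C h⁻¹ * X + Polynomial.C (-(a * h⁻¹))) with hvdef
    have hveval : ∀ s : ℝ, v.eval (h * s + a) = vh.eval s := by
      intro s
      have harg : h⁻¹ * (h * s + a) + -(a * h⁻¹) = s := by field_simp; ring
      rw [hvdef]
      simp only [Polynomial.eval_comp, Polynomial.eval_add, Polynomial.eval_mul,
        Polynomial.eval_C, Polynomial.eval_X, Polynomial.eval_neg]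
      rw [harg]
    have hvdeg' : v.degree ≤ ((k-1:ℕ) : WithBot ℕ) := by
      have h1 : v.natDegree = vh.natDegree := by
        rw [hvdef, Polynomial.natDegree_comp, Polynomial.natDegree_linear (inv_ne_zero hne),
          mul_one]
      refine Polynomial.natDegree_le_iff_degree_le.mp ?_
      rw [h1]
      exact Polynomial.natDegree_le_iff_degree_le.mpr hvdeg
    have e0 : (∫ t in a..b, p.eval t * v.eval t) = h * ∫ s in (0:ℝ)..1, ph.eval s * vh.eval s := by
      rw [scale (fun t => p.eval t * v.eval t)]
      congr 1
      exact intervalIntegral.integral_congr fun s _ => by rw [hpheval, hveval]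
    have e2 : (∫ t in a..b, w t * v.eval t) = h * ∫ s in (0:ℝ)..1, f s * vh.eval s := by
      rw [scale (fun t => w t * v.eval t)]
      congr 1
      exact intervalIntegral.integral_congr fun s _ => by rw [hveval]
    have e3 := horth v hvdeg'
    rw [e0, e2] at e3
    exact mul_left_cancel₀ hne e3
  have hsq1 : (∫ t in a..b, (p.eval t)^2) = h * ∫ s in (0:ℝ)..1, (ph.eval s)^2 := by
    rw [scale (fun t => (p.eval t)^2)]
    congr 1
    exact intervalIntegral.integral_congr fun s _ => by rw [hpheval]
  have hsq2 : (∫ t in a..b, (w t)^2) = h * ∫ s in (0:ℝ)..1, (f s)^2 :=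
    scale (fun t => (w t)^2)
  have hb1 : h * 1 + a = b := by rw [hhdef]; ring
  have hsqrt1 : Real.sqrt (∫ t in a..b, (p.eval t)^2)
      = Real.sqrt h * Real.sqrt (∫ s in (0:ℝ)..1, (ph.eval s)^2) := by
    rw [hsq1, Real.sqrt_mul hh.le]
  have hsqrt2 : Real.sqrt (∫ t in a..b, (w t)^2)
      = Real.sqrt h * Real.sqrt (∫ s in (0:ℝ)..1, (f s)^2) := by
    rw [hsq2, Real.sqrt_mul hh.le]
  have hrefs := href f hfcont ph hphdeg horth'
  constructor
  · intro hpb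
    have hend : ph.eval 1 = f 1 := by
      rw [hpheval 1]
      show p.eval (h*1+a) = w (h*1+a)
      rw [hb1]
      exact hpb
    have hfb : f 1 = w b := by
      show w (h*1+a) = w b
      rw [hb1]
    have hmain := hrefs.1 hend
    rw [hsqrt1]
    calc Real.sqrt h * Real.sqrt (∫ s in (0:ℝ)..1, (ph.eval s)^2)
        ≤ Real.sqrt h * (C * (Real.sqrt (∫ s in (0:ℝ)..1, (f s)^2) + |f 1|)) :=
          mul_le_mul_of_nonneg_left hmain (Real.sqrt_nonneg h)
      _ = C * (Real.sqrt h * Real.sqrt (∫ s in (0:ℝ)..1, (f s)^2) + Real.sqrt h * |f 1|) := by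
          ring
      _ = C * (Real.sqrt (∫ t in a..b, (w t)^2) + Real.sqrt h * |w b|) := by
          rw [← hsqrt2, hfb]
  · intro hpa
    have hb0 : h * 0 + a = a := by ring
    have hend : ph.eval 0 = f 0 := by
      rw [hpheval 0]
      show p.eval (h*0+a) = w (h*0+a)
      rw [hb0]
      exact hpa
    have hfa : f 0 = w a := by
      show w (h*0+a) = w a
      rw [hb0]
    have hmain := hrefs.2 hend
    rw [hsqrt1]
    calc Real.sqrt h * Real.sqrt (∫ s in (0:ℝ)..1, (ph.eval s)^2)
        ≤ Real.sqrt h * (C * (Real.sqrt (∫ s in (0:ℝ)..1, (f s)^2) + |f 0|)) :=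
          mul_le_mul_of_nonneg_left hmain (Real.sqrt_nonneg h)
      _ = C * (Real.sqrt h * Real.sqrt (∫ s in (0:ℝ)..1, (f s)^2) + Real.sqrt h * |f 0|) := by
          ring
      _ = C * (Real.sqrt (∫ t in a..b, (w t)^2) + Real.sqrt h * |w a|) := by
          rw [← hsqrt2, hfa]
end

section
/- There exists a constant C > 0 depending only on k, β and Γ (in particular independent of the interval and of w) such that for every bounded interval I = (a,b), every continuous weight b on [a,b] with β² ≤ b ≤ Γ, every R ∈ {π, π_b, π⁻, π⁺}, and every w continuous on [a,b]: ‖Rw‖_{L∞(I)} ≤ C ‖w‖_{L∞(I)}. -/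
/-!
STATEMENT 4: There exists a constant C > 0 depending only on k, β and Γ such
that for every bounded interval I = (a,b), every continuous weight bf with
β² ≤ bf ≤ Γ on [a,b], every R ∈ {π, π_b, π⁻, π⁺} and every continuous w:
  ‖Rw‖_{L∞(I)} ≤ C ‖w‖_{L∞(I)}.
The projection Rw is encoded as any polynomial p of degree ≤ k satisfying the
defining conditions of one of the four projections (the disjunction below).
-/

open Polynomial MeasureTheory intervalIntegral Function

namespace ProjStab

lemma polyII (P : Polynomial ℝ) (a b : ℝ) :
    IntervalIntegrable (fun x => P.eval x) volume a b :=
  P.continuous.intervalIntegrable _ _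

lemma parts (A B : Polynomial ℝ) :
    ∫ x in (0:ℝ)..1, (derivative A).eval x * B.eval x
      = A.eval 1 * B.eval 1 - A.eval 0 * B.eval 0
        - ∫ x in (0:ℝ)..1, A.eval x * (derivative B).eval x := by
  have h : ∫ x in (0:ℝ)..1, ((derivative (A*B)).eval x) = (A*B).eval 1 - (A*B).eval 0 :=
    intervalIntegral.integral_eq_sub_of_hasDerivAt
      (fun x _ => (A*B).hasDerivAt x) (polyII _ _ _)
  have h2 : (fun x : ℝ => (derivative (A*B)).eval x)
      = fun x => (derivative A).eval x * B.eval x + A.eval x * (derivative B).eval x := by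
    funext x; rw [derivative_mul]; simp
  rw [h2] at h
  rw [intervalIntegral.integral_add (f := fun x => (derivative A).eval x * B.eval x)
      (g := fun x => A.eval x * (derivative B).eval x)
      (((derivative A).continuous.mul B.continuous).intervalIntegrable _ _)
      ((A.continuous.mul (derivative B).continuous).intervalIntegrable _ _)] at h
  simp only [Polynomial.eval_mul] at h
  linarith

lemma dvd_derivative (r : ℝ) (m : ℕ) (g : Polynomial ℝ) (hg : (X - C r) ^ m ∣ g) :
    (X - C r) ^ (m - 1) ∣ derivative g := by
  obtain ⟨h, rfl⟩ := hg
  cases m with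
  | zero => simpa using one_dvd _
  | succ m =>
    refine ⟨C ((m+1 : ℕ) : ℝ) * h + (X - C r) * derivative h, ?_⟩
    rw [derivative_mul, derivative_pow]
    simp only [derivative_sub, derivative_X, derivative_C, sub_zero, mul_one,
      Nat.add_sub_cancel]
    push_cast
    ring

lemma dvd_iter (r : ℝ) (k : ℕ) (h : Polynomial ℝ) :
    ∀ j, (X - C r) ^ (k - j) ∣ derivative^[j] ((X - C r) ^ k * h) := by
  intro j
  induction j with
  | zero => simpa using dvd_mul_right _ _
  | succ j ih =>
    rw [Function.iterate_succ_apply']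
    have := dvd_derivative r (k - j) _ ih
    have hkj : k - (j+1) = k - j - 1 := by omega
    rw [hkj]
    exact this

lemma eval_iter_zero (r : ℝ) (k : ℕ) (h : Polynomial ℝ) (j : ℕ) (hj : j < k) :
    (derivative^[j] ((X - C r) ^ k * h)).eval r = 0 := by
  obtain ⟨g, hg⟩ := dvd_iter r k h j
  rw [hg]
  simp only [Polynomial.eval_mul, Polynomial.eval_pow, Polynomial.eval_sub,
    Polynomial.eval_X, Polynomial.eval_C, sub_self]
  rw [zero_pow (by omega), zero_mul]

lemma rodrigues (r : ℝ) : ∀ (n : ℕ) (h : Polynomial ℝ),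
    (derivative^[n] ((X - C r) ^ n * h)).eval r = ((Nat.factorial n : ℕ) : ℝ) * h.eval r := by
  intro n
  induction n with
  | zero => intro h; simp
  | succ n ih =>
    intro h
    have key : derivative ((X - C r) ^ (n+1) * h)
        = (X - C r) ^ n * (C ((n+1 : ℕ) : ℝ) * h + (X - C r) * derivative h) := by
      rw [derivative_mul, derivative_pow]
      simp only [derivative_sub, derivative_X, derivative_C, sub_zero, mul_one,
        Nat.add_sub_cancel]
      push_cast
      ring
    rw [Function.iterate_succ_apply, key, ih]
    simp only [Polynomial.eval_add, Polynomial.eval_mul, Polynomial.eval_C,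
      Polynomial.eval_sub, Polynomial.eval_X, sub_self, zero_mul, add_zero]
    rw [Nat.factorial_succ]
    push_cast
    ring

noncomputable def f0 (k : ℕ) : Polynomial ℝ := X ^ k * (X - C 1) ^ k

noncomputable def Lref (k : ℕ) : Polynomial ℝ := derivative^[k] (f0 k)

lemma f0_eq_zero_form (k : ℕ) : f0 k = (X - C 0) ^ k * ((X - C 1) ^ k) := by
  simp [f0]

lemma f0_eq_one_form (k : ℕ) : f0 k = (X - C 1) ^ k * (X ^ k) := by
  rw [f0, mul_comm]

lemma Lref_eval_one (k : ℕ) : (Lref k).eval 1 = ((Nat.factorial k : ℕ) : ℝ) := by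
  rw [Lref, f0_eq_one_form, rodrigues]
  simp

lemma Lref_eval_zero_abs (k : ℕ) : |(Lref k).eval 0| = ((Nat.factorial k : ℕ) : ℝ) := by
  rw [Lref, f0_eq_zero_form, rodrigues]
  simp only [Polynomial.eval_pow, Polynomial.eval_sub, Polynomial.eval_X,
    Polynomial.eval_C, zero_sub]
  rw [abs_mul, abs_pow, abs_neg, abs_one, one_pow, mul_one, abs_of_nonneg (by positivity)]

lemma f0_monic (k : ℕ) : (f0 k).Monic :=
  (monic_X_pow k).mul ((monic_X_sub_C (1:ℝ)).pow k)

lemma f0_natDegree (k : ℕ) : (f0 k).natDegree = k + k := by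
  rw [f0, (monic_X_pow k).natDegree_mul ((monic_X_sub_C (1:ℝ)).pow k)]
  rw [Polynomial.natDegree_X_pow, Polynomial.natDegree_pow, Polynomial.natDegree_X_sub_C, mul_one]

lemma Lref_coeff_k (k : ℕ) : (Lref k).coeff k = ((k+k).descFactorial k : ℝ) := by
  rw [Lref, Polynomial.coeff_iterate_derivative]
  have h1 : (f0 k).coeff (k + k) = 1 := by
    have h := (f0_monic k).coeff_natDegree
    rw [f0_natDegree k] at h
    exact h
  rw [h1]
  simp

lemma Lref_coeff_k_ne (k : ℕ) : (Lref k).coeff k ≠ 0 := by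
  rw [Lref_coeff_k]
  have : (k+k).descFactorial k ≠ 0 := by
    rw [Ne, Nat.descFactorial_eq_zero_iff_lt]
    omega
  exact_mod_cast this

lemma Lref_natDegree (k : ℕ) : (Lref k).natDegree = k := by
  refine le_antisymm ?_ (Polynomial.le_natDegree_of_ne_zero (Lref_coeff_k_ne k))
  have := Polynomial.natDegree_iterate_derivative (f0 k) k
  rw [f0_natDegree k] at this
  simpa [Lref] using this

lemma Lref_degree_le (k : ℕ) : (Lref k).degree ≤ (k : WithBot ℕ) :=
  Polynomial.natDegree_le_iff_degree_le.mp (le_of_eq (Lref_natDegree k))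

lemma ref_orth (k : ℕ) (hk : 1 ≤ k) (v : Polynomial ℝ) (hv : v.natDegree ≤ k - 1) :
    ∫ x in (0:ℝ)..1, (Lref k).eval x * v.eval x = 0 := by
  have main : ∀ i, i ≤ k →
      ∫ x in (0:ℝ)..1, (derivative^[i] (f0 k)).eval x * (derivative^[k - i] v).eval x = 0 := by
    intro i
    induction i with
    | zero =>
      intro _
      have hz : derivative^[k - 0] v = 0 :=
        Polynomial.iterate_derivative_eq_zero (by omega)
      rw [hz]
      simp
    | succ i ih =>
      intro hik
      have h1 : derivative^[i+1] (f0 k) = derivative (derivative^[i] (f0 k)) :=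
        Function.iterate_succ_apply' _ _ _
      rw [h1, parts]
      have e1 : (derivative^[i] (f0 k)).eval 1 = 0 := by
        rw [f0_eq_one_form]
        exact eval_iter_zero 1 k _ i (by omega)
      have e0 : (derivative^[i] (f0 k)).eval 0 = 0 := by
        rw [f0_eq_zero_form]
        exact eval_iter_zero 0 k _ i (by omega)
      have h2 : derivative (derivative^[k - (i+1)] v) = derivative^[k - i] v := by
        rw [← Function.iterate_succ_apply' (fun q => derivative q) (k - (i+1)) v]
        congr 1
        omega
      rw [e1, e0, h2, ih (by omega)]
      ring
  have := main k le_rfl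
  simpa [Lref] using this


lemma inv_ineq (k : ℕ) : ∃ C : ℝ, 0 < C ∧ ∀ q : Polynomial ℝ, q.degree ≤ (k : WithBot ℕ) →
    ∀ u ∈ Set.Icc (0:ℝ) 1, |q.eval u| ≤ C * Real.sqrt (∫ x in (0:ℝ)..1, (q.eval x)^2) := by
  classical
  set n := k + 1 with hn
  set G : (Fin n → ℝ) → ℝ :=
    fun c => ∑ i : Fin n, ∑ j : Fin n, c i * c j * (((i:ℕ) : ℝ) + ((j:ℕ) : ℝ) + 1)⁻¹ with hGdef
  have key : ∀ c : Fin n → ℝ,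
      (∫ x in (0:ℝ)..1, (∑ i : Fin n, c i * x ^ (i:ℕ)) ^ 2) = G c := by
    intro c
    have h1 : ∀ x : ℝ, (∑ i : Fin n, c i * x ^ (i:ℕ)) ^ 2
        = ∑ i : Fin n, ∑ j : Fin n, (c i * c j) * x ^ ((i:ℕ) + (j:ℕ)) := by
      intro x
      rw [sq, Finset.sum_mul_sum]
      refine Finset.sum_congr rfl fun i _ => Finset.sum_congr rfl fun j _ => ?_
      rw [pow_add]; ring
    rw [intervalIntegral.integral_congr (g := fun x =>
        ∑ i : Fin n, ∑ j : Fin n, (c i * c j) * x ^ ((i:ℕ) + (j:ℕ))) (fun x _ => h1 x)]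
    rw [intervalIntegral.integral_finset_sum
      (f := fun i x => ∑ j : Fin n, (c i * c j) * x ^ ((i:ℕ) + (j:ℕ))) (fun i _ =>
      ((continuous_finset_sum _ fun j _ =>
        continuous_const.mul (continuous_pow _)).intervalIntegrable _ _))]
    refine Finset.sum_congr rfl fun i _ => ?_
    rw [intervalIntegral.integral_finset_sum
      (f := fun j x => (c i * c j) * x ^ ((i:ℕ) + (j:ℕ))) (fun j _ =>
      ((continuous_const.mul (continuous_pow _)).intervalIntegrable _ _))]
    refine Finset.sum_congr rfl fun j _ => ?_
    rw [intervalIntegral.integral_const_mul, integral_pow]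
    rw [one_pow, zero_pow (by omega), sub_zero]
    push_cast
    rw [one_div]
  have hGcont : Continuous G := by
    apply continuous_finset_sum; intro i _
    apply continuous_finset_sum; intro j _
    exact ((continuous_apply i).mul (continuous_apply j)).mul continuous_const
  have hGhom : ∀ (t : ℝ) (c : Fin n → ℝ), G (t • c) = t^2 * G c := by
    intro t c
    simp only [hGdef, Pi.smul_apply, smul_eq_mul, Finset.mul_sum]
    refine Finset.sum_congr rfl fun i _ => Finset.sum_congr rfl fun j _ => by ring
  have hGpos : ∀ c : Fin n → ℝ, c ≠ 0 → 0 < G c := by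
    intro c hc
    rw [← key]
    set q : Polynomial ℝ := ∑ i : Fin n, Polynomial.C (c i) * X ^ (i : ℕ) with hq
    have hqe : ∀ x : ℝ, q.eval x = ∑ i : Fin n, c i * x ^ (i:ℕ) := by
      intro x; rw [hq, Polynomial.eval_finset_sum]; simp
    have hqne : q ≠ 0 := by
      obtain ⟨i0, hi0⟩ : ∃ i, c i ≠ 0 := by
        by_contra h; push_neg at h; exact hc (funext h)
      intro h0
      have hco : q.coeff (i0 : ℕ) = c i0 := by
        rw [hq, Polynomial.finset_sum_coeff]
        rw [Finset.sum_eq_single i0]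
        · simp
        · intro j _ hji
          rw [Polynomial.coeff_C_mul, Polynomial.coeff_X_pow, if_neg (by
            intro hEq
            exact hji (Fin.ext hEq.symm)), mul_zero]
        · intro h; exact absurd (Finset.mem_univ i0) h
      rw [h0] at hco
      simp at hco
      exact hi0 hco.symm
    have hsupp : 0 < volume (Function.support (fun x => (q.eval x)^2) ∩ Set.Ioc (0:ℝ) 1) := by
      have hroots : volume {x : ℝ | q.IsRoot x} = 0 :=
        (Polynomial.finite_setOf_isRoot hqne).measure_zero _
      have hsub : Set.Ioc (0:ℝ) 1 ⊆
          (Function.support (fun x => (q.eval x)^2) ∩ Set.Ioc (0:ℝ) 1) ∪ {x : ℝ | q.IsRoot x} := by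
        intro x hx
        by_cases hqx : q.eval x = 0
        · exact Or.inr hqx
        · exact Or.inl ⟨by simp [Function.mem_support, hqx], hx⟩
      by_contra hzero
      push_neg at hzero
      have h0 : volume (Function.support (fun x => (q.eval x)^2) ∩ Set.Ioc (0:ℝ) 1) = 0 :=
        le_antisymm hzero zero_le
      have hle : volume (Set.Ioc (0:ℝ) 1) ≤ 0 := by
        refine le_trans (measure_mono hsub) (le_trans (measure_union_le _ _) ?_)
        rw [h0, hroots, add_zero]
      simp [Real.volume_Ioc] at hle
    have hpos : (0:ℝ) < ∫ x in (0:ℝ)..1, (q.eval x)^2 := by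
      rw [intervalIntegral.integral_pos_iff_support_of_nonneg_ae
        (Filter.Eventually.of_forall (fun x => sq_nonneg _))
        ((q.continuous.pow 2).intervalIntegrable _ _)]
      exact ⟨zero_lt_one, hsupp⟩
    calc (0:ℝ) < ∫ x in (0:ℝ)..1, (q.eval x)^2 := hpos
    _ = ∫ x in (0:ℝ)..1, (∑ i : Fin n, c i * x ^ (i:ℕ))^2 :=
        intervalIntegral.integral_congr (fun x _ => by rw [hqe x])
  -- minimum of G on the unit sphere
  have hne : Nonempty (Fin n) := ⟨⟨0, by omega⟩⟩
  have hsph : ((fun _ : Fin n => (1:ℝ)) : Fin n → ℝ) ∈ Metric.sphere (0 : Fin n → ℝ) 1 := by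
    rw [Metric.mem_sphere, dist_zero_right]
    rw [pi_norm_const]
    simp
  obtain ⟨c₀, hc₀, hmin⟩ := (isCompact_sphere (0 : Fin n → ℝ) 1).exists_isMinOn
    ⟨_, hsph⟩ hGcont.continuousOn
  set m := G c₀ with hm
  have hmpos : 0 < m := by
    refine hGpos c₀ ?_
    intro h
    rw [h] at hc₀
    simp at hc₀
  have hlow : ∀ c : Fin n → ℝ, m * ‖c‖^2 ≤ G c := by
    intro c
    by_cases hc : c = 0
    · simp [hc, hGdef]
    · have hnc : ‖c‖ ≠ 0 := norm_ne_zero_iff.mpr hc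
      have hd : (‖c‖⁻¹ • c) ∈ Metric.sphere (0 : Fin n → ℝ) 1 := by
        rw [Metric.mem_sphere, dist_zero_right, norm_smul]
        simp [abs_of_nonneg (inv_nonneg.mpr (norm_nonneg c)), inv_mul_cancel₀ hnc]
      have h1 : m ≤ G (‖c‖⁻¹ • c) := isMinOn_iff.mp hmin _ hd
      have h2 : G c = ‖c‖^2 * G (‖c‖⁻¹ • c) := by
        rw [← hGhom]
        congr 1
        rw [smul_smul, mul_inv_cancel₀ hnc, one_smul]
      rw [h2]
      have : 0 ≤ ‖c‖^2 := sq_nonneg _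
      nlinarith
  refine ⟨(n : ℝ) / Real.sqrt m + 1, by positivity, ?_⟩
  intro q hq u hu
  set c : Fin n → ℝ := fun i => q.coeff i with hcdef
  have hqd : q.natDegree < n := by
    have := Polynomial.natDegree_le_iff_degree_le.mpr hq
    omega
  have hqe : ∀ x : ℝ, q.eval x = ∑ i : Fin n, c i * x ^ (i:ℕ) := by
    intro x
    rw [Polynomial.eval_eq_sum_range' hqd x, ← Fin.sum_univ_eq_sum_range]
  have h2 : (∫ x in (0:ℝ)..1, (q.eval x)^2) = G c := by
    rw [← key]
    exact intervalIntegral.integral_congr (fun x _ => by rw [hqe x])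
  have h3 : |q.eval u| ≤ (n:ℝ) * ‖c‖ := by
    rw [hqe u]
    calc |∑ i : Fin n, c i * u ^ (i:ℕ)| ≤ ∑ i : Fin n, |c i * u ^ (i:ℕ)| :=
          Finset.abs_sum_le_sum_abs _ _
    _ ≤ ∑ _i : Fin n, ‖c‖ := by
        refine Finset.sum_le_sum fun i _ => ?_
        rw [abs_mul]
        have hci : |c i| ≤ ‖c‖ := by
          have := norm_le_pi_norm c i
          simpa using this
        have hui : |u ^ (i:ℕ)| ≤ 1 := by
          rw [abs_pow]
          exact pow_le_one₀ (abs_nonneg u) (abs_le.mpr ⟨by linarith [hu.1], hu.2⟩)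
        calc |c i| * |u ^ (i:ℕ)| ≤ ‖c‖ * 1 :=
              mul_le_mul hci hui (abs_nonneg _) (norm_nonneg _)
        _ = ‖c‖ := mul_one _
    _ = (n:ℝ) * ‖c‖ := by
        rw [Finset.sum_const, Finset.card_univ, Fintype.card_fin, nsmul_eq_mul]
  have h4 : Real.sqrt m * ‖c‖ ≤ Real.sqrt (G c) := by
    rw [show Real.sqrt m * ‖c‖ = Real.sqrt (m * ‖c‖^2) by
      rw [Real.sqrt_mul hmpos.le, Real.sqrt_sq (norm_nonneg _)]]
    exact Real.sqrt_le_sqrt (hlow c)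
  have h5 : ‖c‖ ≤ Real.sqrt (G c) / Real.sqrt m := by
    rw [le_div_iff₀ (Real.sqrt_pos.mpr hmpos)]
    linarith [h4]
  calc |q.eval u| ≤ (n:ℝ) * ‖c‖ := h3
  _ ≤ (n:ℝ) * (Real.sqrt (G c) / Real.sqrt m) := by
      exact mul_le_mul_of_nonneg_left h5 (by positivity)
  _ = ((n:ℝ) / Real.sqrt m) * Real.sqrt (∫ x in (0:ℝ)..1, (q.eval x)^2) := by
      rw [h2]; ring
  _ ≤ ((n:ℝ) / Real.sqrt m + 1) * Real.sqrt (∫ x in (0:ℝ)..1, (q.eval x)^2) := by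
      have := Real.sqrt_nonneg (∫ x in (0:ℝ)..1, (q.eval x)^2)
      nlinarith

lemma inv_scaled (k : ℕ) : ∃ C : ℝ, 0 < C ∧ ∀ a b : ℝ, a < b →
    ∀ p : Polynomial ℝ, p.degree ≤ (k : WithBot ℕ) →
    ∀ t ∈ Set.Icc a b, |p.eval t| ≤ C * Real.sqrt ((∫ x in a..b, (p.eval x)^2) / (b - a)) := by
  obtain ⟨C₀, hC₀, hINV⟩ := inv_ineq k
  refine ⟨C₀, hC₀, ?_⟩
  intro a b hab p hp t ht
  have hh : 0 < b - a := sub_pos.mpr hab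
  set φ : Polynomial ℝ := Polynomial.C (b - a) * X + Polynomial.C a with hφ
  set q := p.comp φ with hqdef
  have hqdeg : q.degree ≤ (k : WithBot ℕ) := by
    rw [← Polynomial.natDegree_le_iff_degree_le] at hp ⊢
    calc q.natDegree = p.natDegree * φ.natDegree := Polynomial.natDegree_comp
    _ ≤ k * 1 := Nat.mul_le_mul hp Polynomial.natDegree_linear_le
    _ = k := mul_one k
  have hqe : ∀ x : ℝ, q.eval x = p.eval ((b - a) * x + a) := by
    intro x
    rw [hqdef, Polynomial.eval_comp]
    simp [hφ]
  have hint : (∫ x in (0:ℝ)..1, (q.eval x)^2) = (∫ x in a..b, (p.eval x)^2) / (b - a) := by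
    have hco := intervalIntegral.integral_comp_mul_add (a := (0:ℝ)) (b := 1)
      (f := fun x => (p.eval x)^2) (c := b - a) hh.ne' a
    have e1 : (b - a) * 0 + a = a := by ring
    have e2 : (b - a) * 1 + a = b := by ring
    rw [e1, e2] at hco
    rw [intervalIntegral.integral_congr (g := fun x => (p.eval ((b-a) * x + a))^2)
      (fun x _ => by rw [hqe x])]
    rw [hco, smul_eq_mul, div_eq_inv_mul]
  set u := (t - a) / (b - a) with hu'
  have hu : u ∈ Set.Icc (0:ℝ) 1 :=
    ⟨div_nonneg (by linarith [ht.1]) hh.le, (div_le_one hh).mpr (by linarith [ht.2])⟩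
  have ht' : (b - a) * u + a = t := by
    rw [hu']
    field_simp
    ring
  have := hINV q hqdeg u hu
  rw [hqe u, ht', hint] at this
  exact this


end ProjStab


set_option maxHeartbeats 2000000 in
theorem projections_Linfty_stability
    (k : ℕ) (hk : 1 ≤ k) (β Γ : ℝ) (hβ : 0 < β) (hβΓ : β ^ 2 ≤ Γ) :
    ∃ C : ℝ, 0 < C ∧
      ∀ a b : ℝ, a < b →
      ∀ bf : ℝ → ℝ, ContinuousOn bf (Set.Icc a b) →
        (∀ t ∈ Set.Icc a b, β ^ 2 ≤ bf t ∧ bf t ≤ Γ) →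
      ∀ w : ℝ → ℝ, ContinuousOn w (Set.Icc a b) →
      ∀ p : Polynomial ℝ, p.degree ≤ (k : WithBot ℕ) →
        ((∀ v : Polynomial ℝ, v.degree ≤ (k : WithBot ℕ) →
            ∫ t in a..b, p.eval t * v.eval t = ∫ t in a..b, w t * v.eval t) ∨
         (∀ v : Polynomial ℝ, v.degree ≤ (k : WithBot ℕ) →
            ∫ t in a..b, bf t * p.eval t * v.eval t =
              ∫ t in a..b, bf t * w t * v.eval t) ∨
         ((∀ v : Polynomial ℝ, v.degree ≤ ((k - 1 : ℕ) : WithBot ℕ) →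
            ∫ t in a..b, p.eval t * v.eval t = ∫ t in a..b, w t * v.eval t) ∧
           p.eval b = w b) ∨
         ((∀ v : Polynomial ℝ, v.degree ≤ ((k - 1 : ℕ) : WithBot ℕ) →
            ∫ t in a..b, p.eval t * v.eval t = ∫ t in a..b, w t * v.eval t) ∧
           p.eval a = w a)) →
        ∀ t ∈ Set.Icc a b,
          |p.eval t| ≤ C * sSup ((fun s => |w s|) '' Set.Icc a b) := by
  classical
  obtain ⟨C₀, hC₀, hINV⟩ := ProjStab.inv_scaled k
  set NL := Real.sqrt ((∫ x in (0:ℝ)..1, ((ProjStab.Lref k).eval x)^2) / (1 - 0)) with hNL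
  have hNL0 : 0 ≤ NL := Real.sqrt_nonneg _
  set γ := Γ / β^2 with hγ
  have hγ1 : 1 ≤ γ := (one_le_div (by positivity)).mpr hβΓ
  have hγ0 : 0 < γ := lt_of_lt_of_le one_pos hγ1
  set B := C₀ * γ with hB
  have hB0 : 0 < B := mul_pos hC₀ hγ0
  set kf : ℝ := ((Nat.factorial k : ℕ) : ℝ) with hkf
  have hkf0 : 0 < kf := by
    rw [hkf]; exact_mod_cast Nat.factorial_pos k
  set K := B + (1 + B) * C₀ * NL / kf + 1 with hK
  have hK0 : 0 < K := by positivity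
  refine ⟨K, hK0, ?_⟩
  intro a b hab bf hbf hbfbd w hw p hpdeg hcase t ht
  set M := sSup ((fun s => |w s|) '' Set.Icc a b) with hM
  have hIcc : Set.uIcc a b = Set.Icc a b := Set.uIcc_of_le hab.le
  have hw' : ContinuousOn w (Set.uIcc a b) := by rw [hIcc]; exact hw
  have hbf' : ContinuousOn bf (Set.uIcc a b) := by rw [hIcc]; exact hbf
  have hMbd : ∀ s ∈ Set.Icc a b, |w s| ≤ M := by
    intro s hs
    exact le_csSup (isCompact_Icc.image_of_continuousOn hw.abs).bddAbove ⟨s, hs, rfl⟩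
  have hM0 : 0 ≤ M := le_trans (abs_nonneg _) (hMbd a ⟨le_rfl, hab.le⟩)
  have hh : 0 < b - a := sub_pos.mpr hab
  -- bound on ∫ w²
  have hW2 : (∫ x in a..b, (w x)^2) ≤ M^2 * (b - a) := by
    have h1 : (∫ _x in a..b, M^2) = M^2 * (b-a) := by
      rw [intervalIntegral.integral_const, smul_eq_mul]; ring
    rw [← h1]
    apply intervalIntegral.integral_mono_on hab.le
    · exact (hw'.pow 2).intervalIntegrable
    · exact intervalIntegrable_const
    · intro x hx
      calc (w x)^2 = |w x|^2 := (sq_abs _).symm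
      _ ≤ M^2 := pow_le_pow_left₀ (abs_nonneg _) (hMbd x hx) 2
  -- from an L² bound to a sup bound
  have LtwoToSup : ∀ s : Polynomial ℝ, s.degree ≤ (k : WithBot ℕ) →
      (∫ x in a..b, (s.eval x)^2) ≤ γ^2 * M^2 * (b - a) →
      ∀ r ∈ Set.Icc a b, |s.eval r| ≤ B * M := by
    intro s hs hsl r hr
    refine (hINV a b hab s hs r hr).trans ?_
    have h1 : (∫ x in a..b, (s.eval x)^2)/(b-a) ≤ γ^2*M^2 := by
      rw [div_le_iff₀ hh]
      linarith [hsl]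
    calc C₀ * Real.sqrt ((∫ x in a..b, (s.eval x)^2)/(b-a))
        ≤ C₀ * Real.sqrt (γ^2*M^2) :=
          mul_le_mul_of_nonneg_left (Real.sqrt_le_sqrt h1) hC₀.le
    _ = B * M := by
        rw [show γ^2*M^2 = (γ*M)^2 by ring, Real.sqrt_sq (mul_nonneg hγ0.le hM0)]
        rw [hB]; ring
  -- moment identity against itself gives an L² bound
  have sqBound : ∀ s : Polynomial ℝ,
      (∫ x in a..b, s.eval x * s.eval x) = (∫ x in a..b, w x * s.eval x) →
      (∫ x in a..b, (s.eval x)^2) ≤ γ^2 * M^2 * (b - a) := by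
    intro s hmom
    have hIs : IntervalIntegrable (fun x => (s.eval x)^2) volume a b :=
      (s.continuous.pow 2).intervalIntegrable _ _
    have hIws : IntervalIntegrable (fun x => w x * s.eval x) volume a b :=
      (hw'.mul s.continuous.continuousOn).intervalIntegrable
    have hIw2 : IntervalIntegrable (fun x => (w x)^2) volume a b :=
      (hw'.pow 2).intervalIntegrable
    have hImix : IntervalIntegrable (fun x => ((w x)^2 + (s.eval x)^2)/2) volume a b :=
      (((hw'.pow 2).add (s.continuous.continuousOn.pow 2)).div_const 2).intervalIntegrable
    have h1 : (∫ x in a..b, (s.eval x)^2) = ∫ x in a..b, w x * s.eval x := by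
      rw [← hmom]
      exact intervalIntegral.integral_congr (fun x _ => by rw [sq])
    have h2 : (∫ x in a..b, w x * s.eval x) ≤ ∫ x in a..b, ((w x)^2 + (s.eval x)^2)/2 :=
      intervalIntegral.integral_mono_on hab.le hIws hImix
        (fun x _ => by nlinarith [sq_nonneg (w x - s.eval x)])
    have h3 : (∫ x in a..b, ((w x)^2 + (s.eval x)^2)/2)
        = ((∫ x in a..b, (w x)^2) + ∫ x in a..b, (s.eval x)^2)/2 := by
      rw [intervalIntegral.integral_div, intervalIntegral.integral_add hIw2 hIs]
    have h5 : (∫ x in a..b, (s.eval x)^2) ≤ M^2*(b-a) := by linarith [hW2]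
    have hγ2 : (1:ℝ) ≤ γ^2 := by nlinarith
    nlinarith [mul_nonneg (mul_nonneg (sq_nonneg M) hh.le) (sub_nonneg.mpr hγ2)]
  -- Gauss–Radau machinery
  have he : (b - a)⁻¹ ≠ 0 := inv_ne_zero hh.ne'
  set ψ : Polynomial ℝ := Polynomial.C (b-a)⁻¹ * X + Polynomial.C (-((b-a)⁻¹*a)) with hψ
  set Lab := (ProjStab.Lref k).comp ψ with hLab
  have hLabe : ∀ x : ℝ, Lab.eval x
      = (ProjStab.Lref k).eval ((b-a)⁻¹ * x + -((b-a)⁻¹*a)) := by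
    intro x; rw [hLab, Polynomial.eval_comp]; simp [hψ]
  have hLab_ab : ∀ x : ℝ, Lab.eval ((b-a) * x + a) = (ProjStab.Lref k).eval x := by
    intro x
    rw [hLabe]
    congr 1
    field_simp
    ring
  have hψdeg : ψ.natDegree = 1 := Polynomial.natDegree_linear he
  have hLabnd : Lab.natDegree = k := by
    rw [hLab, Polynomial.natDegree_comp, ProjStab.Lref_natDegree, hψdeg, mul_one]
  have hLabdeg : Lab.degree ≤ (k : WithBot ℕ) :=
    Polynomial.natDegree_le_iff_degree_le.mp (le_of_eq hLabnd)
  have hLabcoeff : Lab.coeff k ≠ 0 := by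
    have h1 : Lab.coeff k = Lab.leadingCoeff := by rw [Polynomial.leadingCoeff, hLabnd]
    rw [h1, hLab, Polynomial.leadingCoeff_comp (by rw [hψdeg]; omega)]
    apply mul_ne_zero
    · rw [Polynomial.leadingCoeff, ProjStab.Lref_natDegree]
      exact ProjStab.Lref_coeff_k_ne k
    · apply pow_ne_zero
      rw [hψ, Polynomial.leadingCoeff_linear he]
      exact he
  have horth : ∀ v : Polynomial ℝ, v.degree ≤ ((k - 1 : ℕ) : WithBot ℕ) →
      (∫ x in a..b, Lab.eval x * v.eval x) = 0 := by
    intro v hv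
    set v2 := v.comp (Polynomial.C (b-a) * X + Polynomial.C a) with hv2def
    have hv2 : v2.natDegree ≤ k - 1 := by
      rw [hv2def, Polynomial.natDegree_comp]
      calc v.natDegree * (Polynomial.C (b-a) * X + Polynomial.C a).natDegree
          ≤ (k-1) * 1 := Nat.mul_le_mul (Polynomial.natDegree_le_iff_degree_le.mpr hv)
            Polynomial.natDegree_linear_le
      _ = k - 1 := mul_one _
    have href := ProjStab.ref_orth k hk v2 hv2
    have hco := intervalIntegral.integral_comp_mul_add (a := (0:ℝ)) (b := 1)
      (f := fun x => Lab.eval x * v.eval x) (c := b - a) hh.ne' a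
    have e1 : (b - a) * 0 + a = a := by ring
    have e2 : (b - a) * 1 + a = b := by ring
    rw [e1, e2] at hco
    have hLHS : (∫ x in (0:ℝ)..1,
        (fun x => Lab.eval x * v.eval x) ((b-a) * x + a)) = 0 := by
      refine Eq.trans ?_ href
      apply intervalIntegral.integral_congr
      intro x _
      show Lab.eval ((b-a) * x + a) * v.eval ((b-a) * x + a)
        = (ProjStab.Lref k).eval x * v2.eval x
      rw [hLab_ab x, hv2def, Polynomial.eval_comp]
      simp
    rw [hLHS] at hco
    have h := hco.symm
    rw [smul_eq_mul] at h
    rcases mul_eq_zero.mp h with h' | h'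
    · exact absurd h' he
    · exact h'
  -- main Gauss–Radau bound
  have mainGR : ∀ x₀ : ℝ, x₀ ∈ Set.Icc a b →
      (∀ v : Polynomial ℝ, v.degree ≤ ((k - 1 : ℕ) : WithBot ℕ) →
        (∫ x in a..b, p.eval x * v.eval x) = ∫ x in a..b, w x * v.eval x) →
      p.eval x₀ = w x₀ → |Lab.eval x₀| = kf →
      |p.eval t| ≤ K * M := by
    intro x₀ hx₀ hmom hend hLx₀
    set c := p.coeff k / Lab.coeff k with hc
    set s := p - Polynomial.C c * Lab with hs
    have hse : ∀ x : ℝ, s.eval x = p.eval x - c * Lab.eval x := by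
      intro x; rw [hs]; simp
    have hps : ∀ x : ℝ, p.eval x = s.eval x + c * Lab.eval x := by
      intro x; rw [hse x]; ring
    have hsdeg : s.degree ≤ ((k - 1 : ℕ) : WithBot ℕ) := by
      rw [Polynomial.degree_le_iff_coeff_zero]
      intro m hm
      have hm' : k - 1 < m := by exact_mod_cast hm
      by_cases hmk : m = k
      · subst hmk
        rw [hs]
        simp only [Polynomial.coeff_sub, Polynomial.coeff_C_mul]
        rw [hc, div_mul_cancel₀ _ hLabcoeff, sub_self]
      · have hkm : k < m := by omega
        have hpm : p.coeff m = 0 := Polynomial.coeff_eq_zero_of_degree_lt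
          (lt_of_le_of_lt hpdeg (by exact_mod_cast hkm))
        have hLm : Lab.coeff m = 0 := Polynomial.coeff_eq_zero_of_natDegree_lt (by omega)
        rw [hs]
        simp [hpm, hLm]
    have hsdegk : s.degree ≤ (k : WithBot ℕ) :=
      le_trans hsdeg (by exact_mod_cast Nat.sub_le k 1)
    have hsmom : (∫ x in a..b, s.eval x * s.eval x) = ∫ x in a..b, w x * s.eval x := by
      have hIps : IntervalIntegrable (fun x => p.eval x * s.eval x) volume a b :=
        (p.continuous.mul s.continuous).intervalIntegrable _ _
      have hILs : IntervalIntegrable (fun x => Lab.eval x * s.eval x) volume a b :=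
        (Lab.continuous.mul s.continuous).intervalIntegrable _ _
      have h1 : (∫ x in a..b, s.eval x * s.eval x)
          = (∫ x in a..b, p.eval x * s.eval x)
            - c * ∫ x in a..b, Lab.eval x * s.eval x := by
        rw [← intervalIntegral.integral_const_mul,
          ← intervalIntegral.integral_sub hIps (hILs.const_mul c)]
        apply intervalIntegral.integral_congr
        intro x _
        show s.eval x * s.eval x
          = p.eval x * s.eval x - c * (Lab.eval x * s.eval x)
        rw [hse x]
        ring
      rw [h1, hmom s hsdeg, horth s hsdeg, mul_zero, sub_zero]
    have hsb : ∀ r ∈ Set.Icc a b, |s.eval r| ≤ B * M :=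
      LtwoToSup s hsdegk (sqBound s hsmom)
    have hcb : |c| * kf ≤ (1 + B) * M := by
      have h1 : c * Lab.eval x₀ = w x₀ - s.eval x₀ := by
        have h2 := hps x₀
        rw [hend] at h2
        linarith
      have h2 : |c| * kf = |c * Lab.eval x₀| := by rw [abs_mul, hLx₀]
      rw [h2, h1]
      calc |w x₀ - s.eval x₀| ≤ |w x₀| + |s.eval x₀| := abs_sub _ _
      _ ≤ M + B * M := add_le_add (hMbd x₀ hx₀) (hsb x₀ hx₀)
      _ = (1 + B) * M := by ring
    have hLt : |Lab.eval t| ≤ C₀ * NL := by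
      have hu : (t - a)/(b - a) ∈ Set.Icc (0:ℝ) 1 :=
        ⟨div_nonneg (by linarith [ht.1]) hh.le, (div_le_one hh).mpr (by linarith [ht.2])⟩
      have ht' : (b - a) * ((t - a)/(b-a)) + a = t := by field_simp; ring
      have h3 := hINV 0 1 zero_lt_one (ProjStab.Lref k) (ProjStab.Lref_degree_le k) _ hu
      rw [← hLab_ab ((t-a)/(b-a)), ht'] at h3
      rw [hNL]
      exact h3
    have hfin : |p.eval t| ≤ B * M + (1+B)*M/kf * (C₀*NL) := by
      rw [hps t]
      calc |s.eval t + c * Lab.eval t| ≤ |s.eval t| + |c| * |Lab.eval t| := by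
            refine (abs_add_le _ _).trans ?_
            rw [abs_mul]
      _ ≤ B * M + (1+B)*M/kf * (C₀*NL) := by
            refine add_le_add (hsb t ht) ?_
            have hcb' : |c| ≤ (1+B)*M/kf := by
              rw [le_div_iff₀ hkf0]
              linarith [hcb]
            exact mul_le_mul hcb' hLt (abs_nonneg _)
              (div_nonneg (mul_nonneg (by linarith) hM0) hkf0.le)
    refine hfin.trans ?_
    have hKM : K * M = B * M + (1+B)*M/kf * (C₀*NL) + M := by
      rw [hK]
      field_simp
    linarith [hM0]
  -- case analysis
  rcases hcase with hc1 | hc2 | hc3 | hc4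
  · have hmom := hc1 p hpdeg
    have h1 := LtwoToSup p hpdeg (sqBound p hmom) t ht
    refine h1.trans ?_
    have hBK : B ≤ K := by
      rw [hK]
      have : 0 ≤ (1 + B) * C₀ * NL / kf := by positivity
      linarith
    exact mul_le_mul_of_nonneg_right hBK hM0
  · have hmom := hc2 p hpdeg
    have hA : IntervalIntegrable (fun x => β^2 * (p.eval x)^2) volume a b :=
      (continuous_const.mul (p.continuous.pow 2)).intervalIntegrable _ _
    have hBc : IntervalIntegrable (fun x => bf x * p.eval x * p.eval x) volume a b :=
      ((hbf'.mul p.continuous.continuousOn).mul p.continuous.continuousOn).intervalIntegrable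
    have hCc : IntervalIntegrable (fun x => bf x * w x * p.eval x) volume a b :=
      ((hbf'.mul hw').mul p.continuous.continuousOn).intervalIntegrable
    have hD1 : IntervalIntegrable (fun x => β^2/2 * (p.eval x)^2) volume a b :=
      (continuous_const.mul (p.continuous.pow 2)).intervalIntegrable _ _
    have hD2 : IntervalIntegrable (fun x => Γ^2/(2*β^2) * (w x)^2) volume a b :=
      ((hw'.pow 2).intervalIntegrable).const_mul _
    have step1 : β^2 * (∫ x in a..b, (p.eval x)^2)
        ≤ ∫ x in a..b, bf x * p.eval x * p.eval x := by
      rw [← intervalIntegral.integral_const_mul]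
      apply intervalIntegral.integral_mono_on hab.le hA hBc
      intro x hx
      nlinarith [(hbfbd x hx).1, sq_nonneg (p.eval x)]
    have step2 : (∫ x in a..b, bf x * w x * p.eval x)
        ≤ ∫ x in a..b, (β^2/2 * (p.eval x)^2 + Γ^2/(2*β^2) * (w x)^2) := by
      apply intervalIntegral.integral_mono_on hab.le hCc (hD1.add hD2)
      intro x hx
      obtain ⟨hb1, hb2⟩ := hbfbd x hx
      have hb0 : 0 ≤ bf x := le_trans (by positivity) hb1
      have s1 : bf x * w x * p.eval x ≤ Γ * |w x * p.eval x| := by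
        calc bf x * w x * p.eval x = bf x * (w x * p.eval x) := by ring
        _ ≤ bf x * |w x * p.eval x| := mul_le_mul_of_nonneg_left (le_abs_self _) hb0
        _ ≤ Γ * |w x * p.eval x| := mul_le_mul_of_nonneg_right hb2 (abs_nonneg _)
      have s2 : Γ * |w x * p.eval x| ≤ β^2/2 * (p.eval x)^2 + Γ^2/(2*β^2) * (w x)^2 := by
        rw [abs_mul]
        rw [show β^2/2 * (p.eval x)^2 + Γ^2/(2*β^2) * (w x)^2
            = (β^4 * (p.eval x)^2 + Γ^2 * (w x)^2)/(2*β^2) by field_simp]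
        rw [le_div_iff₀ (by positivity), ← sq_abs (p.eval x), ← sq_abs (w x)]
        nlinarith [sq_nonneg (β^2 * |p.eval x| - Γ * |w x|)]
      linarith
    have step3 : (∫ x in a..b, (β^2/2 * (p.eval x)^2 + Γ^2/(2*β^2) * (w x)^2))
        = β^2/2 * (∫ x in a..b, (p.eval x)^2) + Γ^2/(2*β^2) * (∫ x in a..b, (w x)^2) := by
      rw [intervalIntegral.integral_add hD1 hD2, intervalIntegral.integral_const_mul,
        intervalIntegral.integral_const_mul]
    have hsq : (∫ x in a..b, (p.eval x)^2) ≤ γ^2 * M^2 * (b - a) := by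
      have key : β^2 * (∫ x in a..b, (p.eval x)^2)
          ≤ β^2/2 * (∫ x in a..b, (p.eval x)^2) + Γ^2/(2*β^2) * (∫ x in a..b, (w x)^2) := by
        calc β^2 * (∫ x in a..b, (p.eval x)^2)
            ≤ ∫ x in a..b, bf x * p.eval x * p.eval x := step1
        _ = ∫ x in a..b, bf x * w x * p.eval x := hmom
        _ ≤ ∫ x in a..b, (β^2/2 * (p.eval x)^2 + Γ^2/(2*β^2) * (w x)^2) := step2
        _ = _ := step3
      set PX := ∫ x in a..b, (p.eval x)^2 with hPX
      set WX := ∫ x in a..b, (w x)^2 with hWX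
      have key2 : β^2 * PX * (2*β^2)
          ≤ (β^2/2 * PX + Γ^2/(2*β^2) * WX) * (2*β^2) :=
        mul_le_mul_of_nonneg_right key (by positivity)
      have e3 : (β^2/2 * PX + Γ^2/(2*β^2) * WX) * (2*β^2) = β^4 * PX + Γ^2 * WX := by
        field_simp
      rw [e3] at key2
      have e4 : β^2 * PX * (2*β^2) = 2*(β^4 * PX) := by ring
      rw [e4] at key2
      have k3 : β^4 * PX ≤ Γ^2 * WX := by linarith
      have k4 : Γ^2 * WX ≤ Γ^2 * (M^2*(b-a)) := mul_le_mul_of_nonneg_left hW2 (sq_nonneg Γ)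
      have e5 : γ^2 * M^2 * (b-a) = (Γ^2 * (M^2*(b-a)))/β^4 := by
        rw [hγ]
        field_simp
      rw [e5, le_div_iff₀ (by positivity)]
      nlinarith [k3, k4]
    have h1 := LtwoToSup p hpdeg hsq t ht
    refine h1.trans ?_
    have hBK : B ≤ K := by
      rw [hK]
      have : 0 ≤ (1 + B) * C₀ * NL / kf := by positivity
      linarith
    exact mul_le_mul_of_nonneg_right hBK hM0
  · -- Gauss–Radau at b
    obtain ⟨hmom, hend⟩ := hc3
    have hLb : |Lab.eval b| = kf := by
      have h1 := hLab_ab 1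
      rw [show (b-a) * 1 + a = b by ring] at h1
      rw [h1, ProjStab.Lref_eval_one, hkf]
      exact abs_of_nonneg (by positivity)
    exact mainGR b ⟨hab.le, le_rfl⟩ hmom hend hLb
  · -- Gauss–Radau at a
    obtain ⟨hmom, hend⟩ := hc4
    have hLa : |Lab.eval a| = kf := by
      have h1 := hLab_ab 0
      rw [show (b-a) * 0 + a = a by ring] at h1
      rw [h1, hkf]
      exact ProjStab.Lref_eval_zero_abs k
    exact mainGR a ⟨le_rfl, hab.le⟩ hmom hend hLa
end

section
/- There exists a constant C > 0 depending only on C₀, C₁, β, σ and k (independent of ε and N) such that ‖q - P_N⁺ q‖_{L∞(I_i)} ≤ C ε^{1/2} (N^{-1} ln N)^{k+1} for every i ∈ {1, …, N/4} ∪ {3N/4+1, …, N}. -/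
/-!
STATEMENT 9: On the 1D Shishkin mesh, with P_N⁺ q the combined
(local L² / Gauß–Radau) projection of q, there is a constant C > 0
depending only on C₀, C₁, β, σ, k such that
  ‖q - P_N⁺ q‖_{L∞(I_i)} ≤ C ε^{1/2} (N⁻¹ ln N)^{k+1}
for every i ∈ {1,…,N/4} ∪ {3N/4+1,…,N}.
-/

open Set MeasureTheory intervalIntegral Polynomial

lemma my_itdw_eq {f : ℝ → ℝ} {n : ℕ∞} (hf : ContDiff ℝ n f) {s : Set ℝ}
    (hs : UniqueDiffOn ℝ s) {x : ℝ} (hx : x ∈ s) {m : ℕ} (hmn : (m : ℕ∞) ≤ n) :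
    iteratedDerivWithin m f s x = iteratedDeriv m f x := by
  rw [iteratedDerivWithin_eq_iteratedFDerivWithin, iteratedDeriv_eq_iteratedFDeriv]
  congr 1
  exact (((contDiff_iff_ftaylorSeries.mp hf).hasFTaylorSeriesUpToOn
    s).eq_iteratedFDerivWithin_of_uniqueDiffOn (by exact_mod_cast hmn) hs hx).symm

lemma my_moment_int (n : ℕ) : ∫ s in (0:ℝ)..1, s ^ n = 1 / ((n : ℝ) + 1) := by
  rw [integral_pow]; norm_num

lemma my_pol_int (p : Polynomial ℝ) {k : ℕ} (hd : p.natDegree ≤ k) (j : ℕ) :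
    ∫ s in (0:ℝ)..1, p.eval s * s ^ j
      = ∑ i ∈ Finset.range (k+1), p.coeff i * (1 / ((i:ℝ) + (j:ℝ) + 1)) := by
  have h1 : ∀ s : ℝ, p.eval s * s ^ j
      = ∑ i ∈ Finset.range (k+1), p.coeff i * (s ^ (i + j)) := by
    intro s
    rw [Polynomial.eval_eq_sum_range' (Nat.lt_succ_of_le hd), Finset.sum_mul]
    exact Finset.sum_congr rfl fun i _ => by rw [pow_add]; ring
  simp_rw [h1]
  rw [intervalIntegral.integral_finset_sum]
  · refine Finset.sum_congr rfl fun i _ => ?_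
    rw [intervalIntegral.integral_const_mul, my_moment_int]
    push_cast; ring_nf
  · intro i _
    exact (continuous_const.mul (continuous_pow _)).intervalIntegrable _ _

lemma my_wsq_int_pos (e : ℕ) (p : Polynomial ℝ) (hp : p ≠ 0) :
    0 < ∫ s in (0:ℝ)..1, s ^ e * (p.eval s) ^ 2 := by
  have hc : Continuous fun s : ℝ => s ^ e * (p.eval s) ^ 2 :=
    (continuous_pow e).mul (p.continuous.pow 2)
  have hfi : IntervalIntegrable (fun s : ℝ => s ^ e * (p.eval s)^2) volume 0 1 :=
    hc.intervalIntegrable _ _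
  have hae : 0 ≤ᵐ[volume.restrict (Set.uIoc (0:ℝ) 1)] fun s : ℝ => s ^ e * (p.eval s)^2 := by
    rw [Set.uIoc_of_le (by norm_num : (0:ℝ) ≤ 1)]
    refine MeasureTheory.ae_restrict_of_forall_mem measurableSet_Ioc fun s hs => ?_
    exact mul_nonneg (pow_nonneg hs.1.le _) (sq_nonneg _)
  rw [intervalIntegral.integral_pos_iff_support_of_nonneg_ae' hae hfi]
  refine ⟨zero_lt_one, ?_⟩
  have hsub : Ioc (0:ℝ) 1 \ {x | p.IsRoot x} ⊆
      (Function.support fun s : ℝ => s ^ e * (p.eval s)^2) ∩ Ioc 0 1 := by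
    rintro s ⟨hs, hroot⟩
    refine ⟨?_, hs⟩
    simp only [Function.mem_support]
    exact mul_ne_zero (pow_ne_zero _ (ne_of_gt hs.1)) (pow_ne_zero _ hroot)
  have hz : volume ({x : ℝ | p.IsRoot x}) = 0 :=
    (Polynomial.finite_setOf_isRoot hp).measure_zero _
  have : volume (Ioc (0:ℝ) 1 \ {x | p.IsRoot x}) = volume (Ioc (0:ℝ) 1) :=
    measure_diff_null hz
  calc (0 : ENNReal) < volume (Ioc (0:ℝ) 1) := by simp
    _ = volume (Ioc (0:ℝ) 1 \ {x | p.IsRoot x}) := this.symm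
    _ ≤ _ := measure_mono hsub

lemma my_pair_int (p u : Polynomial ℝ) {m : ℕ} (hu : u.natDegree < m)
    (h : ∀ j, j < m → ∫ s in (0:ℝ)..1, p.eval s * s ^ j = 0) :
    ∫ s in (0:ℝ)..1, p.eval s * u.eval s = 0 := by
  have h1 : ∀ s : ℝ, p.eval s * u.eval s
      = ∑ j ∈ Finset.range m, u.coeff j * (p.eval s * s ^ j) := by
    intro s
    rw [Polynomial.eval_eq_sum_range' hu, Finset.mul_sum]
    exact Finset.sum_congr rfl fun j _ => by ring
  simp_rw [h1]
  rw [intervalIntegral.integral_finset_sum (f := fun j s => u.coeff j * (p.eval s * s ^ j)) fun j _ =>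
    (continuous_const.mul (p.continuous.mul (continuous_pow _))).intervalIntegrable _ _]
  refine Finset.sum_eq_zero fun j hj => ?_
  rw [intervalIntegral.integral_const_mul, h j (Finset.mem_range.mp hj), mul_zero]

lemma my_mom_zero {k : ℕ} (p : Polynomial ℝ) (hd : p.natDegree ≤ k)
    (h : ∀ j, j ≤ k → ∫ s in (0:ℝ)..1, p.eval s * s ^ j = 0) : p = 0 := by
  by_contra hp
  have hpos := my_wsq_int_pos 0 p hp
  simp only [pow_zero, one_mul] at hpos
  have : ∫ s in (0:ℝ)..1, (p.eval s) ^ 2 = 0 := by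
    have := my_pair_int p p (Nat.lt_succ_of_le hd)
      (fun j hj => h j (Nat.lt_succ_iff.mp hj))
    simpa [sq] using this
  rw [this] at hpos; exact lt_irrefl 0 hpos

lemma my_mom_zero_gr {k : ℕ} (hk : 1 ≤ k) (p : Polynomial ℝ) (hd : p.natDegree ≤ k)
    (h0 : p.eval 0 = 0)
    (h : ∀ j, j < k → ∫ s in (0:ℝ)..1, p.eval s * s ^ j = 0) : p = 0 := by
  by_contra hp
  obtain ⟨u, hu⟩ : Polynomial.X ∣ p :=
    Polynomial.X_dvd_iff.mpr (by rw [Polynomial.coeff_zero_eq_eval_zero]; exact h0)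
  have hune : u ≠ 0 := by rintro rfl; simp at hu; exact hp hu
  have hdu : u.natDegree < k := by
    have := Polynomial.natDegree_mul (Polynomial.X_ne_zero (R := ℝ)) hune
    rw [← hu, Polynomial.natDegree_X] at this
    omega
  have hzero : ∫ s in (0:ℝ)..1, p.eval s * u.eval s = 0 := my_pair_int p u hdu h
  have heq : ∀ s : ℝ, p.eval s * u.eval s = s ^ 1 * (u.eval s) ^ 2 := by
    intro s; rw [hu]; simp [sq]; ring
  simp_rw [heq] at hzero
  have hpos := my_wsq_int_pos 1 u hune
  rw [hzero] at hpos; exact lt_irrefl 0 hpos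

lemma my_inj_bound {n : ℕ} (Φ : (Fin n → ℝ) →ₗ[ℝ] (Fin n → ℝ)) (hΦ : Function.Injective Φ) :
    ∃ C : ℝ, 0 < C ∧ ∀ c, ‖c‖ ≤ C * ‖Φ c‖ := by
  have hsurj := (LinearMap.injective_iff_surjective).mp hΦ
  let e := LinearEquiv.ofBijective Φ ⟨hΦ, hsurj⟩
  let L := LinearMap.toContinuousLinearMap (e.symm.toLinearMap)
  refine ⟨‖L‖ + 1, by positivity, fun c => ?_⟩
  have h1 : L (Φ c) = c := by
    show e.symm (e c) = c
    exact e.symm_apply_apply c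
  calc ‖c‖ = ‖L (Φ c)‖ := by rw [h1]
    _ ≤ ‖L‖ * ‖Φ c‖ := L.le_opNorm _
    _ ≤ (‖L‖ + 1) * ‖Φ c‖ := by nlinarith [norm_nonneg (Φ c), norm_nonneg L]

lemma my_coeff_poly {k : ℕ} (c : Fin (k+1) → ℝ) :
    ∃ p : Polynomial ℝ, p.natDegree ≤ k ∧ ∀ i : Fin (k+1), p.coeff (i : ℕ) = c i := by
  refine ⟨∑ i : Fin (k+1), Polynomial.monomial (i : ℕ) (c i), ?_, ?_⟩
  · rw [Polynomial.natDegree_le_iff_coeff_eq_zero]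
    intro m hm
    rw [Polynomial.finset_sum_coeff]
    refine Finset.sum_eq_zero fun i _ => ?_
    rw [Polynomial.coeff_monomial, if_neg (by have := i.isLt; omega)]
  · intro i
    rw [Polynomial.finset_sum_coeff]
    rw [Finset.sum_eq_single i (fun b _ hb => by
      rw [Polynomial.coeff_monomial, if_neg (fun hh => hb (Fin.ext hh))])
      (fun h => absurd (Finset.mem_univ i) h)]
    rw [Polynomial.coeff_monomial, if_pos rfl]

lemma my_mom_eq {k : ℕ} (r : Polynomial ℝ) (hd : r.natDegree ≤ k) (j : ℕ) :
    ∫ s in (0:ℝ)..1, r.eval s * s ^ j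
      = ∑ i : Fin (k+1), (1 / ((i:ℝ) + (j:ℝ) + 1)) * r.coeff (i : ℕ) := by
  rw [my_pol_int r hd j, ← Fin.sum_univ_eq_sum_range (fun i => r.coeff i * (1/((i:ℝ)+(j:ℝ)+1)))]
  exact Finset.sum_congr rfl fun i _ => by ring

/-- eval bound from coefficient bound -/
lemma my_eval_bound {k : ℕ} (r : Polynomial ℝ) (hd : r.natDegree ≤ k) {B : ℝ}
    (hB : ∀ i : Fin (k+1), |r.coeff (i : ℕ)| ≤ B) :
    ∀ s ∈ Icc (0:ℝ) 1, |r.eval s| ≤ ((k:ℝ) + 1) * B := by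
  intro s hs
  rw [Polynomial.eval_eq_sum_range' (Nat.lt_succ_of_le hd)]
  calc |∑ i ∈ Finset.range (k+1), r.coeff i * s ^ i|
      ≤ ∑ i ∈ Finset.range (k+1), |r.coeff i * s ^ i| := Finset.abs_sum_le_sum_abs _ _
    _ ≤ ∑ _i ∈ Finset.range (k+1), B := by
        refine Finset.sum_le_sum fun i hi => ?_
        rw [abs_mul]
        have h1 : |s ^ i| ≤ 1 := by
          rw [abs_pow]
          exact pow_le_one₀ (abs_nonneg s) (abs_le.mpr ⟨by linarith [hs.1], hs.2⟩)
        have h2 := hB ⟨i, Finset.mem_range.mp hi⟩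
        calc |r.coeff i| * |s ^ i| ≤ |r.coeff i| * 1 :=
              mul_le_mul_of_nonneg_left h1 (abs_nonneg _)
          _ ≤ B := by simpa using h2
    _ = ((k:ℝ) + 1) * B := by rw [Finset.sum_const, Finset.card_range, nsmul_eq_mul]; push_cast; ring

lemma my_stab_l2 (k : ℕ) : ∃ C : ℝ, 0 < C ∧ ∀ (r : Polynomial ℝ), r.natDegree ≤ k →
    ∀ δ : ℝ, (∀ j, j ≤ k → |∫ s in (0:ℝ)..1, r.eval s * s ^ j| ≤ δ) →
    ∀ s ∈ Icc (0:ℝ) 1, |r.eval s| ≤ C * δ := by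
  set M : Matrix (Fin (k+1)) (Fin (k+1)) ℝ := fun j i => 1 / ((i:ℝ) + (j:ℝ) + 1) with hM
  set Φ : (Fin (k+1) → ℝ) →ₗ[ℝ] (Fin (k+1) → ℝ) := M.mulVecLin with hΦdef
  have happ : ∀ (c : Fin (k+1) → ℝ) (j : Fin (k+1)),
      Φ c j = ∑ i : Fin (k+1), (1 / ((i:ℝ) + (j:ℝ) + 1)) * c i := by
    intro c j
    rw [hΦdef, Matrix.mulVecLin_apply]
    simp [hM, Matrix.mulVec, dotProduct]
  have hinj : Function.Injective Φ := by
    rw [← LinearMap.ker_eq_bot, LinearMap.ker_eq_bot']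
    intro c hc
    obtain ⟨p, hpd, hpc⟩ := my_coeff_poly c
    have hp0 : p = 0 := by
      refine my_mom_zero p hpd fun j hj => ?_
      have h1 : ∫ s in (0:ℝ)..1, p.eval s * s ^ j
          = ∑ i : Fin (k+1), (1 / ((i:ℝ) + ((⟨j, Nat.lt_succ_of_le hj⟩ : Fin (k+1)):ℝ) + 1)) * c i := by
        rw [my_mom_eq p hpd j]
        exact Finset.sum_congr rfl fun i _ => by rw [hpc i]
      rw [h1, ← happ c ⟨j, Nat.lt_succ_of_le hj⟩, hc]
      rfl
    funext i
    rw [← hpc i, hp0, Polynomial.coeff_zero]; rfl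
  obtain ⟨C1, hC1, hC1b⟩ := my_inj_bound Φ hinj
  refine ⟨((k:ℝ) + 1) * C1, by positivity, fun r hrd δ hmom s hs => ?_⟩
  have hδ : 0 ≤ δ := le_trans (abs_nonneg _) (hmom 0 (Nat.zero_le k))
  set c : Fin (k+1) → ℝ := fun i => r.coeff (i : ℕ) with hc
  have hΦc : ∀ j : Fin (k+1), Φ c j = ∫ s in (0:ℝ)..1, r.eval s * s ^ (j:ℕ) := by
    intro j; rw [happ, my_mom_eq r hrd]
  have hn : ‖Φ c‖ ≤ δ := by
    rw [pi_norm_le_iff_of_nonneg hδ]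
    intro j
    rw [Real.norm_eq_abs, hΦc j]
    exact hmom _ (Nat.lt_succ_iff.mp j.isLt)
  have hcb : ∀ i : Fin (k+1), |r.coeff (i:ℕ)| ≤ C1 * δ := by
    intro i
    calc |r.coeff (i:ℕ)| = ‖c i‖ := rfl
      _ ≤ ‖c‖ := norm_le_pi_norm c i
      _ ≤ C1 * ‖Φ c‖ := hC1b c
      _ ≤ C1 * δ := mul_le_mul_of_nonneg_left hn hC1.le
  have := my_eval_bound r hrd hcb s hs
  calc |r.eval s| ≤ ((k:ℝ)+1) * (C1 * δ) := this
    _ = ((k:ℝ)+1) * C1 * δ := by ring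

lemma my_stab_gr (k : ℕ) (hk : 1 ≤ k) : ∃ C : ℝ, 0 < C ∧ ∀ (r : Polynomial ℝ), r.natDegree ≤ k →
    ∀ δ : ℝ, |r.eval 0| ≤ δ → (∀ j, j < k → |∫ s in (0:ℝ)..1, r.eval s * s ^ j| ≤ δ) →
    ∀ s ∈ Icc (0:ℝ) 1, |r.eval s| ≤ C * δ := by
  set M : Matrix (Fin (k+1)) (Fin (k+1)) ℝ :=
    fun j i => if (j:ℕ) = 0 then (if (i:ℕ) = 0 then 1 else 0) else 1 / ((i:ℝ) + (j:ℝ)) with hM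
  set Φ : (Fin (k+1) → ℝ) →ₗ[ℝ] (Fin (k+1) → ℝ) := M.mulVecLin with hΦdef
  have happ0 : ∀ (c : Fin (k+1) → ℝ), Φ c 0 = c 0 := by
    intro c
    have : Φ c 0 = ∑ i : Fin (k+1), (if (i:ℕ) = 0 then (1:ℝ) else 0) * c i := by
      rw [hΦdef, Matrix.mulVecLin_apply]
      simp [hM, Matrix.mulVec, dotProduct]
    rw [this, Finset.sum_eq_single (0 : Fin (k+1))]
    · simp
    · intro b _ hb
      rw [if_neg (fun hh => hb (Fin.ext (by simpa using hh)))]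
      ring
    · intro h; exact absurd (Finset.mem_univ _) h
  have happ : ∀ (c : Fin (k+1) → ℝ) (j : Fin (k+1)), (j:ℕ) ≠ 0 →
      Φ c j = ∑ i : Fin (k+1), (1 / ((i:ℝ) + ((j:ℕ):ℝ))) * c i := by
    intro c j hj
    rw [hΦdef, Matrix.mulVecLin_apply]
    simp only [hM, Matrix.mulVec, dotProduct]
    exact Finset.sum_congr rfl fun i _ => by rw [if_neg hj]
  have hmomgr : ∀ (r : Polynomial ℝ), r.natDegree ≤ k → ∀ j : Fin (k+1), (j:ℕ) ≠ 0 →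
      Φ (fun i => r.coeff (i:ℕ)) j = ∫ s in (0:ℝ)..1, r.eval s * s ^ ((j:ℕ) - 1) := by
    intro r hrd j hj
    rw [happ _ _ hj, my_mom_eq r hrd]
    refine (Finset.sum_congr rfl fun i _ => ?_).symm
    have h1 : (((j:ℕ) - 1 : ℕ) : ℝ) + 1 = ((j:ℕ):ℝ) := by
      have := Nat.one_le_iff_ne_zero.mpr hj
      push_cast [Nat.cast_sub this]; ring
    rw [← h1]; ring_nf
  have hinj : Function.Injective Φ := by
    rw [← LinearMap.ker_eq_bot, LinearMap.ker_eq_bot']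
    intro c hc
    obtain ⟨p, hpd, hpc⟩ := my_coeff_poly c
    have hpcc : (fun i : Fin (k+1) => p.coeff (i:ℕ)) = c := funext hpc
    have hp0 : p = 0 := by
      refine my_mom_zero_gr hk p hpd ?_ fun j hj => ?_
      · rw [← Polynomial.coeff_zero_eq_eval_zero]
        have := happ0 c
        rw [hc] at this
        have h2 : p.coeff ((0 : Fin (k+1)) : ℕ) = c 0 := hpc 0
        simp only [Fin.val_zero] at h2
        rw [h2, ← this]; rfl
      · have hjj : ((⟨j+1, by omega⟩ : Fin (k+1)) : ℕ) ≠ 0 := by simp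
        have := hmomgr p hpd ⟨j+1, by omega⟩ hjj
        rw [hpcc, hc] at this
        simpa using this.symm
    funext i
    rw [← hpc i, hp0, Polynomial.coeff_zero]; rfl
  obtain ⟨C1, hC1, hC1b⟩ := my_inj_bound Φ hinj
  refine ⟨((k:ℝ) + 1) * C1, by positivity, fun r hrd δ h0 hmom s hs => ?_⟩
  have hδ : 0 ≤ δ := le_trans (abs_nonneg _) h0
  set c : Fin (k+1) → ℝ := fun i => r.coeff (i : ℕ) with hcdef
  have hn : ‖Φ c‖ ≤ δ := by
    rw [pi_norm_le_iff_of_nonneg hδ]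
    intro j
    rw [Real.norm_eq_abs]
    by_cases hj : (j:ℕ) = 0
    · have hj0 : j = 0 := Fin.ext hj
      rw [hj0, happ0, hcdef]
      simpa [Polynomial.coeff_zero_eq_eval_zero] using h0
    · rw [hmomgr r hrd j hj]
      exact hmom _ (by have := j.isLt; omega)
  have hcb : ∀ i : Fin (k+1), |r.coeff (i:ℕ)| ≤ C1 * δ := by
    intro i
    calc |r.coeff (i:ℕ)| = ‖c i‖ := rfl
      _ ≤ ‖c‖ := norm_le_pi_norm c i
      _ ≤ C1 * ‖Φ c‖ := hC1b c
      _ ≤ C1 * δ := mul_le_mul_of_nonneg_left hn hC1.le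
  have := my_eval_bound r hrd hcb s hs
  calc |r.eval s| ≤ ((k:ℝ)+1) * (C1 * δ) := this
    _ = ((k:ℝ)+1) * C1 * δ := by ring

lemma my_taylor (F : ℝ → ℝ) (k : ℕ) (hF : ContDiff ℝ ((k+1:ℕ):ℕ∞) F) (a b M : ℝ) (hab : a < b)
    (hM : ∀ t ∈ Icc a b, |iteratedDeriv (k+1) F t| ≤ M) :
    ∃ T : Polynomial ℝ, T.natDegree ≤ k ∧
      ∀ t ∈ Icc a b, |F t - T.eval t| ≤ M * (b-a)^(k+1) / ((k+1).factorial : ℝ) := by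
  set T : Polynomial ℝ := ∑ j ∈ Finset.range (k+1),
    Polynomial.C (iteratedDeriv j F a / (j).factorial) * (Polynomial.X - Polynomial.C a) ^ j with hT
  have hM0 : 0 ≤ M := le_trans (abs_nonneg _) (hM a ⟨le_refl a, hab.le⟩)
  have hRHS : 0 ≤ M * (b-a)^(k+1) / ((k+1).factorial : ℝ) := by
    have hba : (0:ℝ) ≤ b - a := by linarith
    exact div_nonneg (mul_nonneg hM0 (pow_nonneg hba _)) (by positivity)
  have hTdeg : T.natDegree ≤ k := by
    refine Polynomial.natDegree_sum_le_of_forall_le _ _ fun j hj => ?_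
    refine le_trans (Polynomial.natDegree_C_mul_le _ _) ?_
    rw [Polynomial.natDegree_pow, Polynomial.natDegree_X_sub_C, mul_one]
    exact Nat.lt_succ_iff.mp (Finset.mem_range.mp hj)
  have hTeval : ∀ t : ℝ, T.eval t
      = ∑ j ∈ Finset.range (k+1), (t - a)^j / (j).factorial * iteratedDeriv j F a := by
    intro t
    rw [hT, Polynomial.eval_finset_sum]
    exact Finset.sum_congr rfl fun j _ => by simp; ring
  refine ⟨T, hTdeg, fun t ht => ?_⟩
  rcases eq_or_lt_of_le ht.1 with heq | hat
  · have : T.eval a = F a := by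
      rw [hTeval]
      rw [Finset.sum_eq_single 0 (fun j _ hj => by
        rw [sub_self, zero_pow hj]; ring) (by simp)]
      simp
    rw [← heq, this, sub_self, abs_zero]
    exact hRHS
  · -- a < t
    have hs : UniqueDiffOn ℝ (Icc a t) := uniqueDiffOn_Icc hat
    have hsub : Icc a t ⊆ Icc a b := Icc_subset_Icc le_rfl ht.2
    have hfc : ContDiffOn ℝ (k:ℕ∞) F (Icc a t) :=
      (hF.of_le (by exact_mod_cast Nat.cast_le.mpr (Nat.le_succ k))).contDiffOn
    have hdiff : Differentiable ℝ (iteratedDeriv k F) :=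
      hF.differentiable_iteratedDeriv k (by exact_mod_cast Nat.lt_succ_self k)
    have hf' : DifferentiableOn ℝ (iteratedDerivWithin k F (Icc a t)) (Ioo a t) := by
      refine (hdiff.differentiableOn).congr fun y hy => ?_
      exact my_itdw_eq hF hs (Ioo_subset_Icc_self hy)
        (by exact_mod_cast Nat.cast_le.mpr (Nat.le_succ k))
    obtain ⟨x', hx', hrem⟩ := taylor_mean_remainder_lagrange (n := k) hat.ne
      (by rw [uIcc_of_le hat.le]; exact_mod_cast hfc)
      (by rw [uIcc_of_le hat.le, uIoo_of_le hat.le]; exact hf')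
    rw [uIoo_of_le hat.le] at hx'
    rw [uIcc_of_le hat.le] at hrem
    have hTt : taylorWithinEval F k (Icc a t) a t = T.eval t := by
      rw [taylor_within_apply, hTeval]
      refine Finset.sum_congr rfl fun j hj => ?_
      rw [my_itdw_eq hF hs (left_mem_Icc.mpr hat.le)
        (by exact_mod_cast Nat.cast_le.mpr ((Nat.le_of_lt_succ (Finset.mem_range.mp hj)).trans (Nat.le_succ k)))]
      rw [smul_eq_mul]; ring
    rw [hTt] at hrem
    rw [hrem]
    rw [my_itdw_eq hF hs (Ioo_subset_Icc_self hx')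
      (le_refl ((k+1:ℕ):ℕ∞))]
    rw [abs_div, abs_mul]
    have h1 : |iteratedDeriv (k+1) F x'| ≤ M := hM x' (hsub (Ioo_subset_Icc_self hx'))
    have h2 : |(t - a)^(k+1)| ≤ (b-a)^(k+1) := by
      rw [abs_pow]
      refine pow_le_pow_left₀ (abs_nonneg _) ?_ _
      rw [abs_of_nonneg (by linarith : (0:ℝ) ≤ t - a)]
      linarith [ht.2]
    have h3 : |((k+1).factorial : ℝ)| = ((k+1).factorial : ℝ) := abs_of_pos (by positivity)
    rw [h3]
    rw [div_le_div_iff_of_pos_right (by positivity)]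
    exact mul_le_mul h1 h2 (abs_nonneg _) hM0

lemma my_vdeg (a h : ℝ) (j : ℕ) :
    ((Polynomial.C h⁻¹ * (Polynomial.X - Polynomial.C a))^j).degree ≤ (j : WithBot ℕ) := by
  refine le_trans Polynomial.degree_le_natDegree ?_
  rw [Nat.cast_le, Polynomial.natDegree_pow]
  calc j * (Polynomial.C h⁻¹ * (Polynomial.X - Polynomial.C a)).natDegree
      ≤ j * 1 := by
        refine Nat.mul_le_mul_left _ ?_
        exact le_trans (Polynomial.natDegree_C_mul_le _ _) (le_of_eq (Polynomial.natDegree_X_sub_C a))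
    _ = j := mul_one j

lemma my_scaled_moment (j : ℕ) (F : ℝ → ℝ) (hFc : Continuous F) (T p : Polynomial ℝ)
    (a b δ : ℝ) (hab : a < b) (hTb : ∀ t ∈ Icc a b, |F t - T.eval t| ≤ δ)
    (hproj : ∫ t in a..b, p.eval t *
        ((Polynomial.C (b-a)⁻¹ * (Polynomial.X - Polynomial.C a))^j).eval t
      = ∫ t in a..b, F t *
        ((Polynomial.C (b-a)⁻¹ * (Polynomial.X - Polynomial.C a))^j).eval t) :
    |∫ s in (0:ℝ)..1,
        ((p - T).comp (Polynomial.C a + Polynomial.C (b-a) * Polynomial.X)).eval s * s^j| ≤ δ := by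
  set h : ℝ := b - a with hh
  have hpos : 0 < h := by simp [hh]; linarith
  have hne : h ≠ 0 := ne_of_gt hpos
  have hveval : ∀ t : ℝ,
      ((Polynomial.C h⁻¹ * (Polynomial.X - Polynomial.C a))^j).eval t = (h⁻¹ * (t - a))^j := by
    intro t; simp
  -- key1 : moments of r = moments of F - T
  have key1 : ∫ t in a..b, (p - T).eval t * (h⁻¹ * (t - a))^j
      = ∫ t in a..b, (F t - T.eval t) * (h⁻¹ * (t - a))^j := by
    have hint1 : IntervalIntegrable (fun t => p.eval t * (h⁻¹*(t-a))^j) volume a b :=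
      (p.continuous.mul ((continuous_const.mul (continuous_id.sub continuous_const)).pow j)).intervalIntegrable _ _
    have hint2 : IntervalIntegrable (fun t => T.eval t * (h⁻¹*(t-a))^j) volume a b :=
      (T.continuous.mul ((continuous_const.mul (continuous_id.sub continuous_const)).pow j)).intervalIntegrable _ _
    have hint3 : IntervalIntegrable (fun t => F t * (h⁻¹*(t-a))^j) volume a b :=
      (hFc.mul ((continuous_const.mul (continuous_id.sub continuous_const)).pow j)).intervalIntegrable _ _
    have e1 : ∀ t : ℝ, (p - T).eval t * (h⁻¹ * (t - a))^j
        = p.eval t * (h⁻¹*(t-a))^j - T.eval t * (h⁻¹*(t-a))^j := by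
      intro t; rw [Polynomial.eval_sub]; ring
    have e2 : ∀ t : ℝ, (F t - T.eval t) * (h⁻¹ * (t - a))^j
        = F t * (h⁻¹*(t-a))^j - T.eval t * (h⁻¹*(t-a))^j := by
      intro t; ring
    simp_rw [e1, e2]
    rw [intervalIntegral.integral_sub hint1 hint2, intervalIntegral.integral_sub hint3 hint2]
    have := hproj
    simp_rw [hveval] at this
    rw [this]
  -- key2 : substitution
  have key2 : (∫ s in (0:ℝ)..1,
      ((p - T).comp (Polynomial.C a + Polynomial.C h * Polynomial.X)).eval s * s^j)
      = h⁻¹ * ∫ t in a..b, (p - T).eval t * (h⁻¹ * (t - a))^j := by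
    have := intervalIntegral.integral_comp_mul_add
      (a := (0:ℝ)) (b := 1) (c := h)
      (fun t => (p - T).eval t * (h⁻¹ * (t - a))^j) hne a
    have heq : ∀ s : ℝ, (p - T).eval (h * s + a) * (h⁻¹ * (h * s + a - a))^j
        = ((p - T).comp (Polynomial.C a + Polynomial.C h * Polynomial.X)).eval s * s^j := by
      intro s
      rw [Polynomial.eval_comp]
      simp only [Polynomial.eval_add, Polynomial.eval_mul, Polynomial.eval_C, Polynomial.eval_X]
      have : h⁻¹ * (h * s + a - a) = s := by field_simp; ring
      rw [this]
      ring_nf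
    simp_rw [heq] at this
    rw [this]
    have hb : h * 1 + a = b := by rw [hh]; ring
    have ha : h * 0 + a = a := by ring
    rw [ha, hb, smul_eq_mul]
  rw [key2, key1]
  have key3 : |∫ t in a..b, (F t - T.eval t) * (h⁻¹ * (t - a))^j| ≤ δ * h := by
    have hδ0 : 0 ≤ δ := le_trans (abs_nonneg _) (hTb a ⟨le_refl a, hab.le⟩)
    have := intervalIntegral.norm_integral_le_of_norm_le_const
      (C := δ) (f := fun t => (F t - T.eval t) * (h⁻¹ * (t - a))^j) (a := a) (b := b) ?_
    · rw [Real.norm_eq_abs] at this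
      calc |∫ t in a..b, (F t - T.eval t) * (h⁻¹ * (t - a))^j| ≤ δ * |b - a| := this
        _ = δ * h := by rw [abs_of_pos hpos]
    · intro t ht
      rw [Set.uIoc_of_le hab.le] at ht
      rw [Real.norm_eq_abs, abs_mul]
      have h1 : |F t - T.eval t| ≤ δ := hTb t ⟨ht.1.le, ht.2⟩
      have h2 : |(h⁻¹ * (t - a))^j| ≤ 1 := by
        rw [abs_pow]
        refine pow_le_one₀ (abs_nonneg _) ?_
        have ht1 : 0 ≤ h⁻¹ * (t - a) := by
          have : 0 ≤ t - a := by linarith [ht.1]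
          positivity
        have ht2 : h⁻¹ * (t - a) ≤ 1 := by
          rw [inv_mul_le_iff₀ hpos]
          have h3 : t ≤ b := ht.2
          rw [hh]; linarith
        rw [abs_of_nonneg ht1]; exact ht2
      calc |F t - T.eval t| * |(h⁻¹ * (t - a))^j| ≤ δ * 1 :=
        mul_le_mul h1 h2 (abs_nonneg _) hδ0
        _ = δ := mul_one δ
  rw [abs_mul, abs_of_pos (inv_pos.mpr hpos)]
  calc h⁻¹ * |∫ t in a..b, (F t - T.eval t) * (h⁻¹ * (t - a))^j| ≤ h⁻¹ * (δ * h) :=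
      mul_le_mul_of_nonneg_left key3 (inv_pos.mpr hpos).le
    _ = δ := by field_simp

/-- Common conclusion given scaled stability for rhat. -/
lemma my_cell_core (k : ℕ) (Cst : ℝ) (F : ℝ → ℝ) (T p : Polynomial ℝ) (a b δ : ℝ)
    (hab : a < b)
    (hTb : ∀ t ∈ Icc a b, |F t - T.eval t| ≤ δ)
    (hstab : ∀ s ∈ Icc (0:ℝ) 1,
      |((p - T).comp (Polynomial.C a + Polynomial.C (b-a) * Polynomial.X)).eval s| ≤ Cst * δ) :
    ∀ t ∈ Icc a b, |F t - p.eval t| ≤ (1 + Cst) * δ := by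
  intro t ht
  set h : ℝ := b - a with hh
  have hpos : 0 < h := by rw [hh]; linarith
  set s : ℝ := h⁻¹ * (t - a) with hs
  have hs01 : s ∈ Icc (0:ℝ) 1 := by
    constructor
    · have : 0 ≤ t - a := by linarith [ht.1]
      positivity
    · rw [hs, inv_mul_le_iff₀ hpos]
      have := ht.2
      rw [hh]; linarith
  have hr : ((p - T).comp (Polynomial.C a + Polynomial.C h * Polynomial.X)).eval s
      = (p - T).eval t := by
    rw [Polynomial.eval_comp]
    simp only [Polynomial.eval_add, Polynomial.eval_mul, Polynomial.eval_C, Polynomial.eval_X]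
    congr 1
    rw [hs]
    field_simp
    ring
  have h1 := hstab s hs01
  rw [hr] at h1
  have h2 := hTb t ht
  have e : F t - p.eval t = (F t - T.eval t) - (p - T).eval t := by
    rw [Polynomial.eval_sub]; ring
  rw [e]
  calc |(F t - T.eval t) - (p - T).eval t| ≤ |F t - T.eval t| + |(p - T).eval t| := abs_sub _ _
    _ ≤ δ + Cst * δ := add_le_add h2 h1
    _ = (1 + Cst) * δ := by ring

lemma my_rhat_deg (k : ℕ) (p T : Polynomial ℝ) (hpd : p.natDegree ≤ k) (hTd : T.natDegree ≤ k)
    (a h : ℝ) :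
    ((p - T).comp (Polynomial.C a + Polynomial.C h * Polynomial.X)).natDegree ≤ k ∧
    (p - T).natDegree ≤ k := by
  have hrd : (p - T).natDegree ≤ k :=
    le_trans (Polynomial.natDegree_sub_le p T) (max_le hpd hTd)
  refine ⟨?_, hrd⟩
  refine le_trans Polynomial.natDegree_comp_le ?_
  have h1 : (Polynomial.C a + Polynomial.C h * Polynomial.X).natDegree ≤ 1 := by
    refine le_trans (Polynomial.natDegree_add_le _ _) ?_
    simp [Polynomial.natDegree_C]
    exact le_trans (Polynomial.natDegree_C_mul_le _ _) (le_of_eq Polynomial.natDegree_X)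
  calc (p - T).natDegree * (Polynomial.C a + Polynomial.C h * Polynomial.X).natDegree
      ≤ k * 1 := Nat.mul_le_mul hrd h1
    _ = k := mul_one k

lemma my_cell_l2 (k : ℕ) (CL : ℝ)
    (hstab : ∀ (r : Polynomial ℝ), r.natDegree ≤ k → ∀ δ : ℝ,
      (∀ j, j ≤ k → |∫ s in (0:ℝ)..1, r.eval s * s ^ j| ≤ δ) →
      ∀ s ∈ Icc (0:ℝ) 1, |r.eval s| ≤ CL * δ)
    (F : ℝ → ℝ) (hF : ContDiff ℝ ((k+1:ℕ):ℕ∞) F) (a b M : ℝ) (hab : a < b)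
    (hM : ∀ t ∈ Icc a b, |iteratedDeriv (k+1) F t| ≤ M)
    (p : Polynomial ℝ) (hpd : p.natDegree ≤ k)
    (hproj : ∀ v : Polynomial ℝ, v.degree ≤ (k : WithBot ℕ) →
      ∫ t in a..b, p.eval t * v.eval t = ∫ t in a..b, F t * v.eval t) :
    ∀ t ∈ Icc a b, |F t - p.eval t| ≤
      (1 + CL) * (M * (b-a)^(k+1) / ((k+1).factorial : ℝ)) := by
  obtain ⟨T, hTd, hTb⟩ := my_taylor F k hF a b M hab hM
  set δ : ℝ := M * (b-a)^(k+1) / ((k+1).factorial : ℝ) with hδ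
  obtain ⟨hrhatd, hrd⟩ := my_rhat_deg k p T hpd hTd a (b - a)
  have hmom : ∀ j, j ≤ k → |∫ s in (0:ℝ)..1,
      ((p - T).comp (Polynomial.C a + Polynomial.C (b-a) * Polynomial.X)).eval s * s^j| ≤ δ := by
    intro j hj
    refine my_scaled_moment j F hF.continuous T p a b δ hab hTb ?_
    refine hproj _ (le_trans (my_vdeg a (b-a) j) ?_)
    exact_mod_cast hj
  exact my_cell_core k CL F T p a b δ hab hTb (hstab _ hrhatd δ hmom)

lemma my_cell_gr (k : ℕ) (hk : 1 ≤ k) (CG : ℝ)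
    (hstab : ∀ (r : Polynomial ℝ), r.natDegree ≤ k → ∀ δ : ℝ, |r.eval 0| ≤ δ →
      (∀ j, j < k → |∫ s in (0:ℝ)..1, r.eval s * s ^ j| ≤ δ) →
      ∀ s ∈ Icc (0:ℝ) 1, |r.eval s| ≤ CG * δ)
    (F : ℝ → ℝ) (hF : ContDiff ℝ ((k+1:ℕ):ℕ∞) F) (a b M : ℝ) (hab : a < b)
    (hM : ∀ t ∈ Icc a b, |iteratedDeriv (k+1) F t| ≤ M)
    (p : Polynomial ℝ) (hpd : p.natDegree ≤ k)
    (hproj : ∀ v : Polynomial ℝ, v.degree ≤ ((k - 1 : ℕ) : WithBot ℕ) →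
      ∫ t in a..b, p.eval t * v.eval t = ∫ t in a..b, F t * v.eval t)
    (hpa : p.eval a = F a) :
    ∀ t ∈ Icc a b, |F t - p.eval t| ≤
      (1 + CG) * (M * (b-a)^(k+1) / ((k+1).factorial : ℝ)) := by
  obtain ⟨T, hTd, hTb⟩ := my_taylor F k hF a b M hab hM
  set δ : ℝ := M * (b-a)^(k+1) / ((k+1).factorial : ℝ) with hδ
  obtain ⟨hrhatd, hrd⟩ := my_rhat_deg k p T hpd hTd a (b - a)
  have hmom : ∀ j, j < k → |∫ s in (0:ℝ)..1,
      ((p - T).comp (Polynomial.C a + Polynomial.C (b-a) * Polynomial.X)).eval s * s^j| ≤ δ := by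
    intro j hj
    refine my_scaled_moment j F hF.continuous T p a b δ hab hTb ?_
    refine hproj _ (le_trans (my_vdeg a (b-a) j) ?_)
    have : j ≤ k - 1 := by omega
    exact_mod_cast this
  have h0 : |((p - T).comp (Polynomial.C a + Polynomial.C (b-a) * Polynomial.X)).eval 0| ≤ δ := by
    have he : ((p - T).comp (Polynomial.C a + Polynomial.C (b-a) * Polynomial.X)).eval 0
        = F a - T.eval a := by
      rw [Polynomial.eval_comp]
      simp only [Polynomial.eval_add, Polynomial.eval_mul, Polynomial.eval_C, Polynomial.eval_X,
        mul_zero, add_zero]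
      rw [Polynomial.eval_sub, hpa]
    rw [he]
    exact hTb a ⟨le_refl a, hab.le⟩
  exact my_cell_core k CG F T p a b δ hab hTb (hstab _ hrhatd δ h0 hmom)

lemma my_mesh (σ β ε : ℝ) (hσ : 0 < σ) (hβ : 0 < β) (hε : 0 < ε)
    (N : ℕ) (hN4 : 4 ≤ N) (m : ℕ) (hm : N = 4 * m) (τ : ℝ)
    (hτ : τ = σ * Real.sqrt ε * Real.log N / β) (hτ4 : τ ≤ 1 / 4) (x : ℕ → ℝ)
    (hx : ∀ i : ℕ, i ≤ N → x i =
      if i ≤ N / 4 then 4 * (σ * Real.sqrt ε / β) * ((i : ℝ) / N) * Real.log N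
      else if i ≤ 3 * N / 4 then τ + 2 * (1 - 2 * τ) * ((i : ℝ) / N - 1 / 4)
      else 1 - 4 * (σ * Real.sqrt ε / β) * (1 - (i : ℝ) / N) * Real.log N)
    (i : ℕ) (hi : (1 ≤ i ∧ i ≤ N / 4) ∨ (3 * N / 4 + 1 ≤ i ∧ i ≤ N)) :
    x i - x (i - 1) = 4 * (σ * Real.sqrt ε / β) * Real.log N / N
      ∧ 0 ≤ x (i - 1) ∧ x i ≤ 1 := by
  have hm1 : 1 ≤ m := by omega
  have nd1 : N / 4 = m := by omega
  have nd3 : 3 * N / 4 = 3 * m := by omega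
  have hNR : (0:ℝ) < (N:ℝ) := by exact_mod_cast (by omega : 0 < N)
  have hlog : 0 < Real.log N := Real.log_pos (by exact_mod_cast (by omega : 1 < N))
  have hsq : 0 < Real.sqrt ε := Real.sqrt_pos.mpr hε
  set A : ℝ := 4 * (σ * Real.sqrt ε / β) with hA
  have hA0 : 0 < A := by rw [hA]; positivity
  have hτA : τ = A * Real.log N / 4 := by rw [hτ, hA]; ring
  have hNm : (N:ℝ) = 4 * (m:ℝ) := by exact_mod_cast congrArg (Nat.cast : ℕ → ℝ) hm
  rcases hi with ⟨hi1, hi2⟩ | ⟨hi1, hi2⟩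
  · -- left region
    rw [nd1] at hi2
    have hiN : i ≤ N := by omega
    have hi1N : i - 1 ≤ N := by omega
    have hxi : x i = A * ((i:ℝ) / N) * Real.log N := by
      rw [hx i hiN, if_pos (by omega)]
    have hxi1 : x (i-1) = A * (((i-1:ℕ):ℝ) / N) * Real.log N := by
      rw [hx (i-1) hi1N, if_pos (by omega)]
    have hc : ((i-1:ℕ):ℝ) = (i:ℝ) - 1 := by
      push_cast [Nat.cast_sub hi1]; ring
    refine ⟨?_, ?_, ?_⟩
    · rw [hxi, hxi1, hc]; field_simp; ring
    · rw [hxi1]; positivity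
    · rw [hxi]
      have hi4 : (i:ℝ) / N ≤ 1/4 := by
        rw [div_le_iff₀ hNR, hNm]
        have : (i:ℝ) ≤ (m:ℝ) := by exact_mod_cast hi2
        linarith
      have : A * ((i:ℝ)/N) * Real.log N ≤ A * (1/4) * Real.log N := by
        have h1 : A * ((i:ℝ)/N) ≤ A * (1/4) := mul_le_mul_of_nonneg_left hi4 hA0.le
        exact mul_le_mul_of_nonneg_right h1 hlog.le
      have hτle : A * (1/4) * Real.log N = τ := by rw [hτA]; ring
      linarith [hτ4]
  · -- right region
    rw [nd3] at hi1
    have hiN : i ≤ N := hi2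
    have hi1N : i - 1 ≤ N := by omega
    have hxi : x i = 1 - A * (1 - (i:ℝ) / N) * Real.log N := by
      rw [hx i hiN, if_neg (by omega), if_neg (by omega)]
    have hiiN : (i:ℝ) ≤ (N:ℝ) := by exact_mod_cast hi2
    have hxib : x i ≤ 1 := by
      rw [hxi]
      have h1 : 0 ≤ 1 - (i:ℝ)/N := by
        rw [sub_nonneg, div_le_one hNR]; exact hiiN
      nlinarith [hlog.le, hA0.le, mul_nonneg (mul_nonneg hA0.le h1) hlog.le]
    by_cases hcase : i = 3 * m + 1
    · -- first cell of right region
      have hxi1 : x (i-1) = τ + 2 * (1 - 2*τ) * (((i-1:ℕ):ℝ) / N - 1/4) := by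
        rw [hx (i-1) hi1N, if_neg (by omega), if_pos (by omega)]
      have hc : ((i-1:ℕ):ℝ) = 3 * (m:ℝ) := by
        have : i - 1 = 3 * m := by omega
        rw [this]; push_cast; ring
      have hval : x (i-1) = 1 - τ := by
        rw [hxi1, hc, hNm]
        have hm0 : (0:ℝ) < (m:ℝ) := by exact_mod_cast hm1
        field_simp
        ring
      have hic : (i:ℝ) = 3 * (m:ℝ) + 1 := by rw [hcase]; push_cast; ring
      refine ⟨?_, ?_, hxib⟩
      · rw [hxi, hval, hic, hτA, hNm]
        have hm0 : (0:ℝ) < (m:ℝ) := by exact_mod_cast hm1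
        field_simp
        ring
      · rw [hval]; linarith [hτ4]
    · -- interior cells of right region
      have hi1b : 3 * m + 1 ≤ i - 1 := by omega
      have hxi1 : x (i-1) = 1 - A * (1 - ((i-1:ℕ):ℝ) / N) * Real.log N := by
        rw [hx (i-1) hi1N, if_neg (by omega), if_neg (by omega)]
      have hc : ((i-1:ℕ):ℝ) = (i:ℝ) - 1 := by
        push_cast [Nat.cast_sub (by omega : 1 ≤ i)]; ring
      refine ⟨?_, ?_, hxib⟩
      · rw [hxi, hxi1, hc]; field_simp; ring
      · rw [hxi1, hc]
        have h34 : (3:ℝ)/4 ≤ ((i:ℝ)-1) / N := by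
          rw [le_div_iff₀ hNR, hNm]
          have : (3*m+1 : ℝ) ≤ (i:ℝ) - 1 := by
            have : (3*m+1 : ℕ) ≤ i - 1 := hi1b
            have h5 : ((3*m+1 : ℕ):ℝ) ≤ ((i - 1 : ℕ):ℝ) := by exact_mod_cast this
            rw [hc] at h5; push_cast at h5; linarith
          linarith
        have h2 : 1 - ((i:ℝ)-1)/N ≤ 1/4 := by linarith
        have h3 : A * (1 - ((i:ℝ)-1)/N) * Real.log N ≤ A * (1/4) * Real.log N := by
          have := mul_le_mul_of_nonneg_left h2 hA0.le
          exact mul_le_mul_of_nonneg_right this hlog.le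
        have hτle : A * (1/4) * Real.log N = τ := by rw [hτA]; ring
        have : A * (1 - ((i:ℝ)-1)/N) * Real.log N ≤ τ := by linarith
        linarith [hτ4]

lemma my_itd_add (n : ℕ) (f g : ℝ → ℝ) (hf : ContDiff ℝ (n:ℕ∞) f) (hg : ContDiff ℝ (n:ℕ∞) g)
    (x : ℝ) : iteratedDeriv n (fun t => f t + g t) x = iteratedDeriv n f x + iteratedDeriv n g x := by
  rw [← iteratedDerivWithin_univ, ← iteratedDerivWithin_univ, ← iteratedDerivWithin_univ]
  exact iteratedDerivWithin_add (mem_univ x) uniqueDiffOn_univ hf.contDiffWithinAt hg.contDiffWithinAt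

set_option maxHeartbeats 1000000 in
theorem projection_error_q_Linfty_layer_region
    (k : ℕ) (hk : 1 ≤ k) (β σ C₀ C₁ : ℝ)
    (hβ : 0 < β) (hσ : (k : ℝ) + 1 ≤ σ) (hC₀ : 0 < C₀) (hC₁ : 0 < C₁) :
    ∃ C : ℝ, 0 < C ∧
      ∀ (N : ℕ) (ε τ : ℝ) (x : ℕ → ℝ) (q qbar q1 q2 Pq : ℝ → ℝ),
        4 ≤ N → 4 ∣ N → 0 < ε → ε ≤ 1 → ε ≤ C₁ / N →
        τ = σ * Real.sqrt ε * Real.log N / β → τ ≤ 1 / 4 →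
        (∀ i : ℕ, i ≤ N → x i =
          if i ≤ N / 4 then 4 * (σ * Real.sqrt ε / β) * ((i : ℝ) / N) * Real.log N
          else if i ≤ 3 * N / 4 then τ + 2 * (1 - 2 * τ) * ((i : ℝ) / N - 1 / 4)
          else 1 - 4 * (σ * Real.sqrt ε / β) * (1 - (i : ℝ) / N) * Real.log N) →
        ContDiff ℝ ((k + 1 : ℕ) : ℕ∞) qbar →
        ContDiff ℝ ((k + 1 : ℕ) : ℕ∞) q1 →
        ContDiff ℝ ((k + 1 : ℕ) : ℕ∞) q2 →
        (∀ t ∈ Set.Icc (0 : ℝ) 1, q t = qbar t + q1 t + q2 t) →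
        (∀ i : ℕ, i ≤ k + 1 → ∀ t ∈ Set.Icc (0 : ℝ) 1,
          |iteratedDeriv i qbar t| ≤ C₀ * ε) →
        (∀ i : ℕ, i ≤ k + 1 → ∀ t ∈ Set.Icc (0 : ℝ) 1,
          |iteratedDeriv i q1 t| ≤
            C₀ * ε ^ (-((i : ℝ) - 1) / 2) * Real.exp (-β * t / Real.sqrt ε)) →
        (∀ i : ℕ, i ≤ k + 1 → ∀ t ∈ Set.Icc (0 : ℝ) 1,
          |iteratedDeriv i q2 t| ≤
            C₀ * ε ^ (-((i : ℝ) - 1) / 2) * Real.exp (-β * (1 - t) / Real.sqrt ε)) →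
        (∀ i : ℕ, 1 ≤ i → i ≤ N →
          ∃ p : Polynomial ℝ, p.degree ≤ (k : WithBot ℕ) ∧
            (∀ t ∈ Set.Ioo (x (i - 1)) (x i), Pq t = p.eval t) ∧
            (if i = 1 then
              -- local L² projection π on the first cell
              (∀ v : Polynomial ℝ, v.degree ≤ (k : WithBot ℕ) →
                ∫ t in x (i - 1)..x i, p.eval t * v.eval t =
                  ∫ t in x (i - 1)..x i, q t * v.eval t)
            else
              -- Gauß–Radau projection π⁺ on the remaining cells
              (∀ v : Polynomial ℝ, v.degree ≤ ((k - 1 : ℕ) : WithBot ℕ) →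
                ∫ t in x (i - 1)..x i, p.eval t * v.eval t =
                  ∫ t in x (i - 1)..x i, q t * v.eval t) ∧
              p.eval (x (i - 1)) = q (x (i - 1)))) →
        ∀ i : ℕ, (1 ≤ i ∧ i ≤ N / 4) ∨ (3 * N / 4 + 1 ≤ i ∧ i ≤ N) →
          ∀ t ∈ Set.Ioo (x (i - 1)) (x i),
            |q t - Pq t| ≤
              C * Real.sqrt ε * ((N : ℝ)⁻¹ * Real.log N) ^ (k + 1) := by
  obtain ⟨CL, hCL0, hCLb⟩ := my_stab_l2 k
  obtain ⟨CG, hCG0, hCGb⟩ := my_stab_gr k hk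
  set Cm : ℝ := max CL CG with hCm
  have hCm0 : 0 < 1 + Cm := by
    have := lt_of_lt_of_le hCL0 (le_max_left CL CG); linarith
  have hσ0 : (0:ℝ) < σ := lt_of_lt_of_le (by positivity) hσ
  set C : ℝ := (1 + Cm) * (3 * C₀) * (4*σ/β)^(k+1) / ((k+1).factorial : ℝ) with hC
  have hC0 : 0 < C := by
    apply div_pos
    · exact mul_pos (mul_pos hCm0 (by linarith)) (pow_pos (by positivity) _)
    · positivity
  refine ⟨C, hC0, ?_⟩
  intro N ε τ x q qbar q1 q2 Pq hN4 hdvd hε hε1 hεC₁ hτ hτ4 hx hcqbar hcq1 hcq2 hq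
    hbqbar hbq1 hbq2 hproj i hi t ht
  obtain ⟨m, hm⟩ := hdvd
  have hNR : (0:ℝ) < (N:ℝ) := by exact_mod_cast (by omega : 0 < N)
  have hlog : 0 < Real.log N := Real.log_pos (by exact_mod_cast (by omega : 1 < N))
  have hsq : 0 < Real.sqrt ε := Real.sqrt_pos.mpr hε
  obtain ⟨hlen, h0a, hb1⟩ := my_mesh σ β ε hσ0 hβ hε N hN4 m hm τ hτ hτ4 x hx i hi
  set a : ℝ := x (i-1) with ha
  set b : ℝ := x i with hb
  have hab : a < b := by
    have : 0 < b - a := by rw [hlen]; positivity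
    linarith
  have hsub01 : Icc a b ⊆ Icc (0:ℝ) 1 := fun u hu => ⟨le_trans h0a hu.1, le_trans hu.2 hb1⟩
  set F : ℝ → ℝ := fun u => qbar u + q1 u + q2 u with hF
  have hFc : ContDiff ℝ ((k+1:ℕ):ℕ∞) F := (hcqbar.add hcq1).add hcq2
  have hqF : ∀ u ∈ Icc (0:ℝ) 1, q u = F u := hq
  set Mv : ℝ := 3 * C₀ * ε ^ (-(k:ℝ)/2) with hMv
  have hrp0 : (0:ℝ) < ε ^ (-(k:ℝ)/2) := Real.rpow_pos_of_pos hε _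
  have hMb : ∀ u ∈ Icc (0:ℝ) 1, |iteratedDeriv (k+1) F u| ≤ Mv := by
    intro u hu
    have e : iteratedDeriv (k+1) F u = iteratedDeriv (k+1) (fun t => qbar t + q1 t) u
        + iteratedDeriv (k+1) q2 u := my_itd_add (k+1) _ q2 (hcqbar.add hcq1) hcq2 u
    have e2 : iteratedDeriv (k+1) (fun t => qbar t + q1 t) u
        = iteratedDeriv (k+1) qbar u + iteratedDeriv (k+1) q1 u :=
      my_itd_add (k+1) qbar q1 hcqbar hcq1 u
    have hexpo : -(((k+1:ℕ):ℝ) - 1)/2 = -(k:ℝ)/2 := by push_cast; ring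
    have h1 : |iteratedDeriv (k+1) qbar u| ≤ C₀ * ε ^ (-(k:ℝ)/2) := by
      refine le_trans (hbqbar (k+1) le_rfl u hu) ?_
      have hle : ε ^ (1:ℝ) ≤ ε ^ (-(k:ℝ)/2) := by
        refine Real.rpow_le_rpow_of_exponent_ge hε hε1 ?_
        have : (0:ℝ) ≤ (k:ℝ) := Nat.cast_nonneg k
        linarith
      rw [Real.rpow_one] at hle
      exact mul_le_mul_of_nonneg_left hle hC₀.le
    have h2 : |iteratedDeriv (k+1) q1 u| ≤ C₀ * ε ^ (-(k:ℝ)/2) := by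
      have := hbq1 (k+1) le_rfl u hu
      rw [hexpo] at this
      refine le_trans this ?_
      have hexp : Real.exp (-β * u / Real.sqrt ε) ≤ 1 := by
        rw [Real.exp_le_one_iff]
        apply div_nonpos_of_nonpos_of_nonneg
        · nlinarith [hu.1]
        · exact hsq.le
      have hstep : C₀ * ε ^ (-(k:ℝ)/2) * Real.exp (-β * u / Real.sqrt ε)
          ≤ C₀ * ε ^ (-(k:ℝ)/2) * 1 :=
        mul_le_mul_of_nonneg_left hexp (mul_nonneg hC₀.le hrp0.le)
      rw [mul_one] at hstep; exact hstep
    have h3 : |iteratedDeriv (k+1) q2 u| ≤ C₀ * ε ^ (-(k:ℝ)/2) := by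
      have := hbq2 (k+1) le_rfl u hu
      rw [hexpo] at this
      refine le_trans this ?_
      have hexp : Real.exp (-β * (1 - u) / Real.sqrt ε) ≤ 1 := by
        rw [Real.exp_le_one_iff]
        apply div_nonpos_of_nonpos_of_nonneg
        · nlinarith [hu.2]
        · exact hsq.le
      have hstep : C₀ * ε ^ (-(k:ℝ)/2) * Real.exp (-β * (1 - u) / Real.sqrt ε)
          ≤ C₀ * ε ^ (-(k:ℝ)/2) * 1 :=
        mul_le_mul_of_nonneg_left hexp (mul_nonneg hC₀.le hrp0.le)
      rw [mul_one] at hstep; exact hstep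
    rw [e, e2, hMv]
    calc |iteratedDeriv (k+1) qbar u + iteratedDeriv (k+1) q1 u + iteratedDeriv (k+1) q2 u|
        ≤ |iteratedDeriv (k+1) qbar u + iteratedDeriv (k+1) q1 u| + |iteratedDeriv (k+1) q2 u| :=
          abs_add_le _ _
      _ ≤ (|iteratedDeriv (k+1) qbar u| + |iteratedDeriv (k+1) q1 u|)
          + |iteratedDeriv (k+1) q2 u| := by linarith [abs_add_le (iteratedDeriv (k+1) qbar u) (iteratedDeriv (k+1) q1 u)]
      _ ≤ 3 * C₀ * ε ^ (-(k:ℝ)/2) := by linarith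
  have hM : ∀ u ∈ Icc a b, |iteratedDeriv (k+1) F u| ≤ Mv := fun u hu => hMb u (hsub01 hu)
  have hiN : 1 ≤ i ∧ i ≤ N := by
    rcases hi with ⟨h1, h2⟩ | ⟨h1, h2⟩ <;> constructor <;> omega
  obtain ⟨p, hpdeg, hPq, hcond⟩ := hproj i hiN.1 hiN.2
  have hpd : p.natDegree ≤ k := Polynomial.natDegree_le_iff_degree_le.mpr hpdeg
  have hconv : ∀ v : Polynomial ℝ, (∫ u in a..b, q u * v.eval u) = ∫ u in a..b, F u * v.eval u := by
    intro v
    refine intervalIntegral.integral_congr fun u hu => ?_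
    rw [Set.uIcc_of_le hab.le] at hu
    rw [hqF u (hsub01 hu)]
  have hδ0 : 0 ≤ Mv * (b-a)^(k+1) / ((k+1).factorial : ℝ) := by
    have hba : 0 < b - a := by linarith
    have : 0 < Mv := by rw [hMv]; positivity
    positivity
  have hcell : ∀ u ∈ Icc a b, |F u - p.eval u| ≤
      (1 + Cm) * (Mv * (b-a)^(k+1) / ((k+1).factorial : ℝ)) := by
    by_cases hi1 : i = 1
    · rw [if_pos hi1] at hcond
      have hc := my_cell_l2 k CL hCLb F hFc a b Mv hab hM p hpd
        (fun v hv => by rw [hcond v hv, hconv v])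
      intro u hu
      refine le_trans (hc u hu) ?_
      have hle : CL ≤ Cm := le_max_left CL CG
      nlinarith [hδ0]
    · rw [if_neg hi1] at hcond
      obtain ⟨hmomc, hendc⟩ := hcond
      have hqa : q a = F a := hqF a (hsub01 ⟨le_refl a, hab.le⟩)
      have hc := my_cell_gr k hk CG hCGb F hFc a b Mv hab hM p hpd
        (fun v hv => by rw [hmomc v hv, hconv v]) (by rw [hendc, hqa])
      intro u hu
      refine le_trans (hc u hu) ?_
      have hle : CG ≤ Cm := le_max_right CL CG
      nlinarith [hδ0]
  have htIcc : t ∈ Icc a b := ⟨ht.1.le, ht.2.le⟩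
  have hqt : q t = F t := hqF t (hsub01 htIcc)
  have hPqt : Pq t = p.eval t := hPq t ht
  rw [hqt, hPqt]
  -- final arithmetic
  have e1 : b - a = (4*σ/β) * Real.sqrt ε * ((N:ℝ)⁻¹ * Real.log N) := by
    rw [hlen, div_eq_mul_inv, div_eq_mul_inv, div_eq_mul_inv]; ring
  have e2 : ε ^ (-(k:ℝ)/2) * (Real.sqrt ε)^(k+1) = Real.sqrt ε := by
    rw [Real.sqrt_eq_rpow, ← Real.rpow_natCast (ε ^ ((1:ℝ)/2)) (k+1), ← Real.rpow_mul hε.le,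
      ← Real.rpow_add hε]
    congr 1
    push_cast; ring
  have key : Mv * (b-a)^(k+1)
      = 3*C₀*(4*σ/β)^(k+1) * (Real.sqrt ε * ((N:ℝ)⁻¹ * Real.log N)^(k+1)) := by
    rw [e1, mul_pow, mul_pow, hMv]
    calc 3 * C₀ * ε ^ (-(k:ℝ)/2) * ((4*σ/β)^(k+1) * (Real.sqrt ε)^(k+1)
          * ((N:ℝ)⁻¹ * Real.log N)^(k+1))
        = 3 * C₀ * (4*σ/β)^(k+1) * ((ε ^ (-(k:ℝ)/2) * (Real.sqrt ε)^(k+1))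
          * ((N:ℝ)⁻¹ * Real.log N)^(k+1)) := by ring
      _ = _ := by rw [e2]
  have final : (1 + Cm) * (Mv * (b-a)^(k+1) / ((k+1).factorial : ℝ))
      = C * Real.sqrt ε * ((N:ℝ)⁻¹ * Real.log N)^(k+1) := by
    have h2' : (1 + Cm) * (Mv * (b-a)^(k+1) / ((k+1).factorial : ℝ))
        = (1 + Cm) * (Mv * (b-a)^(k+1)) / ((k+1).factorial : ℝ) := by ring
    rw [h2', key, hC]; ring
  exact (hcell t htIcc).trans (le_of_eq final)
end

section
/- There exists a constant C > 0 depending only on C₀, C₁, β, σ and k (independent of ε and N) such that ‖q - P_N⁺ q‖_{L∞(I_i)} ≤ C (ε N^{-(k+1)} + ε^{1/2} N^{-σ}) for every i ∈ {N/4+1, …, 3N/4}. -/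
open Set MeasureTheory intervalIntegral Polynomial Nat

lemma itdw_eq {f : ℝ → ℝ} {n m : ℕ} (hf : ContDiff ℝ (n : ℕ∞) f) (hm : m ≤ n)
    {s : Set ℝ} (hs : UniqueDiffOn ℝ s) {x : ℝ} (hx : x ∈ s) :
    iteratedDerivWithin m f s x = iteratedDeriv m f x := by
  rw [iteratedDerivWithin_eq_iteratedFDerivWithin, iteratedDeriv_eq_iteratedFDeriv]
  have h1 : HasFTaylorSeriesUpToOn (n : ℕ∞) f (ftaylorSeries ℝ f) univ := by
    rw [← ftaylorSeriesWithin_univ]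
    exact (hf.contDiffOn).ftaylorSeriesWithin uniqueDiffOn_univ
  have h2 := (h1.mono (subset_univ s)).eq_iteratedFDerivWithin_of_uniqueDiffOn
    (by exact_mod_cast hm) hs hx
  rw [← h2]; rfl

noncomputable def Tpoly (k : ℕ) (f : ℝ → ℝ) (a : ℝ) : Polynomial ℝ :=
  ∑ j ∈ Finset.range (k + 1), C ((j ! : ℝ)⁻¹ * iteratedDeriv j f a) * (X - C a) ^ j

lemma Tpoly_natDegree (k : ℕ) (f : ℝ → ℝ) (a : ℝ) : (Tpoly k f a).natDegree ≤ k := by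
  refine (Polynomial.natDegree_sum_le _ _).trans ?_
  refine (Finset.fold_max_le _).mpr ⟨Nat.zero_le _, fun j hj => ?_⟩
  calc (C ((j ! : ℝ)⁻¹ * iteratedDeriv j f a) * (X - C a) ^ j).natDegree
      ≤ (C ((j ! : ℝ)⁻¹ * iteratedDeriv j f a)).natDegree + ((X - C a : Polynomial ℝ) ^ j).natDegree :=
        natDegree_mul_le
    _ ≤ k := by
        rw [natDegree_C, natDegree_pow, natDegree_X_sub_C, zero_add, mul_one]
        exact Nat.le_of_lt_succ (Finset.mem_range.mp hj)

lemma Tpoly_eval (k : ℕ) (f : ℝ → ℝ) (a t : ℝ) :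
    (Tpoly k f a).eval t =
      ∑ j ∈ Finset.range (k + 1), (j ! : ℝ)⁻¹ * (t - a) ^ j * iteratedDeriv j f a := by
  rw [Tpoly, Polynomial.eval_finset_sum]
  refine Finset.sum_congr rfl fun j _ => ?_
  simp [mul_comm, mul_assoc, mul_left_comm]

lemma taylor_poly_bound {k : ℕ} {f : ℝ → ℝ} (hf : ContDiff ℝ ((k + 1 : ℕ) : ℕ∞) f)
    {a t D : ℝ} (hat : a ≤ t) (hD : ∀ s ∈ Icc a t, |iteratedDeriv (k + 1) f s| ≤ D) :
    |f t - (Tpoly k f a).eval t| ≤ D * (t - a) ^ (k + 1) / (k + 1)! := by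
  have hD0 : 0 ≤ D := le_trans (abs_nonneg _) (hD a ⟨le_refl a, hat⟩)
  rcases eq_or_lt_of_le hat with rfl | hlt
  · rw [Tpoly_eval, Finset.sum_range_succ']
    simp
  · have huD : UniqueDiffOn ℝ (Icc a t) := uniqueDiffOn_Icc hlt
    have hcd : ContDiffOn ℝ (k : ℕ∞) f (Icc a t) :=
      (hf.of_le (by exact_mod_cast Nat.le_succ k)).contDiffOn
    have hdiff : DifferentiableOn ℝ (iteratedDerivWithin k f (Icc a t)) (Ioo a t) := by
      have hd : Differentiable ℝ (iteratedDeriv k f) :=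
        hf.differentiable_iteratedDeriv k (by exact_mod_cast Nat.lt_succ_self k)
      exact (hd.differentiableOn).congr fun y hy =>
        itdw_eq hf (Nat.le_succ k) huD (Ioo_subset_Icc_self hy)
    have hTL := taylor_mean_remainder_lagrange hlt.ne (by rw [uIcc_of_le hat]; exact hcd)
      (by rw [uIcc_of_le hat, uIoo_of_le hat]; exact hdiff)
    rw [uIcc_of_le hat, uIoo_of_le hat] at hTL
    obtain ⟨x', hx', hrem⟩ := hTL
    have htay : taylorWithinEval f k (Icc a t) a t = (Tpoly k f a).eval t := by
      rw [taylor_within_apply, Tpoly_eval]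
      refine Finset.sum_congr rfl fun j hj => ?_
      rw [itdw_eq hf (Nat.le_of_lt_succ (Finset.mem_range.mp hj) |>.trans (Nat.le_succ k)) huD
        ⟨le_refl a, hat⟩]
      simp only [smul_eq_mul]
    rw [← htay, hrem, itdw_eq hf (le_refl (k + 1)) huD (Ioo_subset_Icc_self hx')]
    rw [abs_div, abs_mul, abs_pow]
    rw [abs_of_nonneg (by positivity : (0:ℝ) ≤ ((k+1)! : ℝ))]
    apply div_le_div_of_nonneg_right ?_ (by positivity)
    rw [abs_of_pos (sub_pos.mpr hlt)]
    exact mul_le_mul_of_nonneg_right (hD x' (Ioo_subset_Icc_self hx')) (pow_nonneg (sub_nonneg.mpr hat) _)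

noncomputable def Mmat (k : ℕ) : Matrix (Fin (k+1)) (Fin (k+1)) ℝ :=
  fun j m => if (j : ℕ) < k then (((m : ℕ) : ℝ) + (j : ℕ) + 1)⁻¹ else if m = 0 then 1 else 0

noncomputable def rpol {k : ℕ} (c : Fin (k+1) → ℝ) : Polynomial ℝ :=
  ∑ m : Fin (k+1), C (c m) * X ^ (m : ℕ)

lemma rpol_eval {k : ℕ} (c : Fin (k+1) → ℝ) (s : ℝ) :
    (rpol c).eval s = ∑ m : Fin (k+1), c m * s ^ (m : ℕ) := by
  rw [rpol, Polynomial.eval_finset_sum]; simp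

lemma rpol_coeff {k : ℕ} (c : Fin (k+1) → ℝ) (m : Fin (k+1)) :
    (rpol c).coeff (m : ℕ) = c m := by
  rw [rpol, Polynomial.finset_sum_coeff]
  simp only [Polynomial.coeff_C_mul, Polynomial.coeff_X_pow]
  rw [Finset.sum_eq_single m]
  · simp
  · intro b _ hb
    have : (m : ℕ) ≠ (b : ℕ) := fun h => hb (Fin.ext h.symm)
    simp [this]
  · simp

lemma rpol_natDegree {k : ℕ} (c : Fin (k+1) → ℝ) : (rpol c).natDegree ≤ k := by
  refine (Polynomial.natDegree_sum_le _ _).trans ?_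
  refine (Finset.fold_max_le _).mpr ⟨Nat.zero_le _, fun m _ => ?_⟩
  calc (C (c m) * X ^ (m : ℕ)).natDegree
      ≤ (C (c m)).natDegree + ((X : Polynomial ℝ) ^ (m : ℕ)).natDegree := natDegree_mul_le
    _ ≤ k := by
        rw [natDegree_C, natDegree_pow, natDegree_X, zero_add, mul_one]
        exact Nat.le_of_lt_succ m.isLt

lemma integral_eval_mul_pow {k : ℕ} (c : Fin (k+1) → ℝ) (j : ℕ) :
    ∫ s in (0:ℝ)..1, (rpol c).eval s * s ^ j =
      ∑ m : Fin (k+1), (((m : ℕ) : ℝ) + j + 1)⁻¹ * c m := by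
  have : ∀ s : ℝ, (rpol c).eval s * s ^ j
      = ∑ m : Fin (k+1), c m * s ^ ((m : ℕ) + j) := by
    intro s
    rw [rpol_eval, Finset.sum_mul]
    refine Finset.sum_congr rfl fun m _ => ?_
    rw [pow_add]; ring
  rw [intervalIntegral.integral_congr (fun s _ => this s)]
  rw [intervalIntegral.integral_finset_sum]
  · refine Finset.sum_congr rfl fun m _ => ?_
    rw [intervalIntegral.integral_const_mul, integral_pow]
    push_cast
    rw [one_pow, zero_pow (by positivity)]
    ring
  · intro m _
    exact (continuous_const.mul (continuous_pow _)).intervalIntegrable _ _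

lemma mulVec_row_lt {k : ℕ} (c : Fin (k+1) → ℝ) (j : Fin (k+1)) (hj : (j : ℕ) < k) :
    (Mmat k).mulVec c j = ∫ s in (0:ℝ)..1, (rpol c).eval s * s ^ (j : ℕ) := by
  rw [integral_eval_mul_pow, Matrix.mulVec]
  simp only [Mmat, hj, if_true, dotProduct]

lemma mulVec_row_last {k : ℕ} (c : Fin (k+1) → ℝ) :
    (Mmat k).mulVec c (Fin.last k) = c 0 := by
  rw [Matrix.mulVec]
  simp only [Mmat, dotProduct, Fin.val_last, lt_irrefl, if_false]
  rw [Finset.sum_eq_single 0] <;> simp +contextual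

lemma Mmat_inj {k : ℕ} (hk : 1 ≤ k) : Function.Injective (Mmat k).mulVecLin := by
  rw [← LinearMap.ker_eq_bot, LinearMap.ker_eq_bot']
  intro c hc
  simp only [Matrix.mulVecLin_apply] at hc
  have hc0 : c 0 = 0 := by rw [← mulVec_row_last c, hc]; rfl
  have hXdvd : (X : Polynomial ℝ) ∣ rpol c := by
    rw [Polynomial.X_dvd_iff]
    have := rpol_coeff c 0
    simpa [hc0] using this
  obtain ⟨d, hd⟩ := hXdvd
  have hmom : ∀ j : ℕ, j < k → ∫ s in (0:ℝ)..1, (rpol c).eval s * s ^ j = 0 := by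
    intro j hjk
    have := mulVec_row_lt c ⟨j, by omega⟩ (by simpa using hjk)
    rw [hc] at this
    simpa using this.symm
  have hdz : d = 0 := by
    by_contra hdne
    have hdnat : d.natDegree < k := by
      have h1 : (rpol c).natDegree = 1 + d.natDegree := by
        rw [hd, Polynomial.natDegree_mul Polynomial.X_ne_zero hdne, natDegree_X]
      have := rpol_natDegree c
      omega
    have hI : ∫ s in (0:ℝ)..1, s * (d.eval s) ^ 2 = 0 := by
      have hev : ∀ s : ℝ, s * (d.eval s) ^ 2
          = ∑ j ∈ Finset.range k, d.coeff j * ((rpol c).eval s * s ^ j) := by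
        intro s
        have h2 : (rpol c).eval s = s * d.eval s := by rw [hd]; simp
        have h3 : d.eval s = ∑ j ∈ Finset.range k, d.coeff j * s ^ j := by
          rw [Polynomial.eval_eq_sum_range' hdnat s]
        calc s * (d.eval s) ^ 2 = (s * d.eval s) * d.eval s := by ring
          _ = ∑ j ∈ Finset.range k, d.coeff j * ((rpol c).eval s * s ^ j) := by
              rw [← h2, h3, Finset.mul_sum]
              refine Finset.sum_congr rfl fun j _ => ?_
              ring
      rw [intervalIntegral.integral_congr (fun s _ => hev s)]
      rw [intervalIntegral.integral_finset_sum]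
      · refine Finset.sum_eq_zero fun j hj => ?_
        rw [intervalIntegral.integral_const_mul, hmom j (Finset.mem_range.mp hj), mul_zero]
      · intro j _
        exact (continuous_const.mul
          (((rpol c).continuous).mul (continuous_pow _))).intervalIntegrable _ _
    have hcont : Continuous fun s : ℝ => s * (d.eval s) ^ 2 :=
      continuous_id.mul ((d.continuous).pow 2)
    have hIoc : ∫ s in Ioc (0:ℝ) 1, s * (d.eval s) ^ 2 = 0 := by
      rw [← intervalIntegral.integral_of_le (by norm_num : (0:ℝ) ≤ 1)]; exact hI
    have hint : IntegrableOn (fun s : ℝ => s * (d.eval s) ^ 2) (Ioc (0:ℝ) 1) :=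
      hcont.integrableOn_Ioc
    have hae : (fun s : ℝ => s * (d.eval s) ^ 2) =ᵐ[volume.restrict (Ioc (0:ℝ) 1)] 0 := by
      rw [← MeasureTheory.integral_eq_zero_iff_of_nonneg_ae ?_ hint]
      · exact hIoc
      · filter_upwards [MeasureTheory.ae_restrict_mem measurableSet_Ioc] with s hs
        have h0s : 0 < s := hs.1
        positivity
    have hae2 : ∀ᵐ s ∂(volume.restrict (Ioc (0:ℝ) 1)), d.IsRoot s := by
      filter_upwards [hae, MeasureTheory.ae_restrict_mem measurableSet_Ioc] with s h1 h2
      have hne : s ≠ 0 := ne_of_gt h2.1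
      simp only [Pi.zero_apply] at h1
      rcases mul_eq_zero.mp h1 with h | h
      · exact absurd h hne
      · exact sq_eq_zero_iff.mp h
    have hZ : {s : ℝ | d.IsRoot s}.Infinite := by
      by_contra hfin
      rw [Set.not_infinite] at hfin
      have h0 : volume.restrict (Ioc (0:ℝ) 1) {s : ℝ | d.IsRoot s} = 0 := by
        rw [Measure.restrict_apply₀ (hfin.measurableSet.nullMeasurableSet)]
        exact measure_mono_null Set.inter_subset_left (hfin.measure_zero _)
      rw [MeasureTheory.ae_iff] at hae2
      have hcompl : volume.restrict (Ioc (0:ℝ) 1) {s : ℝ | ¬ d.IsRoot s} = 0 := by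
        simpa using hae2
      have htot := measure_union_le (μ := volume.restrict (Ioc (0:ℝ) 1))
        {s : ℝ | d.IsRoot s} {s : ℝ | ¬ d.IsRoot s}
      rw [h0, hcompl] at htot
      have hcover : {s : ℝ | d.IsRoot s} ∪ {s : ℝ | ¬ d.IsRoot s} = Set.univ := by
        ext s; simpa using em (d.IsRoot s)
      rw [hcover] at htot
      simp only [add_zero, nonpos_iff_eq_zero] at htot
      rw [Measure.restrict_apply_univ] at htot
      simp [Real.volume_Ioc] at htot
    exact hdne (Polynomial.eq_zero_of_infinite_isRoot d hZ)
  have hr0 : rpol c = 0 := by rw [hd, hdz, mul_zero]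
  funext m
  rw [← rpol_coeff c m, hr0]
  simp

lemma stab_const (k : ℕ) (hk : 1 ≤ k) :
    ∃ K : ℝ, 0 < K ∧ ∀ (c d : Fin (k+1) → ℝ) (B : ℝ), 0 ≤ B →
      (Mmat k).mulVec c = d → (∀ j, |d j| ≤ B) → ∀ m, |c m| ≤ K * B := by
  have hinj := Mmat_inj (k := k) hk
  have hbij : Function.Bijective ((Mmat k).mulVecLin) :=
    ⟨hinj, (LinearMap.injective_iff_surjective).mp hinj⟩
  let e : (Fin (k+1) → ℝ) ≃ₗ[ℝ] (Fin (k+1) → ℝ) := LinearEquiv.ofBijective _ hbij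
  let S : (Fin (k+1) → ℝ) →L[ℝ] (Fin (k+1) → ℝ) :=
    LinearMap.toContinuousLinearMap (e.symm : (Fin (k+1) → ℝ) →ₗ[ℝ] (Fin (k+1) → ℝ))
  refine ⟨‖S‖ + 1, by positivity, fun c d B hB hcd hdB m => ?_⟩
  have hc : c = S d := by
    have : e c = d := by
      simpa [e, LinearEquiv.ofBijective, Matrix.mulVecLin_apply] using hcd
    have h2 := congrArg e.symm this
    rw [LinearEquiv.symm_apply_apply] at h2
    simpa [S] using h2
  have h1 : |c m| ≤ ‖c‖ := by
    simpa using norm_le_pi_norm c m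
  have h2 : ‖c‖ ≤ ‖S‖ * ‖d‖ := by rw [hc]; exact S.le_opNorm d
  have h3 : ‖d‖ ≤ B := by
    refine (pi_norm_le_iff_of_nonneg hB).mpr fun j => by simpa using hdB j
  calc |c m| ≤ ‖S‖ * ‖d‖ := h1.trans h2
    _ ≤ ‖S‖ * B := by gcongr
    _ ≤ (‖S‖ + 1) * B := by gcongr; linarith

lemma cell_stability (k : ℕ) (K : ℝ)
    (hKprop : ∀ (c d : Fin (k+1) → ℝ) (B : ℝ), 0 ≤ B →
      (Mmat k).mulVec c = d → (∀ j, |d j| ≤ B) → ∀ m, |c m| ≤ K * B)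
    (a b : ℝ) (hab : a < b) (w : ℝ → ℝ) (B : ℝ)
    (hB : ∀ t ∈ Icc a b, |w t| ≤ B)
    (P : Polynomial ℝ) (hP : P.natDegree ≤ k)
    (hmom : ∀ j : ℕ, j < k →
      ∫ t in a..b, P.eval t * ((t - a)/(b - a))^j = ∫ t in a..b, w t * ((t - a)/(b - a))^j)
    (hend : P.eval a = w a) :
    ∀ t ∈ Icc a b, |P.eval t| ≤ ((k:ℝ)+1) * (K * B) := by
  have hba : 0 < b - a := sub_pos.mpr hab
  have hB0 : 0 ≤ B := le_trans (abs_nonneg _) (hB a ⟨le_refl a, le_of_lt hab⟩)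
  set Q : Polynomial ℝ := P.comp (C (b-a) * X + C a) with hQ
  have hQeval : ∀ s : ℝ, Q.eval s = P.eval ((b-a)*s + a) := by
    intro s; rw [hQ, Polynomial.eval_comp]; simp
  have hQdeg : Q.natDegree ≤ k := by
    rw [hQ, Polynomial.natDegree_comp, Polynomial.natDegree_linear (ne_of_gt hba), mul_one]
    exact hP
  set c : Fin (k+1) → ℝ := fun m => Q.coeff m with hc
  have hrQ : rpol c = Q := by
    rw [rpol]
    conv_rhs => rw [Polynomial.as_sum_range' Q (k+1) (Nat.lt_succ_of_le hQdeg)]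
    rw [← Fin.sum_univ_eq_sum_range (fun m => (Polynomial.monomial m) (Q.coeff m))]
    exact Finset.sum_congr rfl fun m _ => Polynomial.C_mul_X_pow_eq_monomial
  -- the data vector
  set d : Fin (k+1) → ℝ := fun j => if (j : ℕ) < k then
      (b-a)⁻¹ * ∫ t in a..b, w t * ((t - a)/(b - a))^(j:ℕ) else w a with hdv
  have hsub : ∀ j : ℕ, ∫ s in (0:ℝ)..1, Q.eval s * s ^ j
      = (b-a)⁻¹ * ∫ t in a..b, P.eval t * ((t - a)/(b - a))^j := by
    intro j
    have := intervalIntegral.integral_comp_mul_add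
      (a := (0:ℝ)) (b := 1) (fun t => P.eval t * ((t - a)/(b - a))^j) (ne_of_gt hba) a
    rw [mul_zero, zero_add, mul_one] at this
    have harg : ∀ s : ℝ, P.eval ((b-a)*s + a) * (((b-a)*s + a - a)/(b - a))^j
        = Q.eval s * s ^ j := by
      intro s
      rw [hQeval]
      congr 2
      field_simp
      ring
    rw [← intervalIntegral.integral_congr (fun s _ => harg s), this,
      sub_add_cancel, smul_eq_mul]
  have hMcd : (Mmat k).mulVec c = d := by
    funext j
    by_cases hj : (j : ℕ) < k
    · rw [mulVec_row_lt c j hj, hrQ, hsub, hmom (j:ℕ) hj, hdv]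
      simp [hj]
    · have hjk : (j : ℕ) = k := by omega
      have hjl : j = Fin.last k := Fin.ext hjk
      rw [hjl, mulVec_row_last, hdv]
      have : c 0 = Q.coeff 0 := rfl
      rw [this, Polynomial.coeff_zero_eq_eval_zero, hQeval, mul_zero, zero_add, hend]
      simp [hjk]
  have hdB : ∀ j, |d j| ≤ B := by
    intro j
    rw [hdv]
    by_cases hj : (j : ℕ) < k
    · simp only [hj, if_true]
      have hint : ‖∫ t in a..b, w t * ((t - a)/(b - a))^(j:ℕ)‖ ≤ B * |b - a| := by
        apply intervalIntegral.norm_integral_le_of_norm_le_const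
        intro t ht
        rw [Set.uIoc_of_le (le_of_lt hab)] at ht
        have ht1 : a ≤ t := le_of_lt ht.1
        have ht2 : t ≤ b := ht.2
        have hs0 : 0 ≤ (t - a)/(b - a) := div_nonneg (by linarith) (le_of_lt hba)
        have hs1 : (t - a)/(b - a) ≤ 1 := by
          rw [div_le_one hba]; linarith
        rw [Real.norm_eq_abs, abs_mul, abs_pow, abs_of_nonneg hs0]
        calc |w t| * ((t - a)/(b - a))^(j:ℕ) ≤ B * 1 := by
              apply mul_le_mul (hB t ⟨ht1, ht2⟩) (pow_le_one₀ hs0 hs1)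
                (by positivity) hB0
          _ = B := mul_one B
      rw [abs_mul, abs_inv, abs_of_pos hba]
      rw [Real.norm_eq_abs] at hint
      rw [abs_of_pos hba] at hint
      calc (b-a)⁻¹ * |∫ t in a..b, w t * ((t - a)/(b - a))^(j:ℕ)|
          ≤ (b-a)⁻¹ * (B * (b-a)) := by gcongr
        _ = B := by field_simp
    · simp only [hj, if_false]
      exact hB a ⟨le_refl a, le_of_lt hab⟩
  have hcK := hKprop c d B hB0 hMcd hdB
  intro t ht
  set s := (t - a)/(b - a) with hs
  have hs0 : 0 ≤ s := div_nonneg (by linarith [ht.1]) (le_of_lt hba)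
  have hs1 : s ≤ 1 := by rw [hs, div_le_one hba]; linarith [ht.2]
  have hts : (b-a)*s + a = t := by rw [hs]; field_simp; ring
  have hPQ : P.eval t = Q.eval s := by rw [hQeval, hts]
  rw [hPQ, ← hrQ, rpol_eval]
  calc |∑ m : Fin (k+1), c m * s ^ (m:ℕ)|
      ≤ ∑ m : Fin (k+1), |c m * s ^ (m:ℕ)| := Finset.abs_sum_le_sum_abs _ _
    _ ≤ ∑ _m : Fin (k+1), K * B := by
        refine Finset.sum_le_sum fun m _ => ?_
        rw [abs_mul, abs_pow, abs_of_nonneg hs0]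
        calc |c m| * s ^ (m:ℕ) ≤ |c m| * 1 := by
              apply mul_le_mul_of_nonneg_left (pow_le_one₀ hs0 hs1) (abs_nonneg _)
          _ ≤ K * B := by rw [mul_one]; exact hcK m
    _ = ((k:ℝ)+1) * (K * B) := by
        rw [Finset.sum_const, Finset.card_univ, Fintype.card_fin, nsmul_eq_mul]
        push_cast; ring
set_option maxHeartbeats 1000000 in
theorem projection_error_q_Linfty_coarse_region
    (k : ℕ) (hk : 1 ≤ k) (β σ C₀ C₁ : ℝ)
    (hβ : 0 < β) (hσ : (k : ℝ) + 1 ≤ σ) (hC₀ : 0 < C₀) (hC₁ : 0 < C₁) :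
    ∃ C : ℝ, 0 < C ∧
      ∀ (N : ℕ) (ε τ : ℝ) (x : ℕ → ℝ) (q qbar q1 q2 Pq : ℝ → ℝ),
        4 ≤ N → 4 ∣ N → 0 < ε → ε ≤ 1 → ε ≤ C₁ / N →
        τ = σ * Real.sqrt ε * Real.log N / β → τ ≤ 1 / 4 →
        (∀ i : ℕ, i ≤ N → x i =
          if i ≤ N / 4 then 4 * (σ * Real.sqrt ε / β) * ((i : ℝ) / N) * Real.log N
          else if i ≤ 3 * N / 4 then τ + 2 * (1 - 2 * τ) * ((i : ℝ) / N - 1 / 4)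
          else 1 - 4 * (σ * Real.sqrt ε / β) * (1 - (i : ℝ) / N) * Real.log N) →
        ContDiff ℝ ((k + 1 : ℕ) : ℕ∞) qbar →
        ContDiff ℝ ((k + 1 : ℕ) : ℕ∞) q1 →
        ContDiff ℝ ((k + 1 : ℕ) : ℕ∞) q2 →
        (∀ t ∈ Set.Icc (0 : ℝ) 1, q t = qbar t + q1 t + q2 t) →
        (∀ i : ℕ, i ≤ k + 1 → ∀ t ∈ Set.Icc (0 : ℝ) 1,
          |iteratedDeriv i qbar t| ≤ C₀ * ε) →
        (∀ i : ℕ, i ≤ k + 1 → ∀ t ∈ Set.Icc (0 : ℝ) 1,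
          |iteratedDeriv i q1 t| ≤
            C₀ * ε ^ (-((i : ℝ) - 1) / 2) * Real.exp (-β * t / Real.sqrt ε)) →
        (∀ i : ℕ, i ≤ k + 1 → ∀ t ∈ Set.Icc (0 : ℝ) 1,
          |iteratedDeriv i q2 t| ≤
            C₀ * ε ^ (-((i : ℝ) - 1) / 2) * Real.exp (-β * (1 - t) / Real.sqrt ε)) →
        (∀ i : ℕ, 1 ≤ i → i ≤ N →
          ∃ p : Polynomial ℝ, p.degree ≤ (k : WithBot ℕ) ∧
            (∀ t ∈ Set.Ioo (x (i - 1)) (x i), Pq t = p.eval t) ∧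
            (if i = 1 then
              -- local L² projection π on the first cell
              (∀ v : Polynomial ℝ, v.degree ≤ (k : WithBot ℕ) →
                ∫ t in x (i - 1)..x i, p.eval t * v.eval t =
                  ∫ t in x (i - 1)..x i, q t * v.eval t)
            else
              -- Gauß–Radau projection π⁺ on the remaining cells
              (∀ v : Polynomial ℝ, v.degree ≤ ((k - 1 : ℕ) : WithBot ℕ) →
                ∫ t in x (i - 1)..x i, p.eval t * v.eval t =
                  ∫ t in x (i - 1)..x i, q t * v.eval t) ∧
              p.eval (x (i - 1)) = q (x (i - 1)))) →
        ∀ i : ℕ, N / 4 + 1 ≤ i → i ≤ 3 * N / 4 →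
          ∀ t ∈ Set.Ioo (x (i - 1)) (x i),
            |q t - Pq t| ≤
              C * (ε * ((N : ℝ) ^ (k + 1))⁻¹ + Real.sqrt ε * (N : ℝ) ^ (-σ)) := by
  obtain ⟨K, hK0, hKprop⟩ := stab_const k hk
  refine ⟨(1 + ((k:ℝ)+1) * K) * (C₀ * 2^(k+1) + 2 * C₀), by positivity, ?_⟩
  intro N ε τ x q qbar q1 q2 Pq hN4 hNdvd hε0 hε1 hεN hτdef hτ14 hx hqbarCD hq1CD hq2CD
    hqdec hqbarB hq1B hq2B hproj i hi1 hi2 t ht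
  -- basic numeric facts
  obtain ⟨n4, hn4⟩ := hNdvd
  have hn41 : 1 ≤ n4 := by omega
  have hNR : (4:ℝ) ≤ (N:ℝ) := by exact_mod_cast hN4
  have hNpos : (0:ℝ) < N := by linarith
  have hlogN : 0 < Real.log N := Real.log_pos (by linarith)
  have hsε : 0 < Real.sqrt ε := Real.sqrt_pos.mpr hε0
  have hσ0 : 0 < σ := lt_of_lt_of_le (by positivity) hσ
  have hτ0 : 0 ≤ τ := by rw [hτdef]; positivity
  have hN4n : N / 4 = n4 := by omega
  have h3N4 : 3 * N / 4 = 3 * n4 := by omega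
  have hin4 : n4 + 1 ≤ i := by omega
  have hi3n4 : i ≤ 3 * n4 := by omega
  have hiN : i ≤ N := by omega
  have hcastn4 : ((n4:ℕ):ℝ) = (N:ℝ) / 4 := by
    have : (N:ℝ) = 4 * (n4:ℝ) := by exact_mod_cast hn4
    rw [this]; ring
  -- mesh formula on the coarse region
  have hxj : ∀ j : ℕ, n4 ≤ j → j ≤ 3 * n4 →
      x j = τ + 2 * (1 - 2 * τ) * ((j : ℝ) / N - 1 / 4) := by
    intro j hj1 hj2
    have hjN : j ≤ N := by omega
    rw [hx j hjN, hN4n, h3N4]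
    by_cases hj : j ≤ n4
    · have hje : j = n4 := le_antisymm hj hj1
      subst hje
      rw [if_pos le_rfl, hcastn4]
      have h4 : (N:ℝ) / 4 / (N:ℝ) = 1/4 := by field_simp
      rw [h4, hτdef]
      field_simp
      ring
    · rw [if_neg hj, if_pos hj2]
  have ha : x (i-1) = τ + 2 * (1 - 2 * τ) * (((i:ℝ) - 1) / N - 1 / 4) := by
    have := hxj (i-1) (by omega) (by omega)
    rwa [Nat.cast_sub (by omega), Nat.cast_one] at this
  have hb : x i = τ + 2 * (1 - 2 * τ) * ((i:ℝ) / N - 1 / 4) := hxj i (by omega) hi3n4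
  set a := x (i-1) with haa
  set b := x i with hbb
  have h2τ : (1:ℝ)/2 ≤ 1 - 2 * τ := by linarith
  have hba : b - a = 2 * (1 - 2 * τ) / N := by
    rw [ha, hb]; field_simp; ring
  have habl : a < b := by
    have h0 : 0 < 2 * (1 - 2*τ) / N := by positivity
    linarith [hba, h0]
  have hiR : ((n4:ℝ)) + 1 ≤ (i:ℝ) := by exact_mod_cast hin4
  have hi3R : (i:ℝ) ≤ 3 * (n4:ℝ) := by exact_mod_cast hi3n4
  have haτ : τ ≤ a := by
    rw [ha]
    have h1 : (0:ℝ) ≤ ((i:ℝ) - 1) / N - 1/4 := by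
      rw [sub_nonneg, div_le_div_iff₀ (by norm_num) hNpos]
      have : (N:ℝ)/4 ≤ (i:ℝ) - 1 := by rw [← hcastn4]; linarith
      linarith
    have h2 := mul_le_mul_of_nonneg_left h1 (by linarith : (0:ℝ) ≤ 2 * (1 - 2*τ))
    linarith
  have hbτ : b ≤ 1 - τ := by
    rw [hb]
    have h1 : (i:ℝ)/N - 1/4 ≤ 1/2 := by
      rw [sub_le_iff_le_add, div_le_iff₀ hNpos]
      have : (i:ℝ) ≤ 3 * ((N:ℝ)/4) := by rw [← hcastn4]; linarith
      linarith
    have h2 := mul_le_mul_of_nonneg_left h1 (by linarith : (0:ℝ) ≤ 2 * (1 - 2*τ))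
    linarith
  have ha0 : 0 ≤ a := le_trans hτ0 haτ
  have hb1 : b ≤ 1 := by linarith [hbτ, hτ0]
  have hba2N : b - a ≤ 2 / N := by
    rw [hba]
    exact div_le_div_of_nonneg_right (by linarith) hNpos.le
  -- projection polynomial on this cell
  obtain ⟨p, hpdeg, hpeq, hpproj⟩ := hproj i (by omega) hiN
  rw [if_neg (by omega : i ≠ 1)] at hpproj
  obtain ⟨hpmom, hpend⟩ := hpproj
  rw [← haa] at hpmom hpend hpeq
  rw [← hbb] at hpmom hpeq
  -- Taylor polynomial and error function
  set T : Polynomial ℝ := Tpoly k qbar a with hT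
  set w : ℝ → ℝ := fun s => q s - T.eval s with hw
  set P : Polynomial ℝ := p - T with hP
  have hIccsub : Icc a b ⊆ Icc (0:ℝ) 1 := fun s hs => ⟨le_trans ha0 hs.1, le_trans hs.2 hb1⟩
  set B : ℝ := C₀ * ε * (2/N)^(k+1) + 2 * (C₀ * Real.sqrt ε * (N:ℝ)^(-σ)) with hBdef
  have hNσ : Real.exp (-β * τ / Real.sqrt ε) = (N:ℝ)^(-σ) := by
    rw [Real.rpow_def_of_pos hNpos]
    congr 1
    rw [hτdef]
    field_simp
  have hwbd : ∀ s ∈ Icc a b, |w s| ≤ B := by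
    intro s hs
    have hs01 : s ∈ Icc (0:ℝ) 1 := hIccsub hs
    have htay : |qbar s - T.eval s| ≤ C₀ * ε * (2/N)^(k+1) := by
      have hD : ∀ u ∈ Icc a s, |iteratedDeriv (k+1) qbar u| ≤ C₀ * ε := by
        intro u hu
        exact hqbarB (k+1) le_rfl u (hIccsub ⟨hu.1, le_trans hu.2 hs.2⟩)
      have h1 := taylor_poly_bound hqbarCD hs.1 hD
      rw [hT]
      refine h1.trans ?_
      have hsa : 0 ≤ s - a := sub_nonneg.mpr hs.1
      have hsa2 : s - a ≤ 2/N := by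
        have := hs.2; linarith [hba2N]
      calc C₀ * ε * (s - a)^(k+1) / (k+1)! ≤ C₀ * ε * (2/N)^(k+1) / (k+1)! := by
            gcongr
        _ ≤ C₀ * ε * (2/N)^(k+1) := by
            apply _root_.div_le_self (by positivity)
            exact_mod_cast Nat.one_le_iff_ne_zero.mpr (Nat.factorial_ne_zero (k+1))
    have hexpmono : ∀ u : ℝ, τ ≤ u → Real.exp (-β * u / Real.sqrt ε) ≤ (N:ℝ)^(-σ) := by
      intro u hu
      rw [← hNσ]
      apply Real.exp_le_exp.mpr
      apply div_le_div_of_nonneg_right ?_ hsε.le |>.trans_eq rfl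
      nlinarith
    have hq1s : |q1 s| ≤ C₀ * Real.sqrt ε * (N:ℝ)^(-σ) := by
      have h1 := hq1B 0 (by omega) s hs01
      simp only [iteratedDeriv_zero, Nat.cast_zero] at h1
      rw [show -((0:ℝ) - 1)/2 = 1/2 by norm_num, ← Real.sqrt_eq_rpow] at h1
      refine h1.trans ?_
      have := hexpmono s (le_trans haτ hs.1)
      calc C₀ * Real.sqrt ε * Real.exp (-β * s / Real.sqrt ε)
          ≤ C₀ * Real.sqrt ε * ((N:ℝ)^(-σ)) := by gcongr
        _ = C₀ * Real.sqrt ε * (N:ℝ)^(-σ) := rfl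
    have hq2s : |q2 s| ≤ C₀ * Real.sqrt ε * (N:ℝ)^(-σ) := by
      have h1 := hq2B 0 (by omega) s hs01
      simp only [iteratedDeriv_zero, Nat.cast_zero] at h1
      rw [show -((0:ℝ) - 1)/2 = 1/2 by norm_num, ← Real.sqrt_eq_rpow] at h1
      refine h1.trans ?_
      have hsτ : τ ≤ 1 - s := by linarith [hs.2, hbτ]
      have := hexpmono (1 - s) hsτ
      calc C₀ * Real.sqrt ε * Real.exp (-β * (1 - s) / Real.sqrt ε)
          ≤ C₀ * Real.sqrt ε * ((N:ℝ)^(-σ)) := by gcongr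
        _ = C₀ * Real.sqrt ε * (N:ℝ)^(-σ) := rfl
    have hws : w s = (qbar s - T.eval s) + q1 s + q2 s := by
      rw [hw]
      simp only
      rw [hqdec s hs01]
      ring
    rw [hws, hBdef]
    calc |qbar s - T.eval s + q1 s + q2 s|
        ≤ |qbar s - T.eval s| + |q1 s| + |q2 s| := abs_add_three _ _ _
      _ ≤ C₀ * ε * (2/N)^(k+1) + 2 * (C₀ * Real.sqrt ε * (N:ℝ)^(-σ)) := by
          linarith
  have hqcont : ContinuousOn q (Icc a b) := by
    have hc : ContinuousOn (fun s => qbar s + q1 s + q2 s) (Icc a b) :=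
      ((hqbarCD.continuous.add hq1CD.continuous).add hq2CD.continuous).continuousOn
    exact hc.congr fun s hs => hqdec s (hIccsub hs)
  have hPdeg : P.natDegree ≤ k := by
    rw [hP]
    refine (Polynomial.natDegree_sub_le p T).trans (max_le ?_ ?_)
    · exact Polynomial.natDegree_le_iff_degree_le.mpr hpdeg
    · exact Tpoly_natDegree k qbar a
  have hPmom : ∀ j : ℕ, j < k →
      ∫ t' in a..b, P.eval t' * ((t' - a)/(b - a))^j
        = ∫ t' in a..b, w t' * ((t' - a)/(b - a))^j := by
    intro j hj
    set vj : Polynomial ℝ := (C ((b-a)⁻¹) * (X - C a))^j with hvj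
    have hvdeg : vj.degree ≤ ((k-1:ℕ) : WithBot ℕ) := by
      refine (Polynomial.degree_le_natDegree).trans ?_
      have h1 : vj.natDegree ≤ j := by
        rw [hvj, Polynomial.natDegree_pow]
        have h2 : (C ((b-a)⁻¹) * (X - C a)).natDegree ≤ 1 :=
          Polynomial.natDegree_mul_le.trans
            (by rw [Polynomial.natDegree_C, Polynomial.natDegree_X_sub_C])
        calc j * (C ((b-a)⁻¹) * (X - C a)).natDegree ≤ j * 1 := by gcongr
          _ = j := mul_one j
      exact_mod_cast h1.trans (by omega : j ≤ k - 1)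
    have hvev : ∀ u : ℝ, vj.eval u = ((u - a)/(b - a))^j := by
      intro u
      rw [hvj]
      simp only [Polynomial.eval_pow, Polynomial.eval_mul, Polynomial.eval_C,
        Polynomial.eval_sub, Polynomial.eval_X]
      rw [← div_eq_inv_mul]
    have hmq := hpmom vj hvdeg
    have intp : IntervalIntegrable (fun u => p.eval u * vj.eval u) volume a b :=
      ((p.continuous).mul (vj.continuous)).intervalIntegrable _ _
    have intT : IntervalIntegrable (fun u => T.eval u * vj.eval u) volume a b :=
      ((T.continuous).mul (vj.continuous)).intervalIntegrable _ _
    have intq : IntervalIntegrable (fun u => q u * vj.eval u) volume a b := by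
      apply ContinuousOn.intervalIntegrable
      rw [uIcc_of_le habl.le]
      exact hqcont.mul (vj.continuous).continuousOn
    have key : ∫ u in a..b, (p.eval u - T.eval u) * vj.eval u
        = ∫ u in a..b, (q u - T.eval u) * vj.eval u := by
      rw [intervalIntegral.integral_congr
        (g := fun u => p.eval u * vj.eval u - T.eval u * vj.eval u) (fun u _ => by ring)]
      rw [intervalIntegral.integral_congr
        (f := fun u => (q u - T.eval u) * vj.eval u)
        (g := fun u => q u * vj.eval u - T.eval u * vj.eval u) (fun u _ => by ring)]
      rw [intervalIntegral.integral_sub intp intT, intervalIntegral.integral_sub intq intT, hmq]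
    calc ∫ u in a..b, P.eval u * ((u - a)/(b - a))^j
        = ∫ u in a..b, (p.eval u - T.eval u) * vj.eval u :=
          intervalIntegral.integral_congr fun u _ => by
            rw [hP, Polynomial.eval_sub, hvev]
      _ = ∫ u in a..b, (q u - T.eval u) * vj.eval u := key
      _ = ∫ u in a..b, w u * ((u - a)/(b - a))^j :=
          intervalIntegral.integral_congr fun u _ => by rw [hw, hvev]
  have hPend : P.eval a = w a := by
    rw [hP, Polynomial.eval_sub, hpend, hw]
  have hstab := cell_stability k K hKprop a b habl w B hwbd P hPdeg hPmom hPend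
  have ht' : t ∈ Icc a b := Ioo_subset_Icc_self ht
  have heq : q t - Pq t = w t - P.eval t := by
    rw [hpeq t ht, hw, hP, Polynomial.eval_sub]
    ring
  rw [heq]
  have hX : (0:ℝ) ≤ ε * ((N:ℝ)^(k+1))⁻¹ := by positivity
  have hY : (0:ℝ) ≤ Real.sqrt ε * (N:ℝ)^(-σ) := by positivity
  have hBle : B ≤ (C₀ * 2^(k+1) + 2 * C₀) *
      (ε * ((N:ℝ)^(k+1))⁻¹ + Real.sqrt ε * (N:ℝ)^(-σ)) := by
    rw [hBdef, div_pow]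
    have h1 : C₀ * ε * (2^(k+1) / (N:ℝ)^(k+1))
        = C₀ * 2^(k+1) * (ε * ((N:ℝ)^(k+1))⁻¹) := by ring
    have h2 : (0:ℝ) ≤ C₀ * 2^(k+1) := by positivity
    nlinarith [mul_nonneg h2 hY, mul_nonneg (by positivity : (0:ℝ) ≤ 2*C₀) hX]
  calc |w t - P.eval t| ≤ |w t| + |P.eval t| := abs_sub _ _
    _ ≤ B + ((k:ℝ)+1) * (K * B) := add_le_add (hwbd t ht') (hstab t ht')
    _ = (1 + ((k:ℝ)+1) * K) * B := by ring
    _ ≤ (1 + ((k:ℝ)+1) * K) * ((C₀ * 2^(k+1) + 2 * C₀) *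
          (ε * ((N:ℝ)^(k+1))⁻¹ + Real.sqrt ε * (N:ℝ)^(-σ))) := by
        apply mul_le_mul_of_nonneg_left hBle (by positivity)
    _ = (1 + ((k:ℝ)+1) * K) * (C₀ * 2^(k+1) + 2 * C₀) *
          (ε * ((N:ℝ)^(k+1))⁻¹ + Real.sqrt ε * (N:ℝ)^(-σ)) := by ring
end
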